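/- arXiv:2306.00916 — 15 statements merged into one kernel-verified Lean document; each statement's English description precedes it below -/
import Mathlib

section
/- Let m ≥ 1 and n₁,…,n_m ≥ 1 be integers, and for each 2 ≤ j ≤ m, 1 ≤ k ≤ n_j and 1 ≤ ℓ ≤ j−1 let β^j_{ℓk} ∈ ℤ/2 be arbitrary. In the polynomial ring A = (ℤ/2)[y₁,…,y_m], let I ⊆ A be the ideal generated by the m elements α_j = y_j · ∏_{k=1}^{n_j} ( y_j + ∑_{ℓ=1}^{j−1} β^j_{ℓk} y_ℓ ) for j = 1,…,m (so α₁ = y₁^{n₁+1}). Then for every j ∈ {1,…,m}, the monomial y_j^{n_j} does not lie in I; equivalently, y_j^{n_j} ≠ 0 in the quotient ring A/I. -/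
open MvPolynomial

/-- For a small cover over a product of simplices with Bott-matrix characteristic data,
`y_j^{n_j} ≠ 0` in the mod-2 cohomology ring, i.e. `y_j^{n_j}` is not in the ideal `I`
generated by `α_j = y_j ∏_{k=1}^{n_j} (y_j + ∑_{ℓ<j} β^j_{ℓk} y_ℓ)`. -/
theorem stmt_0 (m : ℕ) (hm : 1 ≤ m) (n : Fin m → ℕ) (hn : ∀ j, 1 ≤ n j)
    (β : Fin m → ℕ → Fin m → ZMod 2)
    (I : Ideal (MvPolynomial (Fin m) (ZMod 2)))
    (hI : I = Ideal.span { α | ∃ j : Fin m,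
      α = X j * ∏ k ∈ Finset.range (n j),
        (X j + ∑ l ∈ Finset.univ.filter (· < j), C (β j k l) * X l) })
    (j : Fin m) :
    (X j : MvPolynomial (Fin m) (ZMod 2)) ^ (n j) ∉ I := by
  subst hI
  set R := Polynomial (ZMod 2) with hR
  set J : Ideal R := Ideal.span {Polynomial.X ^ (n j + 1)} with hJ
  set f : Fin m → R := fun i => if i = j then Polynomial.X else 0 with hf
  set φ : MvPolynomial (Fin m) (ZMod 2) →+* R ⧸ J :=
    (Ideal.Quotient.mk J).comp (aeval f).toRingHom with hφ
  intro hmem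
  have hker : Ideal.span { α | ∃ j : Fin m,
      α = X j * ∏ k ∈ Finset.range (n j),
        (X j + ∑ l ∈ Finset.univ.filter (· < j), C (β j k l) * X l) }
      ≤ RingHom.ker φ := by
    rw [Ideal.span_le]
    rintro p ⟨i, rfl⟩
    simp only [SetLike.mem_coe, RingHom.mem_ker, hφ, RingHom.comp_apply,
      AlgHom.toRingHom_eq_coe, RingHom.coe_coe]
    by_cases hij : i = j
    · subst hij
      have hfac : ∀ k : ℕ,
          (aeval f) (X i + ∑ l ∈ Finset.univ.filter (· < i), C (β i k l) * X l)
            = (Polynomial.X : R) := by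
        intro k
        rw [map_add, map_sum, aeval_X, hf]
        simp only [ite_true]
        have : ∀ l ∈ Finset.univ.filter (· < i),
            (aeval fun i' => if i' = i then (Polynomial.X : R) else 0)
              (C (β i k l) * X l) = 0 := by
          intro l hl
          simp only [Finset.mem_filter] at hl
          rw [map_mul, aeval_X, if_neg (ne_of_lt hl.2)]
          ring
        rw [Finset.sum_congr rfl this]
        simp
      rw [map_mul, map_prod, aeval_X, hf]
      simp only [ite_true]
      rw [Finset.prod_congr rfl fun k _ => hfac k]
      rw [Finset.prod_const, Finset.card_range, ← pow_succ']
      rw [Ideal.Quotient.eq_zero_iff_mem, hJ]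
      exact Ideal.subset_span rfl
    · rw [map_mul, aeval_X, hf]
      simp [hij]
  have h0 : φ ((X j : MvPolynomial (Fin m) (ZMod 2)) ^ (n j)) = 0 := hker hmem
  rw [hφ, RingHom.comp_apply] at h0
  simp only [AlgHom.toRingHom_eq_coe, RingHom.coe_coe, map_pow, aeval_X, hf,
    ite_true] at h0
  rw [← map_pow, Ideal.Quotient.eq_zero_iff_mem, hJ, Ideal.mem_span_singleton] at h0
  have hX : (Polynomial.X : R) ^ (n j) ≠ 0 := pow_ne_zero _ Polynomial.X_ne_zero
  have hdeg := Polynomial.natDegree_le_of_dvd h0 hX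
  rw [Polynomial.natDegree_X_pow, Polynomial.natDegree_X_pow] at hdeg
  omega
end

section
/- Let n₁, n₂ ≥ 1 be integers. Work in the polynomial ring A = (ℤ/2)[y₁,y₂], set n = n₁+n₂, and let I ⊆ A be the ideal generated by y₁^{n₁+1} and y₂·(y₁+y₂)^{n₂}. Then the monomial y₁^{n₁}·y₂^{n₂} does not lie in I; equivalently, y₁^{n₁} y₂^{n₂} ≠ 0 in the quotient ring R = A/I. -/
open MvPolynomial

theorem stmt_1 (n₁ n₂ : ℕ) (h₁ : 1 ≤ n₁) (h₂ : 1 ≤ n₂)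
    (I : Ideal (MvPolynomial (Fin 2) (ZMod 2)))
    (hI : I = Ideal.span {X 0 ^ (n₁ + 1), X 1 * (X 0 + X 1) ^ n₂}) :
    (X 0 : MvPolynomial (Fin 2) (ZMod 2)) ^ n₁ * X 1 ^ n₂ ∉ I := by
  intro hm
  rw [hI, Ideal.mem_span_pair] at hm
  obtain ⟨a, b, hab⟩ := hm
  -- view A as (ZMod 2)[y₁][y₂]: swap variables, then finSuccEquiv
  set e : MvPolynomial (Fin 2) (ZMod 2) ≃ₐ[ZMod 2]
      Polynomial (MvPolynomial (Fin 1) (ZMod 2)) :=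
    (renameEquiv (ZMod 2) (Equiv.swap 0 1)).trans (finSuccEquiv (ZMod 2) 1) with he
  set y : MvPolynomial (Fin 1) (ZMod 2) := X 0 with hy
  have e0 : e (X 0) = Polynomial.C y := by
    rw [he]
    simp only [AlgEquiv.trans_apply, renameEquiv_apply, rename_X]
    have : Equiv.swap (0 : Fin 2) 1 0 = Fin.succ 0 := by decide
    rw [this, finSuccEquiv_X_succ]
  have e1 : e (X 1) = Polynomial.X := by
    rw [he]
    simp only [AlgEquiv.trans_apply, renameEquiv_apply, rename_X]
    have : Equiv.swap (0 : Fin 2) 1 1 = 0 := by decide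
    rw [this, finSuccEquiv_X_zero]
  have hab' := congrArg e hab
  simp only [map_add, map_mul, map_pow, e0, e1] at hab'
  set g : Polynomial (MvPolynomial (Fin 1) (ZMod 2)) :=
    Polynomial.X * (Polynomial.C y + Polynomial.X) ^ n₂ with hg
  have hmon : (Polynomial.C y + Polynomial.X).Monic := by
    simpa [add_comm] using Polynomial.monic_X_add_C y
  have hmg : g.Monic := by
    rw [hg]
    exact Polynomial.monic_X.mul (hmon.pow n₂)
  have hdeg : g.degree = (n₂ + 1 : ℕ) := by
    rw [hg, Polynomial.Monic.degree_mul (hmon.pow n₂), Polynomial.degree_X,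
      Polynomial.degree_pow]
    have : (Polynomial.C y + Polynomial.X).degree = 1 := by
      rw [add_comm]; exact Polynomial.degree_X_add_C y
    rw [this]
    simp [add_comm]
  -- reduce both sides mod g
  have key := congrArg (fun p => p %ₘ g) hab'
  rw [Polynomial.add_modByMonic] at key
  have hbg : (e b * g) %ₘ g = 0 := by
    rw [Polynomial.modByMonic_eq_zero_iff_dvd hmg]
    exact Dvd.intro_left _ rfl
  rw [hbg, add_zero] at key
  have haf : (e a * Polynomial.C y ^ (n₁ + 1)) %ₘ g
      = y ^ (n₁ + 1) • (e a %ₘ g) := by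
    rw [← Polynomial.C_pow, mul_comm, ← Polynomial.smul_eq_C_mul,
      Polynomial.smul_modByMonic]
  rw [haf] at key
  have hself : (Polynomial.C y ^ n₁ * Polynomial.X ^ n₂) %ₘ g
      = Polynomial.C y ^ n₁ * Polynomial.X ^ n₂ := by
    rw [Polynomial.modByMonic_eq_self_iff hmg, hdeg]
    calc (Polynomial.C y ^ n₁ * Polynomial.X ^ n₂).degree
        ≤ (Polynomial.C (y ^ n₁)).degree + (Polynomial.X ^ n₂ : Polynomial (MvPolynomial (Fin 1) (ZMod 2))).degree := by
          rw [Polynomial.C_pow]; exact Polynomial.degree_mul_le _ _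
      _ ≤ 0 + (n₂ : ℕ) := by
          exact add_le_add Polynomial.degree_C_le (by rw [Polynomial.degree_X_pow])
      _ < (n₂ + 1 : ℕ) := by
          rw [zero_add]; exact_mod_cast WithBot.coe_lt_coe.mpr (Nat.lt_succ_self n₂)
  rw [hself] at key
  -- compare coefficient of X^{n₂}
  have hc := congrArg (fun p => p.coeff n₂) key
  simp only [Polynomial.coeff_smul, smul_eq_mul] at hc
  rw [← Polynomial.C_pow, Polynomial.coeff_C_mul, Polynomial.coeff_X_pow,
    if_pos rfl, mul_one] at hc
  -- hc : y ^ n₁ = y ^ (n₁+1) * coeff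
  set c := (e a %ₘ g).coeff n₂ with hcc
  have hy0 : (y : MvPolynomial (Fin 1) (ZMod 2)) ^ n₁ ≠ 0 := pow_ne_zero _ (X_ne_zero 0)
  have : (1 : MvPolynomial (Fin 1) (ZMod 2)) = y * c := by
    apply mul_left_cancel₀ hy0
    rw [mul_one, ← mul_assoc, ← pow_succ]
    exact hc.symm
  have := congrArg constantCoeff this
  simp [hy] at this
end

section
/- Let n₁, n₂ ≥ 1 be integers with n₂ > n₁, such that C(n₂, i) is even for every 0 < i < n₂, and let r₁, r₂ be integers with n₁ ≤ 2^{r₁} − 1 < 2n₁ and n₂ ≤ 2^{r₂} − 1 < 2n₂. Let R = (ℤ/2)[y₁,y₂]/I where I is the ideal generated by y₁^{n₁+1} and y₂·(y₁+y₂)^{n₂}, and write ȳ₁, ȳ₂ for the images of y₁, y₂ in R. Then in the tensor product R ⊗_{ℤ/2} R one has (1 ⊗ ȳ₁ + ȳ₁ ⊗ 1)^{2^{r₁}−1} · (1 ⊗ ȳ₂ + ȳ₂ ⊗ 1)^{2^{r₂}−1} ≠ 0. -/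
open MvPolynomial TensorProduct Finset

set_option synthInstance.maxHeartbeats 1000000
set_option maxHeartbeats 1000000

lemma choose_two_pow_sub_one (r k : ℕ) (hk : k ≤ 2 ^ r - 1) :
    (((2 ^ r - 1).choose k : ℕ) : ZMod 2) = 1 := by
  have hpos : (1:ℕ) ≤ 2 ^ r := Nat.one_le_two_pow
  have key : ((Polynomial.X + 1 : Polynomial (ZMod 2)) ^ (2 ^ r - 1)) =
      ∑ i ∈ range (2 ^ r), (Polynomial.X : Polynomial (ZMod 2)) ^ i := by
    have hchar : (Polynomial.X + 1 : Polynomial (ZMod 2)) ^ (2 ^ r) = Polynomial.X ^ (2 ^ r) + 1 := by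
      have := add_pow_char_pow (x := (Polynomial.X : Polynomial (ZMod 2))) (y := 1) (p := 2) (n := r)
      simpa using this
    have hgeom : (∑ i ∈ range (2 ^ r), (Polynomial.X : Polynomial (ZMod 2)) ^ i) * (Polynomial.X + 1) =
        Polynomial.X ^ (2 ^ r) + 1 := by
      have h2 := geom_sum_mul (Polynomial.X : Polynomial (ZMod 2)) (2 ^ r)
      rwa [CharTwo.sub_eq_add, CharTwo.sub_eq_add] at h2
    have hne : (Polynomial.X + 1 : Polynomial (ZMod 2)) ≠ 0 := by
      intro h
      have := congrArg (fun p => Polynomial.coeff p 1) h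
      simp only [Polynomial.coeff_add, Polynomial.coeff_X_one, Polynomial.coeff_one,
        Polynomial.coeff_zero] at this
      simp at this
    apply mul_left_cancel₀ hne
    calc (Polynomial.X + 1 : Polynomial (ZMod 2)) * (Polynomial.X + 1) ^ (2 ^ r - 1)
        = (Polynomial.X + 1) ^ (2 ^ r) := by rw [← pow_succ']; congr 1; omega
      _ = (∑ i ∈ range (2 ^ r), (Polynomial.X : Polynomial (ZMod 2)) ^ i) * (Polynomial.X + 1) := by
          rw [hchar, hgeom]
      _ = (Polynomial.X + 1) * ∑ i ∈ range (2 ^ r), (Polynomial.X : Polynomial (ZMod 2)) ^ i :=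
          mul_comm _ _
  have := congrArg (fun p => Polynomial.coeff p k) key
  simp only [Polynomial.coeff_X_add_one_pow, Polynomial.finset_sum_coeff,
    Polynomial.coeff_X_pow] at this
  rw [this, Finset.sum_ite_eq (range (2 ^ r)) k (fun _ => (1 : ZMod 2))]
  rw [if_pos (Finset.mem_range.mpr (by omega))]

lemma coeff_mul_X_pow_eq_zero' {σ : Type*} (d : σ →₀ ℕ) (i : σ) (k : ℕ) (hk : d i < k)
    (c : MvPolynomial σ (ZMod 2)) : coeff d (c * X i ^ k) = 0 := by
  rw [X_pow_eq_monomial, coeff_mul_monomial', if_neg]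
  rw [Finsupp.single_le_iff]
  omega

lemma coeff_zero_of_mem_span' {σ : Type*} (d : σ →₀ ℕ) (s : Set (MvPolynomial σ (ZMod 2)))
    (h : ∀ g ∈ s, ∀ c, coeff d (c * g) = 0) {p : MvPolynomial σ (ZMod 2)}
    (hp : p ∈ Ideal.span s) : coeff d p = 0 := by
  have : ∀ c, coeff d (c * p) = 0 := by
    refine Submodule.span_induction (p := fun x _ => ∀ c, coeff d (c * x) = 0) ?_ ?_ ?_ ?_ hp
    · exact fun x hx => h x hx
    · intro c; simp
    · intro x y _ _ hx hy c; rw [mul_add, coeff_add, hx, hy, add_zero]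
    · intro a x _ hx c; rw [smul_eq_mul, ← mul_assoc]; exact hx (c * a)
  simpa using this 1

lemma even_cast_zero' {S : Type*} [CommRing S] [Algebra (ZMod 2) S] {c : ℕ} (hc : Even c) :
    (c : S) = 0 := by
  obtain ⟨m, hm⟩ := hc
  have h2 : (2 : S) = 0 := by
    have := map_natCast (algebraMap (ZMod 2) S) 2
    rw [show ((2:ℕ) : ZMod 2) = 0 by decide, map_zero] at this
    exact_mod_cast this.symm
  have : (c : S) = 2 * (m : S) := by rw [hm]; push_cast; ring
  rw [this, h2, zero_mul]

lemma add_pow_even_mid' {S : Type*} [CommRing S] [Algebra (ZMod 2) S] (x y : S) (n : ℕ)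
    (hn : 0 < n) (hb : ∀ i, 0 < i → i < n → Even (n.choose i)) :
    (x + y) ^ n = x ^ n + y ^ n := by
  rw [add_pow, Finset.sum_range_succ, Nat.choose_self]
  rw [Finset.sum_eq_single 0]
  · simp [add_comm]
  · intro k hk hk0
    rw [even_cast_zero' (hb k (Nat.pos_of_ne_zero hk0) (Finset.mem_range.mp hk)), mul_zero]
  · intro h; exact absurd (Finset.mem_range.mpr hn) h

lemma addpow_expand' (i j : Fin 4) (p : ℕ) :
    (X i + X j : MvPolynomial (Fin 4) (ZMod 2)) ^ p =
      ∑ k ∈ range (p + 1),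
        monomial (Finsupp.single i k + Finsupp.single j (p - k)) ((p.choose k : ZMod 2)) := by
  rw [add_pow]
  refine Finset.sum_congr rfl fun k hk => ?_
  rw [X_pow_eq_monomial, X_pow_eq_monomial, monomial_mul, one_mul]
  rw [show ((p.choose k : ℕ) : MvPolynomial (Fin 4) (ZMod 2)) = C ((p.choose k : ℕ) : ZMod 2) from rfl]
  rw [mul_comm, C_mul_monomial, mul_one]

lemma coeff_q' (n1 n2 p1 p2 : ℕ) (h1 : n1 ≤ p1) (h2 : n2 ≤ p2)
    (hc1 : ((p1.choose (p1 - n1) : ℕ) : ZMod 2) = 1)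
    (hc2 : ((p2.choose (p2 - n2) : ℕ) : ZMod 2) = 1) :
    coeff (Finsupp.single 0 n1 + Finsupp.single 1 n2 + Finsupp.single 2 (p1 - n1)
        + Finsupp.single 3 (p2 - n2))
      ((X 2 + X 0) ^ p1 * (X 3 + X 1) ^ p2 : MvPolynomial (Fin 4) (ZMod 2)) = 1 := by
  rw [addpow_expand', addpow_expand', Finset.sum_mul_sum]
  simp only [monomial_mul, coeff_sum, coeff_monomial]
  rw [Finset.sum_eq_single (p1 - n1)]
  · rw [Finset.sum_eq_single (p2 - n2)]
    · rw [if_pos, hc1, hc2, one_mul]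
      · ext a
        fin_cases a <;>
          simp [Finsupp.single_apply, Nat.sub_sub_self h1, Nat.sub_sub_self h2]
    · intro l hl hlne
      rw [if_neg]
      intro he
      exact hlne (by simpa [Finsupp.single_apply] using DFunLike.congr_fun he 3)
    · intro h; exact absurd (Finset.mem_range.mpr (by omega)) h
  · intro k hk hkne
    refine Finset.sum_eq_zero fun l hl => ?_
    rw [if_neg]
    intro he
    exact hkne (by simpa [Finsupp.single_apply] using DFunLike.congr_fun he 2)
  · intro h; exact absurd (Finset.mem_range.mpr (by omega)) h

theorem stmt_3 (n₁ n₂ r₁ r₂ : ℕ) (h₁ : 1 ≤ n₁) (h₂ : 1 ≤ n₂) (hlt : n₁ < n₂)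
    (hbin : ∀ i, 0 < i → i < n₂ → Even (n₂.choose i))
    (hr₁ : n₁ ≤ 2 ^ r₁ - 1) (hr₁' : 2 ^ r₁ - 1 < 2 * n₁)
    (hr₂ : n₂ ≤ 2 ^ r₂ - 1) (hr₂' : 2 ^ r₂ - 1 < 2 * n₂)
    (I : Ideal (MvPolynomial (Fin 2) (ZMod 2)))
    (hI : I = Ideal.span {X 0 ^ (n₁ + 1), X 1 * (X 0 + X 1) ^ n₂}) :
    ((1 : MvPolynomial (Fin 2) (ZMod 2) ⧸ I) ⊗ₜ[ZMod 2] (Ideal.Quotient.mk I (X 0))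
        + (Ideal.Quotient.mk I (X 0)) ⊗ₜ[ZMod 2] 1) ^ (2 ^ r₁ - 1)
      * ((1 : MvPolynomial (Fin 2) (ZMod 2) ⧸ I) ⊗ₜ[ZMod 2] (Ideal.Quotient.mk I (X 1))
        + (Ideal.Quotient.mk I (X 1)) ⊗ₜ[ZMod 2] 1) ^ (2 ^ r₂ - 1) ≠ 0 := by
  set p₁ := 2 ^ r₁ - 1 with hp₁
  set p₂ := 2 ^ r₂ - 1 with hp₂
  -- the 4-variable monomial quotient ring
  set J : Ideal (MvPolynomial (Fin 4) (ZMod 2)) :=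
    Ideal.span {X 0 ^ (n₁ + 1), X 1 ^ (n₂ + 1), X 2 ^ (n₁ + 1), X 3 ^ (n₂ + 1)} with hJ
  set π := Ideal.Quotient.mk J with hπ
  have hz : ∀ g ∈ ({X 0 ^ (n₁ + 1), X 1 ^ (n₂ + 1), X 2 ^ (n₁ + 1), X 3 ^ (n₂ + 1)} :
      Set (MvPolynomial (Fin 4) (ZMod 2))), π g = 0 := by
    intro g hg
    rw [hπ, Ideal.Quotient.eq_zero_iff_mem, hJ]
    exact Ideal.subset_span hg
  have hz0 : π (X 0) ^ (n₁ + 1) = 0 := by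
    rw [← map_pow]; exact hz _ (by simp)
  have hz1 : π (X 1) ^ (n₂ + 1) = 0 := by
    rw [← map_pow]; exact hz _ (by simp)
  have hz2 : π (X 2) ^ (n₁ + 1) = 0 := by
    rw [← map_pow]; exact hz _ (by simp)
  have hz3 : π (X 3) ^ (n₂ + 1) = 0 := by
    rw [← map_pow]; exact hz _ (by simp)
  have hx0 : π (X 0) ^ n₂ = 0 := by
    rw [show n₂ = (n₁ + 1) + (n₂ - n₁ - 1) by omega, pow_add, hz0, zero_mul]
  have hx2 : π (X 2) ^ n₂ = 0 := by
    rw [show n₂ = (n₁ + 1) + (n₂ - n₁ - 1) by omega, pow_add, hz2, zero_mul]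
  -- the two algebra maps out of the quotient
  have key : ∀ (u v : MvPolynomial (Fin 4) (ZMod 2)),
      π u ^ (n₁ + 1) = 0 → π u ^ n₂ = 0 → π v ^ (n₂ + 1) = 0 →
      ∀ a ∈ I, (aeval ![π u, π v] : MvPolynomial (Fin 2) (ZMod 2) →ₐ[ZMod 2] _) a = 0 := by
    intro u v hu hu2 hv a ha
    rw [hI] at ha
    have hle : Ideal.span ({X 0 ^ (n₁ + 1), X 1 * (X 0 + X 1) ^ n₂} :
        Set (MvPolynomial (Fin 2) (ZMod 2))) ≤
        RingHom.ker ((aeval ![π u, π v] : MvPolynomial (Fin 2) (ZMod 2) →ₐ[ZMod 2] _)).toRingHom := by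
      rw [Ideal.span_le]
      rintro x hx
      simp only [Set.mem_insert_iff, Set.mem_singleton_iff] at hx
      rcases hx with rfl | rfl
      · simp only [SetLike.mem_coe, RingHom.mem_ker, AlgHom.toRingHom_eq_coe, RingHom.coe_coe,
          map_pow, aeval_X]
        simpa using hu
      · simp only [SetLike.mem_coe, RingHom.mem_ker, AlgHom.toRingHom_eq_coe, RingHom.coe_coe,
          map_mul, map_pow, map_add, aeval_X]
        rw [show (![π u, π v] : Fin 2 → _) 0 = π u from rfl,
          show (![π u, π v] : Fin 2 → _) 1 = π v from rfl]
        rw [add_pow_even_mid' _ _ n₂ (by omega) hbin, hu2, zero_add, mul_comm, ← pow_succ, hv]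
    exact hle ha
  have hf := key (X 0) (X 1) hz0 hx0 hz1
  have hg := key (X 2) (X 3) hz2 hx2 hz3
  set f := Ideal.Quotient.liftₐ I (aeval ![π (X 0), π (X 1)]) hf with hfdef
  set g := Ideal.Quotient.liftₐ I (aeval ![π (X 2), π (X 3)]) hg with hgdef
  set h := Algebra.TensorProduct.lift f g (fun x y => Commute.all _ _) with hhdef
  intro hE
  have hfa : f (Ideal.Quotient.mk I (X 0)) = π (X 0) := by
    rw [hfdef, Ideal.Quotient.liftₐ_apply]
    refine (Ideal.Quotient.lift_mk I _ hf).trans ?_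
    simp
  have hfb : f (Ideal.Quotient.mk I (X 1)) = π (X 1) := by
    rw [hfdef, Ideal.Quotient.liftₐ_apply]
    refine (Ideal.Quotient.lift_mk I _ hf).trans ?_
    simp
  have hga : g (Ideal.Quotient.mk I (X 0)) = π (X 2) := by
    rw [hgdef, Ideal.Quotient.liftₐ_apply]
    refine (Ideal.Quotient.lift_mk I _ hg).trans ?_
    simp
  have hgb : g (Ideal.Quotient.mk I (X 1)) = π (X 3) := by
    rw [hgdef, Ideal.Quotient.liftₐ_apply]
    refine (Ideal.Quotient.lift_mk I _ hg).trans ?_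
    simp
  have hhE := congrArg h hE
  rw [map_zero, map_mul, map_pow, map_pow, map_add, map_add] at hhE
  rw [Algebra.TensorProduct.lift_tmul, Algebra.TensorProduct.lift_tmul,
    Algebra.TensorProduct.lift_tmul, Algebra.TensorProduct.lift_tmul] at hhE
  rw [map_one, map_one, one_mul, one_mul, mul_one, mul_one] at hhE
  rw [hfa, hfb, hga, hgb] at hhE
  -- hhE : (π (X 2) + π (X 0)) ^ p₁ * (π (X 3) + π (X 1)) ^ p₂ = 0
  have hq : π ((X 2 + X 0) ^ p₁ * (X 3 + X 1) ^ p₂) = 0 := by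
    rw [map_mul, map_pow, map_pow, map_add, map_add]
    exact hhE
  rw [hπ, Ideal.Quotient.eq_zero_iff_mem, hJ] at hq
  have hzero := coeff_zero_of_mem_span'
    (Finsupp.single 0 n₁ + Finsupp.single 1 n₂ + Finsupp.single 2 (p₁ - n₁)
      + Finsupp.single 3 (p₂ - n₂)) _ ?_ hq
  · rw [coeff_q' n₁ n₂ p₁ p₂ hr₁ hr₂
      (choose_two_pow_sub_one r₁ (p₁ - n₁) (by omega))
      (choose_two_pow_sub_one r₂ (p₂ - n₂) (by omega))] at hzero
    exact one_ne_zero hzero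
  · rintro x hx c
    simp only [Set.mem_insert_iff, Set.mem_singleton_iff] at hx
    rcases hx with rfl | rfl | rfl | rfl
    · exact coeff_mul_X_pow_eq_zero' _ 0 _ (by simp [Finsupp.single_apply]; try omega) c
    · exact coeff_mul_X_pow_eq_zero' _ 1 _ (by simp [Finsupp.single_apply]; try omega) c
    · exact coeff_mul_X_pow_eq_zero' _ 2 _ (by simp [Finsupp.single_apply]; try omega) c
    · exact coeff_mul_X_pow_eq_zero' _ 3 _ (by simp [Finsupp.single_apply]; try omega) c
end

section
/- Let n₁, n₂ ≥ 1 be integers such that n₂ divides n₁ and C(n₂, i) is even for every 0 < i < n₂; set n = n₁ + n₂. Work in A = (ℤ/2)[y₁,y₂] and let I ⊆ A be the ideal generated by y₁^{n₁+1} and y₂·(y₁+y₂)^{n₂}. Then y₁^{n₁}·y₂^{n₂} − y₂^{n} ∈ I (i.e. y₁^{n₁} y₂^{n₂} = y₂^{n} in R = A/I), and y₂^{n} ∉ I (i.e. y₂^{n} ≠ 0 in R). -/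
open MvPolynomial

theorem stmt_4 (n₁ n₂ : ℕ) (h₁ : 1 ≤ n₁) (h₂ : 1 ≤ n₂) (hdvd : n₂ ∣ n₁)
    (hbin : ∀ i, 0 < i → i < n₂ → Even (n₂.choose i))
    (I : Ideal (MvPolynomial (Fin 2) (ZMod 2)))
    (hI : I = Ideal.span {X 0 ^ (n₁ + 1), X 1 * (X 0 + X 1) ^ n₂}) :
    (X 0 : MvPolynomial (Fin 2) (ZMod 2)) ^ n₁ * X 1 ^ n₂ - X 1 ^ (n₁ + n₂) ∈ I ∧
    (X 1 : MvPolynomial (Fin 2) (ZMod 2)) ^ (n₁ + n₂) ∉ I := by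
  subst hI
  obtain ⟨k, hk⟩ := hdvd
  have hk1 : 1 ≤ k := by
    rcases Nat.eq_zero_or_pos k with rfl | h
    · simp at hk; omega
    · exact h
  have h2 : (2 : MvPolynomial (Fin 2) (ZMod 2)) = 0 := by
    have := CharP.cast_eq_zero (MvPolynomial (Fin 2) (ZMod 2)) 2
    exact_mod_cast this
  -- freshman's dream
  have hfrob : (X 0 + X 1 : MvPolynomial (Fin 2) (ZMod 2)) ^ n₂ = X 0 ^ n₂ + X 1 ^ n₂ := by
    rw [add_pow]
    have hsub : ({0, n₂} : Finset ℕ) ⊆ Finset.range (n₂ + 1) := by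
      intro x hx
      simp only [Finset.mem_insert, Finset.mem_singleton] at hx
      rcases hx with rfl | rfl <;> simp [Finset.mem_range] <;> omega
    have hzero : ∀ i ∈ Finset.range (n₂ + 1), i ∉ ({0, n₂} : Finset ℕ) →
        (X 0 : MvPolynomial (Fin 2) (ZMod 2)) ^ i * X 1 ^ (n₂ - i) * (n₂.choose i : MvPolynomial (Fin 2) (ZMod 2)) = 0 := by
      intro i hi hi'
      simp only [Finset.mem_insert, Finset.mem_singleton, not_or] at hi'
      simp only [Finset.mem_range] at hi
      obtain ⟨m, hm⟩ := hbin i (by omega) (by omega)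
      rw [hm]
      push_cast
      rw [← two_mul, h2]
      ring
    rw [← Finset.sum_subset hsub hzero]
    rw [Finset.sum_pair (by omega : (0:ℕ) ≠ n₂)]
    simp [add_comm]
  have hg₂ : (X 1 : MvPolynomial (Fin 2) (ZMod 2)) * (X 0 ^ n₂ + X 1 ^ n₂) ∈
      Ideal.span {X 0 ^ (n₁ + 1), X 1 * (X 0 + X 1) ^ n₂} := by
    rw [← hfrob]
    exact Ideal.subset_span (by simp)
  obtain ⟨b, hbb⟩ : ∃ b, n₂ = b + 1 := ⟨n₂ - 1, by omega⟩
  -- Part 1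
  have key : ∀ j, j ≤ k →
      (X 0 : MvPolynomial (Fin 2) (ZMod 2)) ^ (n₂ * j) * X 1 ^ (n₂ * (k - j) + n₂)
        + X 1 ^ (n₂ * k + n₂) ∈
      Ideal.span {X 0 ^ (n₁ + 1), X 1 * (X 0 + X 1) ^ n₂} := by
    intro j
    induction j with
    | zero =>
      intro _
      have : (X 0 : MvPolynomial (Fin 2) (ZMod 2)) ^ (n₂ * 0) * X 1 ^ (n₂ * (k - 0) + n₂)
          + X 1 ^ (n₂ * k + n₂) = 0 := by
        rw [Nat.sub_zero]
        linear_combination (X 1 : MvPolynomial (Fin 2) (ZMod 2)) ^ (n₂ * k + n₂) * h2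
      rw [this]; exact zero_mem _
    | succ j ih =>
      intro hj
      have ih' := ih (by omega)
      obtain ⟨a, ha⟩ : ∃ a, k - j = a + 1 := ⟨k - (j+1), by omega⟩
      have ha' : k - (j + 1) = a := by omega
      have hid : (X 0 : MvPolynomial (Fin 2) (ZMod 2)) ^ (n₂ * (j+1)) * X 1 ^ (n₂ * (k - (j+1)) + n₂)
          + X 1 ^ (n₂ * k + n₂)
          = ((X 0 : MvPolynomial (Fin 2) (ZMod 2)) ^ (n₂ * j) * X 1 ^ (n₂ * (k - j) + n₂)
            + X 1 ^ (n₂ * k + n₂))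
            + X 0 ^ (n₂ * j) * X 1 ^ (n₂ * a + b) * (X 1 * (X 0 ^ n₂ + X 1 ^ n₂)) := by
        rw [ha, ha', hbb]
        linear_combination (-((X 0 : MvPolynomial (Fin 2) (ZMod 2)) ^ ((b+1) * j)
          * X 1 ^ ((b+1) * (a+1) + (b+1)))) * h2
      rw [hid]
      exact add_mem ih' (Ideal.mul_mem_left _ _ hg₂)
  have part1 : (X 0 : MvPolynomial (Fin 2) (ZMod 2)) ^ n₁ * X 1 ^ n₂ - X 1 ^ (n₁ + n₂) ∈
      Ideal.span {X 0 ^ (n₁ + 1), X 1 * (X 0 + X 1) ^ n₂} := by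
    have hEq : (X 0 : MvPolynomial (Fin 2) (ZMod 2)) ^ n₁ * X 1 ^ n₂ - X 1 ^ (n₁ + n₂)
        = (X 0 : MvPolynomial (Fin 2) (ZMod 2)) ^ (n₂ * k) * X 1 ^ (n₂ * (k - k) + n₂)
          + X 1 ^ (n₂ * k + n₂) := by
      rw [Nat.sub_self, hk]
      linear_combination (-((X 1 : MvPolynomial (Fin 2) (ZMod 2)) ^ (n₂ * k + n₂))) * h2
    rw [hEq]
    exact key k le_rfl
  refine ⟨part1, ?_⟩
  -- Part 2
  intro hmem
  rw [hfrob, Ideal.mem_span_pair] at hmem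
  obtain ⟨u, v, huv⟩ := hmem
  classical
  set e : ℕ → (Fin 2 →₀ ℕ) := fun i =>
    Finsupp.single 0 (n₂ * (k - i)) + Finsupp.single 1 (n₂ * i + n₂) with he
  set D : ℕ → (Fin 2 →₀ ℕ) := fun i =>
    Finsupp.single 0 (n₂ * (k - 1 - i)) + Finsupp.single 1 (n₂ * i + b) with hD
  have He0 : ∀ i, e i 0 = n₂ * (k - i) := by
    intro i; simp [he, Finsupp.single_apply]
  have He1 : ∀ i, e i 1 = n₂ * i + n₂ := by
    intro i; simp [he, Finsupp.single_apply]
  have hX1m : (X 1 : MvPolynomial (Fin 2) (ZMod 2)) = monomial (Finsupp.single 1 1) 1 := by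
    rw [← X_pow_eq_monomial, pow_one]
  have hsplit : (X 1 : MvPolynomial (Fin 2) (ZMod 2)) * (X 0 ^ n₂ + X 1 ^ n₂)
      = monomial (Finsupp.single 0 n₂ + Finsupp.single 1 1) 1
        + monomial (Finsupp.single 1 (n₂ + 1)) 1 := by
    rw [mul_add, ← pow_succ' (X 1 : MvPolynomial (Fin 2) (ZMod 2)) n₂,
      X_pow_eq_monomial, X_pow_eq_monomial, hX1m, monomial_mul, mul_one,
      show Finsupp.single (1 : Fin 2) 1 + Finsupp.single 0 n₂
        = Finsupp.single (0 : Fin 2) n₂ + Finsupp.single 1 1 from add_comm _ _]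
  rw [hsplit, mul_add] at huv
  have H := congrArg (fun p => ∑ i ∈ Finset.range (k + 1), coeff (e i) p) huv
  simp only [coeff_add, Finset.sum_add_distrib] at H
  -- RHS is 1
  have hRHS : ∑ i ∈ Finset.range (k + 1),
      coeff (e i) ((X 1 : MvPolynomial (Fin 2) (ZMod 2)) ^ (n₁ + n₂)) = 1 := by
    rw [Finset.sum_eq_single_of_mem k (by simp)]
    · rw [X_pow_eq_monomial, coeff_monomial, if_pos]
      ext x
      fin_cases x <;> simp [he, Finsupp.single_apply, hk] <;> ring
    · intro i hi hik
      rw [X_pow_eq_monomial, coeff_monomial, if_neg]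
      intro hcon
      have h0 := congrArg (fun f => f 0) hcon
      rw [He0] at h0
      rw [Finsupp.single_apply] at h0
      simp only [Finset.mem_range] at hi
      have hki : 1 ≤ k - i := by omega
      have : n₂ * 1 ≤ n₂ * (k - i) := Nat.mul_le_mul_left n₂ hki
      simp only [if_neg (by decide : ¬ ((1 : Fin 2) = 0))] at h0
      omega
  -- first generator sum is 0
  have hsum0 : ∑ i ∈ Finset.range (k + 1),
      coeff (e i) (u * (X 0 : MvPolynomial (Fin 2) (ZMod 2)) ^ (n₁ + 1)) = 0 := by
    apply Finset.sum_eq_zero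
    intro i hi
    rw [X_pow_eq_monomial, coeff_mul_monomial', if_neg]
    intro hcon
    have h0 := hcon 0
    rw [He0, Finsupp.single_apply, if_pos rfl] at h0
    simp only [Finset.mem_range] at hi
    have hle : n₂ * (k - i) ≤ n₂ * k := Nat.mul_le_mul_left n₂ (by omega)
    omega
  -- second generator sums
  have hS1 : ∑ i ∈ Finset.range (k + 1),
      coeff (e i) (v * monomial (Finsupp.single 0 n₂ + Finsupp.single 1 1) 1)
      = ∑ i ∈ Finset.range k, coeff (D i) v := by
    rw [Finset.sum_range_succ]
    have hlast : coeff (e k) (v * monomial (Finsupp.single 0 n₂ + Finsupp.single 1 1) 1) = 0 := by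
      rw [coeff_mul_monomial', if_neg]
      intro hcon
      have h0 := hcon 0
      rw [Finsupp.add_apply, He0] at h0
      simp [Finsupp.single_apply] at h0
      omega
    rw [hlast, add_zero]
    apply Finset.sum_congr rfl
    intro i hi
    simp only [Finset.mem_range] at hi
    rw [coeff_mul_monomial', if_pos, mul_one]
    · congr 1
      ext x
      rw [Finsupp.tsub_apply]
      have hki : n₂ * (k - i) = n₂ * (k - 1 - i) + n₂ := by
        rw [show k - i = (k - 1 - i) + 1 by omega]; ring
      fin_cases x <;>
        simp [he, hD, Finsupp.single_apply, Finsupp.add_apply] <;> omega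
    · rw [Finsupp.le_def]
      intro x
      have hki : 1 ≤ k - i := by omega
      have hge : n₂ * 1 ≤ n₂ * (k - i) := Nat.mul_le_mul_left n₂ hki
      rw [mul_one] at hge
      fin_cases x <;> simp [he, Finsupp.single_apply, Finsupp.add_apply] <;> omega
  have hS2 : ∑ i ∈ Finset.range (k + 1),
      coeff (e i) (v * monomial (Finsupp.single 1 (n₂ + 1)) 1)
      = ∑ i ∈ Finset.range k, coeff (D i) v := by
    rw [Finset.sum_range_succ']
    have h0 : coeff (e 0) (v * monomial (Finsupp.single 1 (n₂ + 1)) 1) = 0 := by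
      rw [coeff_mul_monomial', if_neg]
      intro hcon
      have h1 := hcon 1
      rw [He1, Finsupp.single_apply, if_pos rfl] at h1
      omega
    rw [h0, add_zero]
    apply Finset.sum_congr rfl
    intro i hi
    simp only [Finset.mem_range] at hi
    rw [coeff_mul_monomial', if_pos, mul_one]
    · congr 1
      ext x
      rw [Finsupp.tsub_apply]
      have hki : k - (i + 1) = k - 1 - i := by omega
      have hmul : n₂ * (i + 1) = n₂ * i + n₂ := by ring
      fin_cases x <;>
        simp [he, hD, Finsupp.single_apply, Finsupp.add_apply, hki] <;> omega
    · rw [Finsupp.le_def]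
      intro x
      have hmul : n₂ * (i + 1) = n₂ * i + n₂ := by ring
      fin_cases x <;> simp [he, Finsupp.single_apply, Finsupp.add_apply] <;> omega
  rw [hRHS, hsum0, hS1, hS2, zero_add] at H
  have : (0 : ZMod 2) = 1 := by
    rw [← H]
    have : ∀ x : ZMod 2, x + x = 0 := by decide
    rw [this]
  exact absurd this (by decide)
end

section
/- Let n₁, n₂ ≥ 1 be integers, n = n₁ + n₂, and let R = (ℤ/2)[y₁,y₂]/I where I is the ideal generated by y₁^{n₁+1} and y₂·(y₁+y₂)^{n₂}. Suppose y₂^{n} ∉ I (i.e. ȳ₂^{n} ≠ 0 in R), and let r be an integer with n ≤ 2^{r} − 1 < 2n. Then in the tensor product R ⊗_{ℤ/2} R one has (1 ⊗ ȳ₂ + ȳ₂ ⊗ 1)^{2^{r}−1} ≠ 0, where ȳ₂ is the image of y₂ in R. -/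
open MvPolynomial TensorProduct

/-- All binomial coefficients `C(2^r - 1, k)` are odd. -/
private lemma aux_choose_two_pow (r : ℕ) : ∀ k ≤ 2 ^ r - 1,
    ((2 ^ r - 1).choose k : ZMod 2) = 1 := by
  induction r with
  | zero =>
    intro k hk
    simp [Nat.le_zero.mp hk]
  | succ r ih =>
    intro k hk
    have h2 : (2 : ℕ) ^ (r + 1) = 2 * 2 ^ r := by ring
    have hp : 1 ≤ (2 : ℕ) ^ r := Nat.one_le_two_pow
    have hmod : (2 ^ (r + 1) - 1) % 2 = 1 := by omega
    have hdiv : (2 ^ (r + 1) - 1) / 2 = 2 ^ r - 1 := by omega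
    have hk2 : k / 2 ≤ 2 ^ r - 1 := by omega
    have lucas := Choose.choose_modEq_choose_mod_mul_choose_div
      (n := 2 ^ (r + 1) - 1) (k := k) (p := 2)
    have hcast := (ZMod.intCast_eq_intCast_iff _ _ _).mpr lucas
    push_cast at hcast
    rw [hcast, hmod, hdiv]
    rcases Nat.mod_two_eq_zero_or_one k with h | h <;>
      rw [h] <;> simp [ih _ hk2]

/-- A homogeneous component of a multiple of a homogeneous element of an ideal
belongs to the ideal. -/
private lemma aux_comp_mul_mem {σ R : Type*} [CommRing R] {g : MvPolynomial σ R} {e : ℕ}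
    (hg : g.IsHomogeneous e) (J : Ideal (MvPolynomial σ R)) (hgJ : g ∈ J)
    (a : MvPolynomial σ R) (d : ℕ) :
    MvPolynomial.homogeneousComponent d (a * g) ∈ J := by
  have ha := MvPolynomial.sum_homogeneousComponent a
  rw [← ha, Finset.sum_mul, map_sum]
  apply Submodule.sum_mem
  intro i _
  have hhom : (MvPolynomial.homogeneousComponent i a * g).IsHomogeneous (i + e) :=
    (MvPolynomial.homogeneousComponent_isHomogeneous i a).mul hg
  rw [MvPolynomial.homogeneousComponent_of_mem
    ((MvPolynomial.mem_homogeneousSubmodule _ _).mpr hhom)]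
  split
  · exact J.mul_mem_left _ hgJ
  · exact J.zero_mem

private lemma zmod2_ne_zero {x : ZMod 2} (h : x ≠ 0) : x = 1 := by
  revert h; revert x; decide

set_option maxHeartbeats 2000000 in
set_option synthInstance.maxHeartbeats 1000000 in
theorem stmt_5 (n₁ n₂ r : ℕ) (h₁ : 1 ≤ n₁) (h₂ : 1 ≤ n₂)
    (I : Ideal (MvPolynomial (Fin 2) (ZMod 2)))
    (hI : I = Ideal.span {X 0 ^ (n₁ + 1), X 1 * (X 0 + X 1) ^ n₂})
    (hy : (X 1 : MvPolynomial (Fin 2) (ZMod 2)) ^ (n₁ + n₂) ∉ I)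
    (hr : n₁ + n₂ ≤ 2 ^ r - 1) (hr' : 2 ^ r - 1 < 2 * (n₁ + n₂)) :
    ((1 : MvPolynomial (Fin 2) (ZMod 2) ⧸ I) ⊗ₜ[ZMod 2] (Ideal.Quotient.mk I (X 1))
        + (Ideal.Quotient.mk I (X 1)) ⊗ₜ[ZMod 2] 1) ^ (2 ^ r - 1) ≠ 0 := by
  set A := MvPolynomial (Fin 2) (ZMod 2) with hA
  set m := 2 ^ r - 1 with hm
  set n := n₁ + n₂ with hn
  set b : A ⧸ I := Ideal.Quotient.mk I (X 1) with hbdef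
  intro hzero
  -- the generators of `I` are homogeneous
  have hg₁ : (X 0 ^ (n₁ + 1) : A).IsHomogeneous (n₁ + 1) := by
    simpa using (isHomogeneous_X (ZMod 2) (0 : Fin 2)).pow (n₁ + 1)
  have hg₂ : (X 1 * (X 0 + X 1) ^ n₂ : A).IsHomogeneous (1 + n₂) := by
    simpa using (isHomogeneous_X (ZMod 2) (1 : Fin 2)).mul
      (((isHomogeneous_X (ZMod 2) (0 : Fin 2)).add (isHomogeneous_X (ZMod 2) 1)).pow n₂)
  have hg₁I : (X 0 ^ (n₁ + 1) : A) ∈ I := by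
    rw [hI]; exact Ideal.subset_span (Set.mem_insert _ _)
  have hg₂I : (X 1 * (X 0 + X 1) ^ n₂ : A) ∈ I := by
    rw [hI]; exact Ideal.subset_span (Set.mem_insert_of_mem _ rfl)
  -- homogeneous components of elements of `I` are in `I`
  have hcomp : ∀ p ∈ I, ∀ d, homogeneousComponent d p ∈ I := by
    intro p hp d
    rw [hI, Ideal.mem_span_pair] at hp
    obtain ⟨a, c, hac⟩ := hp
    rw [← hac, map_add]
    exact I.add_mem (aux_comp_mul_mem hg₁ I hg₁I a d) (aux_comp_mul_mem hg₂ I hg₂I c d)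
  -- powers of `X 1` up to `n` are not in `I`
  have hpow : ∀ k ≤ n, (X 1 : A) ^ k ∉ I := by
    intro k hk hmem
    apply hy
    have hsplit : (X 1 : A) ^ n = (X 1) ^ (n - k) * (X 1) ^ k := by
      rw [← pow_add]; congr 1; omega
    rw [hn] at hsplit ⊢
    rw [hsplit]
    exact I.mul_mem_left _ hmem
  have hmn_le : m - n ≤ n := by omega
  -- a functional `G₀` on the quotient not vanishing on `y^(m-n)`
  have hmnne : (Ideal.Quotient.mk I ((X 1 : A) ^ (m - n))) ≠ 0 := by
    rw [Ne, Ideal.Quotient.eq_zero_iff_mem]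
    exact hpow _ hmn_le
  obtain ⟨G₀, hG₀⟩ : ∃ φ : Module.Dual (ZMod 2) (A ⧸ I),
      φ (Ideal.Quotient.mk I ((X 1 : A) ^ (m - n))) ≠ 0 := by
    by_contra h
    push_neg at h
    exact hmnne ((Module.forall_dual_apply_eq_zero_iff (ZMod 2) _).mp h)
  -- a functional `G'` on the quotient not vanishing on `y^n`
  have hnne : (Ideal.Quotient.mk I ((X 1 : A) ^ n)) ≠ 0 := by
    rw [Ne, Ideal.Quotient.eq_zero_iff_mem]
    exact hpow _ le_rfl
  obtain ⟨G', hG'⟩ : ∃ φ : Module.Dual (ZMod 2) (A ⧸ I),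
      φ (Ideal.Quotient.mk I ((X 1 : A) ^ n)) ≠ 0 := by
    by_contra h
    push_neg at h
    exact hnne ((Module.forall_dual_apply_eq_zero_iff (ZMod 2) _).mp h)
  -- the functional `H` on `A`: `G₀` of the image of the degree-`(m-n)` component
  set H : A →ₗ[ZMod 2] ZMod 2 :=
    G₀ ∘ₗ (Ideal.Quotient.mkₐ (ZMod 2) I).toLinearMap ∘ₗ (homogeneousComponent (m - n))
    with hH
  have hHI : (I.restrictScalars (ZMod 2)) ≤ LinearMap.ker H := by
    intro p hp
    have hpI : p ∈ I := hp
    have hmem := hcomp p hpI (m - n)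
    simp only [hH, LinearMap.mem_ker, LinearMap.comp_apply]
    show G₀ (Ideal.Quotient.mk I (homogeneousComponent (m - n) p)) = 0
    rw [Ideal.Quotient.eq_zero_iff_mem.mpr hmem, map_zero]
  have hHval : ∀ k, H ((X 1 : A) ^ k) =
      if m - n = k then G₀ (Ideal.Quotient.mk I ((X 1 : A) ^ (m - n))) else 0 := by
    intro k
    simp only [hH, LinearMap.comp_apply, Ideal.Quotient.mkₐ_eq_mk]
    rw [MvPolynomial.homogeneousComponent_of_mem
      ((MvPolynomial.mem_homogeneousSubmodule _ _).mpr (isHomogeneous_X_pow _ _ ))]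
    split
    · next h => subst h; rfl
    · rw [map_zero, map_zero]
  -- descend `H` to the quotient
  set H' : (A ⧸ I) →ₗ[ZMod 2] ZMod 2 :=
    (Submodule.liftQ (I.restrictScalars (ZMod 2)) H hHI) ∘ₗ
      ((Submodule.Quotient.restrictScalarsEquiv (ZMod 2) (I : Submodule A A)).symm :
        (A ⧸ (I : Submodule A A)) →ₗ[ZMod 2] A ⧸ I.restrictScalars (ZMod 2)) with hH'
  have hH'mk : ∀ x : A, H' (Ideal.Quotient.mk I x) = H x := by
    intro x
    have hmk : (Ideal.Quotient.mk I x : A ⧸ I) = Submodule.Quotient.mk x := rfl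
    rw [hH', LinearMap.comp_apply, hmk, LinearEquiv.coe_coe,
      Submodule.Quotient.restrictScalarsEquiv_symm_mk, Submodule.liftQ_apply]
  -- the functional on the tensor product
  set Φ : (A ⧸ I) ⊗[ZMod 2] (A ⧸ I) →ₗ[ZMod 2] ZMod 2 :=
    TensorProduct.lift ((LinearMap.mul (ZMod 2) (ZMod 2)).compl₁₂ H' G') with hΦdef
  have hΦ : ∀ x y : A ⧸ I, Φ (x ⊗ₜ[ZMod 2] y) = H' x * G' y := fun x y => rfl
  -- expand the power and apply `Φ`
  have hzero' := (add_pow ((1 : A ⧸ I) ⊗ₜ[ZMod 2] b) (b ⊗ₜ[ZMod 2] (1 : A ⧸ I)) m).symm.trans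
    hzero
  have happ := congrArg Φ hzero'
  rw [map_zero, map_sum] at happ
  have hterm : ∀ k ∈ Finset.range (m + 1),
      Φ ((1 ⊗ₜ[ZMod 2] b) ^ k * (b ⊗ₜ[ZMod 2] (1 : A ⧸ I)) ^ (m - k)
          * ((m.choose k : ℕ) : (A ⧸ I) ⊗[ZMod 2] (A ⧸ I)))
        = (m.choose k) • (H' (b ^ (m - k)) * G' (b ^ k)) := by
    intro k _
    rw [Algebra.TensorProduct.tmul_pow, Algebra.TensorProduct.tmul_pow, one_pow, one_pow,
      Algebra.TensorProduct.tmul_mul_tmul, one_mul, mul_one,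
      mul_comm _ ((m.choose k : ℕ) : (A ⧸ I) ⊗[ZMod 2] (A ⧸ I)), ← nsmul_eq_mul (m.choose k) ((b ^ (m - k)) ⊗ₜ[ZMod 2] (b ^ k)), map_nsmul, hΦ]
  rw [Finset.sum_congr rfl hterm] at happ
  have hbpow : ∀ j, b ^ j = Ideal.Quotient.mk I ((X 1 : A) ^ j) := by
    intro j; rw [hbdef, map_pow]
  have hsingle : ∑ k ∈ Finset.range (m + 1), (m.choose k) • (H' (b ^ (m - k)) * G' (b ^ k))
      = (m.choose n) • (H' (b ^ (m - n)) * G' (b ^ n)) := by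
    apply Finset.sum_eq_single_of_mem
    · rw [Finset.mem_range]; omega
    · intro k hk hkn
      rw [Finset.mem_range] at hk
      have : H' (b ^ (m - k)) = 0 := by
        rw [hbpow, hH'mk, hHval]
        rw [if_neg (by omega)]
      rw [this, zero_mul, smul_zero]
  rw [hsingle] at happ
  have hHmn : H' (b ^ (m - n)) = 1 := by
    rw [hbpow, hH'mk, hHval, if_pos rfl]
    exact zmod2_ne_zero hG₀
  have hGn : G' (b ^ n) = 1 := by
    rw [hbpow]
    exact zmod2_ne_zero hG'
  rw [hHmn, hGn, mul_one, nsmul_eq_mul, mul_one] at happ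
  rw [aux_choose_two_pow r n hr] at happ
  exact one_ne_zero happ
end

section
/- Let n₁, n₂ ≥ 1 be integers with n₂ > n₁ + 1 and such that C(n₂ − 1, i) is even for every 0 < i < n₂ − 1; set n = n₁ + n₂. Work in A = (ℤ/2)[y₁,y₂] and let I ⊆ A be the ideal generated by y₁^{n₁+1} and y₂·(y₁+y₂)^{n₂}. Then y₁^{n₁}·y₂^{n₂} − y₂^{n} ∈ I (i.e. y₁^{n₁} y₂^{n₂} = y₂^{n} in R = A/I), and y₂^{n} ∉ I (i.e. y₂^{n} ≠ 0 in R). -/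
open MvPolynomial Finset

theorem stmt_6 (n₁ n₂ : ℕ) (h₁ : 1 ≤ n₁) (h₂ : 1 ≤ n₂) (hlt : n₁ + 1 < n₂)
    (hbin : ∀ i, 0 < i → i < n₂ - 1 → Even ((n₂ - 1).choose i))
    (I : Ideal (MvPolynomial (Fin 2) (ZMod 2)))
    (hI : I = Ideal.span {X 0 ^ (n₁ + 1), X 1 * (X 0 + X 1) ^ n₂}) :
    (X 0 : MvPolynomial (Fin 2) (ZMod 2)) ^ n₁ * X 1 ^ n₂ - X 1 ^ (n₁ + n₂) ∈ I ∧
    (X 1 : MvPolynomial (Fin 2) (ZMod 2)) ^ (n₁ + n₂) ∉ I := by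
  obtain ⟨k, hk⟩ : ∃ k, n₂ = n₁ + 2 + k := ⟨n₂ - (n₁ + 2), by omega⟩
  subst hk
  set A := MvPolynomial (Fin 2) (ZMod 2) with hA
  set x : A := X 0 with hx
  set y : A := X 1 with hy
  have hchar : CharP A 2 := inferInstance
  have hsub : ∀ a b : A, a - b = a + b := CharTwo.sub_eq_add
  -- binomial identity
  have hbin' : ∀ i, 0 < i → i < n₁ + 1 + k → Even ((n₁ + 1 + k).choose i) := by
    intro i hi hi'
    have := hbin i hi (by omega)
    have hmeq : n₁ + 2 + k - 1 = n₁ + 1 + k := by omega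
    rwa [hmeq] at this
  have hAdd : (x + y) ^ (n₁ + 1 + k) = x ^ (n₁ + 1 + k) + y ^ (n₁ + 1 + k) := by
    set m := n₁ + 1 + k with hm
    rw [add_pow]
    have hterm : ∀ i ∈ range (m + 1), x ^ i * y ^ (m - i) * ((m.choose i : ℕ) : A) =
        (if i = 0 then y ^ m else 0) + (if i = m then x ^ m else 0) := by
      intro i hi
      rcases eq_or_ne i 0 with rfl | h0
      · have hm0 : (0 : ℕ) ≠ m := by omega
        simp [hm0]
      rcases eq_or_ne i m with rfl | hmne
      · simp [h0, Nat.choose_self]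
      · have hi' : i < m + 1 := mem_range.mp hi
        have heven : Even (m.choose i) := hbin' i (by omega) (by omega)
        obtain ⟨c, hc⟩ := heven
        have h2 : ((m.choose i : ℕ) : A) = 0 := by
          rw [hc]
          push_cast
          have h20 : (2 : A) = 0 := by
            have := CharP.cast_eq_zero A 2
            simpa using this
          linear_combination (c : A) * h20
        rw [h2, if_neg h0, if_neg hmne]
        ring
      
    rw [Finset.sum_congr rfl hterm, Finset.sum_add_distrib,
      Finset.sum_ite_eq' (range (m + 1)) 0 (fun _ => y ^ m),
      Finset.sum_ite_eq' (range (m + 1)) m (fun _ => x ^ m)]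
    simp [add_comm]
  -- decomposition of the second generator
  have hg : y * (x + y) ^ (n₁ + 2 + k) =
      (x ^ k * y * (x + y)) * x ^ (n₁ + 1) + y ^ (n₁ + 2 + k) * (x - y) := by
    rw [hsub]
    rw [show n₁ + 2 + k = (n₁ + 1 + k) + 1 by ring, pow_succ, hAdd]
    ring
  have hfI : x ^ (n₁ + 1) ∈ I := by
    rw [hI]; exact Ideal.subset_span (by simp)
  have hgI : y * (x + y) ^ (n₁ + 2 + k) ∈ I := by
    rw [hI]; exact Ideal.subset_span (by simp)
  have hhI : y ^ (n₁ + 2 + k) * (x - y) ∈ I := by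
    have := I.sub_mem hgI (I.mul_mem_left (x ^ k * y * (x + y)) hfI)
    rwa [hg, add_sub_cancel_left] at this
  constructor
  · -- first part
    have key := geom_sum₂_mul x y n₁
    have heq : x ^ n₁ * y ^ (n₁ + 2 + k) - y ^ (n₁ + (n₁ + 2 + k)) =
        (∑ i ∈ range n₁, x ^ i * y ^ (n₁ - 1 - i)) * (y ^ (n₁ + 2 + k) * (x - y)) := by
      linear_combination (-(y ^ (n₁ + 2 + k))) * key
    rw [heq]
    exact I.mul_mem_left _ hhI
  · -- second part
    intro hmem
    rw [hI, Ideal.mem_span_pair] at hmem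
    obtain ⟨u, v, huv⟩ := hmem
    have E2 : y ^ (n₁ + 2 + k) * (y ^ n₁ - v * (x - y)) =
        x ^ (n₁ + 1) * (u + v * (x ^ k * y * (x + y))) := by
      linear_combination -huv + v * hg
    have hdvd : x ^ (n₁ + 1) ∣ y ^ (n₁ + 2 + k) * (y ^ n₁ - v * (x - y)) := ⟨_, E2⟩
    -- push into (ZMod 2)[t][X]
    set t : Polynomial (ZMod 2) := Polynomial.X with ht
    set Φ : A →ₐ[ZMod 2] Polynomial (Polynomial (ZMod 2)) :=
      aeval (fun i : Fin 2 => if i = 0 then Polynomial.X else Polynomial.C t) with hΦ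
    have hΦx : Φ x = Polynomial.X := by
      rw [hΦ, hx, aeval_X, if_pos rfl]
    have hΦy : Φ y = Polynomial.C t := by
      rw [hΦ, hy, aeval_X, if_neg (by decide)]
    have hdvd2 := map_dvd Φ hdvd
    rw [map_mul, map_pow, map_pow, hΦx, hΦy, map_sub, map_pow, map_mul, map_sub, hΦx, hΦy] at hdvd2
    have hnd : ¬ (Polynomial.X : Polynomial (Polynomial (ZMod 2))) ∣
        (Polynomial.C t) ^ (n₁ + 2 + k) := by
      intro hd
      have := Polynomial.prime_X.dvd_of_dvd_pow hd
      rw [Polynomial.X_dvd_iff, Polynomial.coeff_C_zero] at this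
      exact Polynomial.X_ne_zero this
    have hdvd3 := Polynomial.prime_X.pow_dvd_of_dvd_mul_left (n₁ + 1) hnd hdvd2
    -- evaluate X at t
    have hdvd4 := map_dvd (Polynomial.evalRingHom t) hdvd3
    simp only [map_pow, map_sub, map_mul, Polynomial.coe_evalRingHom, Polynomial.eval_X,
      Polynomial.eval_C, sub_self, mul_zero, sub_zero] at hdvd4
    obtain ⟨e, he⟩ := hdvd4
    have hcancel : t ^ n₁ * 1 = t ^ n₁ * (t * e) := by
      linear_combination he
    have h1 : (1 : Polynomial (ZMod 2)) = t * e :=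
      mul_left_cancel₀ (pow_ne_zero _ Polynomial.X_ne_zero) hcancel
    exact Polynomial.not_isUnit_X (IsUnit.of_mul_eq_one _ h1.symm)
end

section
/- Let n₁, n₂ ≥ 1 be integers with n₁ even, n₂ > n₁ + 2, and such that C(n₂ − 2, i) is even for every 0 < i < n₂ − 2; set n = n₁ + n₂. Work in A = (ℤ/2)[y₁,y₂] and let I ⊆ A be the ideal generated by y₁^{n₁+1} and y₂·(y₁+y₂)^{n₂}. Then y₁^{n₁}·y₂^{n₂} − y₂^{n} ∈ I (i.e. y₁^{n₁} y₂^{n₂} = y₂^{n} in R = A/I), and y₂^{n} ∉ I (i.e. y₂^{n} ≠ 0 in R). -/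
open MvPolynomial Finset

private abbrev A2 := MvPolynomial (Fin 2) (ZMod 2)

private lemma even_cast_zero {R : Type*} [CommRing R] [CharP R 2] {k : ℕ} (h : Even k) :
    (k : R) = 0 := by
  obtain ⟨m, rfl⟩ := h
  push_cast
  linear_combination (m : R) * (CharTwo.two_eq_zero (R := R))

private lemma choose_n2 (n₂ : ℕ) (h2 : 2 ≤ n₂)
    (hbin : ∀ i, 0 < i → i < n₂ - 2 → Even ((n₂ - 2).choose i)) :
    ∀ j, j < n₂ - 2 → ((n₂.choose j : ZMod 2)) = (Nat.choose 2 j : ZMod 2) := by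
  intro j hj
  have hn : n₂ = (n₂ - 2) + 2 := by omega
  rw [hn, Nat.add_choose_eq]
  push_cast
  rw [Finset.Nat.sum_antidiagonal_eq_sum_range_succ_mk]
  rw [Finset.sum_eq_single_of_mem 0 (Finset.mem_range.mpr (Nat.succ_pos j))]
  · simp
  · intro b hb hb0
    have hblt : b < n₂ - 2 := lt_of_le_of_lt (Nat.lt_succ_iff.mp (Finset.mem_range.mp hb)) hj
    rw [even_cast_zero (hbin b (Nat.pos_of_ne_zero hb0) hblt)]
    ring

private lemma choose_key (n₁ n₂ : ℕ) (hlt : n₁ + 2 < n₂)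
    (hbin : ∀ i, 0 < i → i < n₂ - 2 → Even ((n₂ - 2).choose i)) :
    ∀ a ≤ n₁, (((n₁ + n₂).choose a : ZMod 2)) = ((n₁ + 2).choose a : ZMod 2) := by
  intro a ha
  rw [Nat.add_choose_eq, Nat.add_choose_eq]
  push_cast
  refine Finset.sum_congr rfl ?_
  intro ij hij
  have h2 := Finset.HasAntidiagonal.mem_antidiagonal.mp hij
  have : ij.2 < n₂ - 2 := by omega
  rw [choose_n2 n₂ (by omega) hbin ij.2 this]

private lemma sum_choose_odd (n₁ : ℕ) (h₁ : 1 ≤ n₁) (heven : Even n₁) :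
    (∑ a ∈ Finset.range (n₁ + 1), ((n₁ + 2).choose a : ZMod 2)) = 1 := by
  have h := Nat.sum_range_choose (n₁ + 2)
  have hsplit : ∑ a ∈ Finset.range (n₁ + 3), ((n₁+2).choose a : ZMod 2)
      = ∑ a ∈ Finset.range (n₁ + 1), ((n₁+2).choose a : ZMod 2)
        + ((n₁+2).choose (n₁+1) : ZMod 2) + ((n₁+2).choose (n₁+2) : ZMod 2) := by
    rw [Finset.sum_range_succ, Finset.sum_range_succ]
  have hcast : (∑ a ∈ Finset.range (n₁ + 3), ((n₁+2).choose a : ZMod 2))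
      = ((2:ℕ)^(n₁+2) : ZMod 2) := by
    rw [← Nat.cast_sum, h]; push_cast; ring
  have h2 : ((2:ℕ)^(n₁+2) : ZMod 2) = 0 := by
    push_cast
    rw [show ((2:ZMod 2)) = 0 from rfl]
    simp
  have hc1 : ((n₁+2).choose (n₁+1) : ZMod 2) = 0 := by
    rw [Nat.choose_succ_self_right]
    exact even_cast_zero (by obtain ⟨m, rfl⟩ := heven; exact ⟨m+1, by ring⟩)
  have hc2 : ((n₁+2).choose (n₁+2) : ZMod 2) = 1 := by simp
  rw [hsplit, hc1, hc2, h2] at hcast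
  have h20 : (2 : ZMod 2) = 0 := by decide
  linear_combination hcast - h20

private lemma freshman (m : ℕ) (hb : ∀ i, 0 < i → i < m → Even (m.choose i)) (hm : 1 ≤ m) :
    (X 0 + X 1 : A2) ^ m = X 0 ^ m + X 1 ^ m := by
  rw [add_pow]
  obtain ⟨m, rfl⟩ : ∃ k, m = k + 1 := ⟨m - 1, by omega⟩
  rw [Finset.sum_range_succ]
  rw [Finset.sum_eq_single_of_mem 0 (Finset.mem_range.mpr (Nat.succ_pos _))]
  · simp [add_comm]
  · intro b hb' hb0
    rw [even_cast_zero (hb b (Nat.pos_of_ne_zero hb0) (Finset.mem_range.mp hb'))]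
    ring

private lemma coeff_mul_X_pow_eq_zero (p : A2) (i : Fin 2) (k : ℕ) (m : Fin 2 →₀ ℕ)
    (h : m i < k) : MvPolynomial.coeff m (p * X i ^ k) = 0 := by
  rw [X_pow_eq_monomial, coeff_mul_monomial', if_neg]
  intro hle
  have := hle i
  simp only [Finsupp.single_eq_same] at this
  omega

private lemma no_witness (n₁ n₂ : ℕ) (u v : A2)
    (heq : u * X 0 ^ (n₁ + 1) + v * ((X 0 + X 1) * X 1 ^ n₂) = (X 0 + X 1) ^ (n₁ + n₂))
    (h₁ : 1 ≤ n₁) (heven : Even n₁) (hlt : n₁ + 2 < n₂)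
    (hbin : ∀ i, 0 < i → i < n₂ - 2 → Even ((n₂ - 2).choose i)) : False := by
  set N := n₁ + n₂ with hN
  set d : ℕ → (Fin 2 →₀ ℕ) := fun a => Finsupp.single 0 a + Finsupp.single 1 (N - a) with hd
  have hd0 : ∀ a, d a 0 = a := by
    intro a; simp [hd, Finsupp.single_apply]
  have hd1 : ∀ a, d a 1 = N - a := by
    intro a; simp [hd, Finsupp.single_apply]
  have hsum := congrArg (fun f => ∑ a ∈ range (n₁+1), MvPolynomial.coeff (d a) f) heq
  simp only [coeff_add] at hsum
  rw [Finset.sum_add_distrib] at hsum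
  have hS0 : ∑ a ∈ range (n₁+1), MvPolynomial.coeff (d a) (u * X 0 ^ (n₁+1)) = 0 := by
    apply Finset.sum_eq_zero
    intro a ha
    exact coeff_mul_X_pow_eq_zero u 0 (n₁+1) (d a)
      (by rw [hd0]; exact Nat.lt_succ_of_le (Nat.lt_succ_iff.mp (mem_range.mp ha)))
  have hsplit : v * ((X 0 + X 1) * X 1 ^ n₂)
      = v * ((X 1 ^ n₂ : A2) * X 0 ^ 1) + v * X 1 ^ (n₂ + 1) := by
    rw [pow_add]; ring
  have hmono1 : ((X 1 : A2) ^ n₂ * X 0 ^ 1)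
      = monomial (Finsupp.single 1 n₂ + Finsupp.single 0 1) 1 := by
    rw [X_pow_eq_monomial, X_pow_eq_monomial, monomial_mul, mul_one]
  have hS1 : ∑ a ∈ range (n₁+1), MvPolynomial.coeff (d a) (v * ((X 1 ^ n₂ : A2) * X 0 ^ 1))
      = ∑ b ∈ range n₁, MvPolynomial.coeff
          (Finsupp.single 0 b + Finsupp.single 1 (n₁ - 1 - b)) v := by
    rw [Finset.sum_range_succ']
    have hz : MvPolynomial.coeff (d 0) (v * ((X 1 ^ n₂ : A2) * X 0 ^ 1)) = 0 := by
      rw [← mul_assoc]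
      exact coeff_mul_X_pow_eq_zero _ 0 1 _ (by rw [hd0]; omega)
    rw [hz, add_zero]
    apply Finset.sum_congr rfl
    intro b hb
    have hble : b + 1 ≤ n₁ := mem_range.mp hb
    have hde : d (b + 1) = (Finsupp.single 0 b + Finsupp.single 1 (n₁ - 1 - b))
        + (Finsupp.single 1 n₂ + Finsupp.single 0 1) := by
      have e0 : Finsupp.single (0 : Fin 2) (b+1) = Finsupp.single 0 b + Finsupp.single 0 1 := by
        rw [← Finsupp.single_add]
      have e1 : Finsupp.single (1 : Fin 2) (N - (b+1))
          = Finsupp.single 1 (n₁ - 1 - b) + Finsupp.single 1 n₂ := by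
        rw [← Finsupp.single_add]
        congr 1
        omega
      rw [show d (b+1) = Finsupp.single 0 (b+1) + Finsupp.single 1 (N-(b+1)) from rfl, e0, e1]
      abel
    rw [hde, hmono1, coeff_mul_monomial, mul_one]
  have hmono2 : ((X 1 : A2) ^ (n₂+1)) = monomial (Finsupp.single 1 (n₂+1)) 1 :=
    X_pow_eq_monomial
  have hS2 : ∑ a ∈ range (n₁+1), MvPolynomial.coeff (d a) (v * X 1 ^ (n₂+1))
      = ∑ b ∈ range n₁, MvPolynomial.coeff
          (Finsupp.single 0 b + Finsupp.single 1 (n₁ - 1 - b)) v := by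
    rw [Finset.sum_range_succ]
    have hz : MvPolynomial.coeff (d n₁) (v * X 1 ^ (n₂+1)) = 0 :=
      coeff_mul_X_pow_eq_zero _ 1 (n₂+1) _ (by rw [hd1]; omega)
    rw [hz, add_zero]
    apply Finset.sum_congr rfl
    intro b hb
    have hble : b < n₁ := mem_range.mp hb
    have hde : d b = (Finsupp.single 0 b + Finsupp.single 1 (n₁ - 1 - b))
        + Finsupp.single 1 (n₂ + 1) := by
      have e1 : Finsupp.single (1 : Fin 2) (N - b)
          = Finsupp.single 1 (n₁ - 1 - b) + Finsupp.single 1 (n₂+1) := by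
        rw [← Finsupp.single_add]
        congr 1
        omega
      rw [show d b = Finsupp.single 0 b + Finsupp.single 1 (N-b) from rfl, e1]
      abel
    rw [hde, hmono2, coeff_mul_monomial, mul_one]
  have hRHS : ∀ a ∈ range (n₁+1), MvPolynomial.coeff (d a) ((X 0 + X 1 : A2) ^ N)
      = ((N.choose a : ZMod 2)) := by
    intro a ha
    have haN : a < N + 1 := by have := mem_range.mp ha; omega
    rw [add_pow, MvPolynomial.coeff_sum]
    rw [Finset.sum_eq_single_of_mem a (mem_range.mpr haN)]
    · have : ((X 0 : A2) ^ a * X 1 ^ (N - a) * (N.choose a : A2))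
          = monomial (d a) ((N.choose a : ZMod 2)) := by
        rw [X_pow_eq_monomial, X_pow_eq_monomial, monomial_mul, mul_one]
        rw [show ((N.choose a : A2)) = MvPolynomial.C ((N.choose a : ZMod 2)) by push_cast; rfl]
        rw [mul_comm, C_mul_monomial, mul_one]
      rw [this, coeff_monomial, if_pos rfl]
    · intro k hk hka
      have : ((X 0 : A2) ^ k * X 1 ^ (N - k) * (N.choose k : A2))
          = monomial (Finsupp.single 0 k + Finsupp.single 1 (N - k)) ((N.choose k : ZMod 2)) := by
        rw [X_pow_eq_monomial, X_pow_eq_monomial, monomial_mul, mul_one]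
        rw [show ((N.choose k : A2)) = MvPolynomial.C ((N.choose k : ZMod 2)) by push_cast; rfl]
        rw [mul_comm, C_mul_monomial, mul_one]
      rw [this, coeff_monomial, if_neg]
      intro hcon
      apply hka
      have := congrArg (fun f => f 0) hcon
      simpa [Finsupp.single_apply, hd0] using this
  rw [hS0, hsplit] at hsum
  simp only [coeff_add] at hsum
  rw [Finset.sum_add_distrib, hS1, hS2, Finset.sum_congr rfl hRHS] at hsum
  rw [zero_add, CharTwo.add_self_eq_zero] at hsum
  have hodd : (∑ a ∈ range (n₁+1), ((N.choose a : ZMod 2))) = 1 := by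
    rw [Finset.sum_congr rfl
      (fun a ha => choose_key n₁ n₂ hlt hbin a (Nat.lt_succ_iff.mp (mem_range.mp ha)))]
    exact sum_choose_odd n₁ h₁ heven
  exact zero_ne_one (hsum.trans hodd)

theorem stmt_7 (n₁ n₂ : ℕ) (h₁ : 1 ≤ n₁) (h₂ : 1 ≤ n₂) (heven : Even n₁)
    (hlt : n₁ + 2 < n₂)
    (hbin : ∀ i, 0 < i → i < n₂ - 2 → Even ((n₂ - 2).choose i))
    (I : Ideal (MvPolynomial (Fin 2) (ZMod 2)))
    (hI : I = Ideal.span {X 0 ^ (n₁ + 1), X 1 * (X 0 + X 1) ^ n₂}) :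
    (X 0 : MvPolynomial (Fin 2) (ZMod 2)) ^ n₁ * X 1 ^ n₂ - X 1 ^ (n₁ + n₂) ∈ I ∧
    (X 1 : MvPolynomial (Fin 2) (ZMod 2)) ^ (n₁ + n₂) ∉ I := by
  constructor
  · -- membership part
    clear h₂
    obtain ⟨m, rfl⟩ : ∃ m, n₂ = m + 2 := ⟨n₂ - 2, by omega⟩
    have hm1 : 1 ≤ m := by omega
    have hfr : (X 0 + X 1 : A2) ^ m = X 0 ^ m + X 1 ^ m := by
      apply freshman m _ hm1
      simpa using hbin
    have hg2 : (X 1 * (X 0 + X 1) ^ (m+2) : A2) ∈ I := by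
      rw [hI]; exact Ideal.subset_span (by simp)
    have hx : ∀ (k : ℕ) (p : A2), X 0 ^ (n₁ + 1 + k) * p ∈ I := by
      intro k p
      have hre : (X 0 ^ (n₁ + 1 + k) * p : A2) = X 0 ^ (n₁+1) * (X 0 ^ k * p) := by
        rw [pow_add]; ring
      rw [hI, hre]
      exact Ideal.mul_mem_right _ _ (Ideal.subset_span (by simp))
    have hq : (X 1 ^ (m+3) - X 0 ^ 2 * X 1 ^ (m+1) : A2) ∈ I := by
      have h2 : (2 : A2) = 0 := CharTwo.two_eq_zero
      have hsq : (X 0 + X 1 : A2) ^ 2 = X 0 ^ 2 + X 1 ^ 2 := by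
        linear_combination (X 0 * X 1 : A2) * h2
      have hid : (X 1 ^ (m+3) - X 0 ^ 2 * X 1 ^ (m+1) : A2)
          = X 1 * (X 0 + X 1) ^ (m+2) - X 0 ^ (m+2) * X 1 - X 0 ^ m * X 1 ^ 3 := by
        linear_combination (-(X 1 : A2) * (X 0 + X 1)^2) * hfr
          + (-(X 1 : A2) * (X 0^m + X 1^m)) * hsq
          + (-(X 0:A2)^2 * X 1^(m+1)) * h2
      rw [hid]
      have hxm : (X 0 ^ (m+2) * X 1 : A2) ∈ I := by
        have := hx (m + 1 - n₁) (X 1)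
        rwa [show n₁ + 1 + (m + 1 - n₁) = m + 2 by omega] at this
      have hxm2 : (X 0 ^ m * X 1 ^ 3 : A2) ∈ I := by
        have := hx (m - (n₁ + 1)) (X 1 ^ 3)
        rwa [show n₁ + 1 + (m - (n₁+1)) = m by omega] at this
      exact sub_mem (sub_mem hg2 hxm) hxm2
    have key : ∀ j : ℕ, (X 1 ^ (m + 2 + 2*j) - X 0 ^ (2*j) * X 1 ^ (m+2) : A2) ∈ I := by
      intro j
      induction j with
      | zero => simp
      | succ j ih =>
        have hid : (X 1 ^ (m + 2 + 2*(j+1)) - X 0 ^ (2*(j+1)) * X 1 ^ (m+2) : A2)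
            = X 1 ^ (2*j+1) * (X 1 ^ (m+3) - X 0 ^ 2 * X 1 ^ (m+1))
              + X 0 ^ 2 * (X 1 ^ (m + 2 + 2*j) - X 0 ^ (2*j) * X 1 ^ (m+2)) := by
          ring
        rw [hid]
        exact add_mem (Ideal.mul_mem_left _ _ hq) (Ideal.mul_mem_left _ _ ih)
    obtain ⟨j', hj'⟩ := heven
    obtain ⟨j, rfl⟩ : ∃ j, n₁ = 2 * j := ⟨j', by omega⟩
    have := key j
    have hid2 : (X 0 : A2) ^ (2*j) * X 1 ^ (m+2) - X 1 ^ (2*j + (m+2))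
        = -(X 1 ^ (m + 2 + 2*j) - X 0 ^ (2*j) * X 1 ^ (m+2)) := by ring
    rw [hid2]
    exact neg_mem this
  · -- non-membership part
    intro hy
    set σ : A2 →ₐ[ZMod 2] A2 := aeval ![X 0, X 0 + X 1] with hσ
    rw [hI, Ideal.mem_span_pair] at hy
    obtain ⟨u, v, huv⟩ := hy
    have heq := congrArg (fun p => σ p) huv
    simp only [map_add, map_mul, map_pow] at heq
    have hx0 : σ (X 0) = X 0 := by simp [hσ]
    have hx1 : σ (X 1) = X 0 + X 1 := by simp [hσ]
    rw [hx0, hx1] at heq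
    have hxx : (X 0 + (X 0 + X 1) : A2) = X 1 := by
      rw [← add_assoc, CharTwo.add_self_eq_zero, zero_add]
    rw [hxx] at heq
    exact no_witness n₁ n₂ (σ u) (σ v) heq h₁ heven hlt hbin
end

section
/- Let n₁, n₂ ≥ 1 be integers with n₁ odd, n₂ > n₁ + 2, and such that C(n₂ − 2, i) is even for every 0 < i < n₂ − 2; set n = n₁ + n₂. Work in A = (ℤ/2)[y₁,y₂] and let I ⊆ A be the ideal generated by y₁^{n₁+1} and y₂·(y₁+y₂)^{n₂}. Then y₁^{n₁}·y₂^{n₂} − y₁·y₂^{n−1} ∈ I (i.e. y₁^{n₁} y₂^{n₂} = y₁ y₂^{n−1} in R = A/I), and y₁·y₂^{n−1} ∉ I (i.e. y₁ y₂^{n−1} ≠ 0 in R); in particular y₂^{n−1} ≠ 0 in R. -/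
open MvPolynomial

private lemma frob_pow {R : Type*} [CommRing R] [CharP R 2] (x y : R) (N : ℕ) (hN : 1 ≤ N)
    (hbin : ∀ i, 0 < i → i < N → Even (N.choose i)) :
    (x + y) ^ N = x ^ N + y ^ N := by
  rw [add_pow, Finset.sum_range_succ]
  have h0 : ∀ k ∈ Finset.range N, k ≠ 0 → x ^ k * y ^ (N - k) * (N.choose k : R) = 0 := by
    intro k hk hk0
    have hkN : k < N := Finset.mem_range.mp hk
    have hz : ((N.choose k : ℕ) : R) = 0 := by
      rw [CharP.cast_eq_zero_iff R 2]
      exact (hbin k (Nat.pos_of_ne_zero hk0) hkN).two_dvd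
    rw [hz, mul_zero]
  rw [Finset.sum_eq_single_of_mem 0 (Finset.mem_range.mpr hN) h0]
  simp [add_comm]

private lemma not_mem_aux {Q : Type*} [CommRing Q] [Algebra (ZMod 2) Q] [Nontrivial Q]
    (a b : ℕ) (q : Q) (hq1 : q ^ (a + 1) = 0) (hq2 : q ^ a ≠ 0) :
    (X 0 : MvPolynomial (Fin 2) (ZMod 2)) ^ a * X 1 ^ b
      ∉ Ideal.span {X 0 ^ (a + 1), X 1 * (X 0 + X 1) ^ b} := by
  intro hu
  rw [Ideal.mem_span_pair] at hu
  obtain ⟨c, d, hcd⟩ := hu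
  set φ : MvPolynomial (Fin 2) (ZMod 2) →ₐ[ZMod 2] Polynomial Q :=
    MvPolynomial.aeval ![Polynomial.C q, Polynomial.X] with hφ
  have hφ0 : φ (X 0) = Polynomial.C q := by simp [hφ]
  have hφ1 : φ (X 1) = Polynomial.X := by simp [hφ]
  have hφg₁ : φ ((X 0) ^ (a + 1)) = 0 := by
    rw [map_pow, hφ0, ← Polynomial.C_pow, hq1, Polynomial.C_0]
  have hφg₂ : φ (X 1 * (X 0 + X 1) ^ b) = Polynomial.X * (Polynomial.X + Polynomial.C q) ^ b := by
    rw [map_mul, map_pow, map_add, hφ0, hφ1, add_comm (Polynomial.C q)]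
  have hdvd : Polynomial.X * (Polynomial.X + Polynomial.C q) ^ b ∣ φ (X 0 ^ a * X 1 ^ b) := by
    refine ⟨φ d, ?_⟩
    have h := congrArg φ hcd
    rw [map_add, map_mul, map_mul, hφg₁, hφg₂, mul_zero, zero_add] at h
    rw [← h]; ring
  have hφu : φ (X 0 ^ a * X 1 ^ b) = Polynomial.C (q ^ a) * Polynomial.X ^ b := by
    rw [map_mul, map_pow, map_pow, hφ0, hφ1, ← Polynomial.C_pow]
  have hne : φ (X 0 ^ a * X 1 ^ b) ≠ 0 := by
    rw [hφu]; intro h; apply hq2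
    have h2 := congrArg (fun p => Polynomial.coeff p b) h
    simp only [Polynomial.coeff_C_mul, Polynomial.coeff_X_pow, if_pos, mul_one,
      Polynomial.coeff_zero] at h2
    exact h2
  have hmono : (Polynomial.X * (Polynomial.X + Polynomial.C q) ^ b).Monic :=
    Polynomial.Monic.mul Polynomial.monic_X (Polynomial.Monic.pow (Polynomial.monic_X_add_C q) b)
  have hdegG : (Polynomial.X * (Polynomial.X + Polynomial.C q) ^ b).natDegree = b + 1 := by
    rw [Polynomial.Monic.natDegree_mul Polynomial.monic_X
        (Polynomial.Monic.pow (Polynomial.monic_X_add_C q) b),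
      Polynomial.natDegree_X, Polynomial.Monic.natDegree_pow (Polynomial.monic_X_add_C q),
      Polynomial.natDegree_X_add_C]
    omega
  obtain ⟨r, hr⟩ := hdvd
  have hr0 : r ≠ 0 := by
    rintro rfl
    rw [mul_zero] at hr
    exact hne hr
  have hdeq := hmono.natDegree_mul' hr0
  have hdegu : (φ (X 0 ^ a * X 1 ^ b)).natDegree ≤ b := by
    rw [hφu]
    exact le_trans (Polynomial.natDegree_C_mul_le _ _) (le_of_eq (Polynomial.natDegree_X_pow b))
  rw [← hr] at hdeq
  omega

set_option maxHeartbeats 1000000 in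
theorem stmt_8 (n₁ n₂ : ℕ) (h₁ : 1 ≤ n₁) (h₂ : 1 ≤ n₂) (hodd : Odd n₁)
    (hlt : n₁ + 2 < n₂)
    (hbin : ∀ i, 0 < i → i < n₂ - 2 → Even ((n₂ - 2).choose i))
    (I : Ideal (MvPolynomial (Fin 2) (ZMod 2)))
    (hI : I = Ideal.span {X 0 ^ (n₁ + 1), X 1 * (X 0 + X 1) ^ n₂}) :
    (X 0 : MvPolynomial (Fin 2) (ZMod 2)) ^ n₁ * X 1 ^ n₂ - X 0 * X 1 ^ (n₁ + n₂ - 1) ∈ I ∧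
    (X 0 : MvPolynomial (Fin 2) (ZMod 2)) * X 1 ^ (n₁ + n₂ - 1) ∉ I ∧
    (X 1 : MvPolynomial (Fin 2) (ZMod 2)) ^ (n₁ + n₂ - 1) ∉ I := by
  obtain ⟨m, rfl⟩ := hodd
  obtain ⟨K, rfl⟩ : ∃ K, n₂ = 2*m+2+K+2 := ⟨n₂ - (2*m+4), by omega⟩
  set P := MvPolynomial (Fin 2) (ZMod 2)
  have hbin' : ∀ i, 0 < i → i < 2*m+2+K → Even ((2*m+2+K).choose i) := by
    simpa using hbin
  have h2zero : (2 : P) = 0 := CharTwo.two_eq_zero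
  have hgen₁ : (X 0 : P) ^ (2*m+1+1) ∈ I := by
    rw [hI]; exact Ideal.subset_span (by simp)
  have hgen₂ : (X 1 : P) * (X 0 + X 1) ^ (2*m+2+K+2) ∈ I := by
    rw [hI]; exact Ideal.subset_span (by simp)
  have hfrob : ((X 0 : P) + X 1) ^ (2*m+2+K) = X 0 ^ (2*m+2+K) + X 1 ^ (2*m+2+K) :=
    frob_pow _ _ _ (by omega) hbin'
  have hsq : ((X 0 : P) + X 1) ^ 2 = X 0 ^ 2 + X 1 ^ 2 := by
    rw [add_sq, h2zero]; ring
  have hg2exp : (X 1 : P) * (X 0 + X 1) ^ (2*m+2+K+2)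
      = X 0 ^ (2*m+2+K+2) * X 1 + X 0 ^ 2 * X 1 ^ (2*m+2+K+1)
        + X 0 ^ (2*m+2+K) * X 1 ^ 3 + X 1 ^ (2*m+2+K+3) := by
    rw [show 2*m+2+K+2 = 2 + (2*m+2+K) from by ring, pow_add, hsq, hfrob]
    ring
  -- the two "garbage" terms lie in I
  have h2a : (X 0 : P) ^ (2*m+2+K+2) * X 1 ∈ I := by
    have h := I.mul_mem_right ((X 0 : P) ^ (K+2) * X 1) hgen₁
    have heq : (X 0 : P) ^ (2*m+1+1) * (X 0 ^ (K+2) * X 1) = X 0 ^ (2*m+2+K+2) * X 1 := by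
      ring
    rwa [heq] at h
  have h3a : (X 0 : P) ^ (2*m+2+K) * X 1 ^ 3 ∈ I := by
    have h := I.mul_mem_right ((X 0 : P) ^ K * X 1 ^ 3) hgen₁
    have heq : (X 0 : P) ^ (2*m+1+1) * (X 0 ^ K * X 1 ^ 3) = X 0 ^ (2*m+2+K) * X 1 ^ 3 := by
      ring
    rwa [heq] at h
  have hkey : (X 1 : P) ^ (2*m+2+K+3) + X 0 ^ 2 * X 1 ^ (2*m+2+K+1) ∈ I := by
    have hsum := add_mem (add_mem hgen₂ h2a) h3a
    have heq : (X 1 : P) ^ (2*m+2+K+3) + X 0 ^ 2 * X 1 ^ (2*m+2+K+1)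
        = X 1 * (X 0 + X 1) ^ (2*m+2+K+2) + X 0 ^ (2*m+2+K+2) * X 1 + X 0 ^ (2*m+2+K) * X 1 ^ 3 := by
      rw [hg2exp]
      linear_combination (-(X 0 : P) ^ (2*m+2+K+2) * X 1 - X 0 ^ (2*m+2+K) * X 1 ^ 3) * h2zero
    rw [heq]; exact hsum
  -- telescoping
  have main : ∀ j i : ℕ,
      (X 0 : P) ^ (2*i+1) * X 1 ^ (2*m+2+K+2+2*j) - X 0 ^ (2*i+2*j+1) * X 1 ^ (2*m+2+K+2) ∈ I := by
    intro j
    induction j with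
    | zero =>
      intro i
      have h : (X 0 : P) ^ (2*i+1) * X 1 ^ (2*m+2+K+2+2*0)
          - X 0 ^ (2*i+2*0+1) * X 1 ^ (2*m+2+K+2) = 0 := by ring
      rw [h]; exact I.zero_mem
    | succ j ih =>
      intro i
      have H := ih (i+1)
      have hE : (X 0 : P) ^ (2*i+1) * X 1 ^ (2*j+1)
          * ((X 1) ^ (2*m+2+K+3) + X 0 ^ 2 * X 1 ^ (2*m+2+K+1)) ∈ I := I.mul_mem_left _ hkey
      have heq : (X 0 : P) ^ (2*i+1) * X 1 ^ (2*m+2+K+2+2*(j+1)) - X 0 ^ (2*i+2*(j+1)+1) * X 1 ^ (2*m+2+K+2)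
          = (X 0 : P) ^ (2*i+1) * X 1 ^ (2*j+1) * ((X 1) ^ (2*m+2+K+3) + X 0 ^ 2 * X 1 ^ (2*m+2+K+1))
            + ((X 0 : P) ^ (2*(i+1)+1) * X 1 ^ (2*m+2+K+2+2*j) - X 0 ^ (2*(i+1)+2*j+1) * X 1 ^ (2*m+2+K+2)) := by
        linear_combination (-(X 0 : P) ^ (2*i+3) * X 1 ^ (2*m+2+K+2+2*j)) * h2zero
      rw [heq]; exact add_mem hE H
  have hE1 : 2*m+1+(2*m+2+K+2)-1 = 2*m+2+K+2+2*m := by omega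
  have hpart1 : (X 0 : P) ^ (2*m+1) * X 1 ^ (2*m+2+K+2) - X 0 * X 1 ^ (2*m+1+(2*m+2+K+2)-1) ∈ I := by
    rw [hE1]
    have h := I.neg_mem (main m 0)
    have heq : (X 0 : P) ^ (2*m+1) * X 1 ^ (2*m+2+K+2) - X 0 * X 1 ^ (2*m+2+K+2+2*m)
        = -((X 0 : P) ^ (2*0+1) * X 1 ^ (2*m+2+K+2+2*m) - X 0 ^ (2*0+2*m+1) * X 1 ^ (2*m+2+K+2)) := by
      ring
    rwa [heq]
  have hpart2 : (X 0 : P) * X 1 ^ (2*m+1+(2*m+2+K+2)-1) ∉ I := by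
    intro hmem
    have hu : (X 0 : P) ^ (2*m+1) * X 1 ^ (2*m+2+K+2) ∈ I := by
      have h := add_mem hpart1 hmem
      rwa [sub_add_cancel] at h
    rw [hI] at hu
    -- the target quotient ring
    haveI hnt : Nontrivial (Polynomial (ZMod 2) ⧸
        Ideal.span {(Polynomial.X : Polynomial (ZMod 2)) ^ (2*m+1+1)}) := by
      refine Ideal.Quotient.nontrivial_iff.mpr ?_
      intro h
      have h1 : (1 : Polynomial (ZMod 2)) ∈
          Ideal.span {(Polynomial.X : Polynomial (ZMod 2)) ^ (2*m+1+1)} := h ▸ Submodule.mem_top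
      rw [Ideal.mem_span_singleton] at h1
      have hd := Polynomial.natDegree_le_of_dvd h1 one_ne_zero
      simp [Polynomial.natDegree_X_pow, Polynomial.natDegree_one] at hd
    set q : Polynomial (ZMod 2) ⧸
        Ideal.span {(Polynomial.X : Polynomial (ZMod 2)) ^ (2*m+1+1)} :=
      Ideal.Quotient.mk _ Polynomial.X with hqdef
    have hq1 : q ^ (2*m+1+1) = 0 := by
      rw [hqdef, ← map_pow, Ideal.Quotient.eq_zero_iff_mem]
      exact Ideal.subset_span (by simp)
    have hq2 : q ^ (2*m+1) ≠ 0 := by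
      intro h
      rw [hqdef, ← map_pow, Ideal.Quotient.eq_zero_iff_mem, Ideal.mem_span_singleton] at h
      have hd := Polynomial.natDegree_le_of_dvd h (pow_ne_zero _ Polynomial.X_ne_zero)
      rw [Polynomial.natDegree_X_pow, Polynomial.natDegree_X_pow] at hd
      omega
    exact not_mem_aux (2*m+1) (2*m+2+K+2) q hq1 hq2 hu
  refine ⟨hpart1, hpart2, ?_⟩
  intro h
  exact hpart2 (I.mul_mem_left (X 0) h)
end

section
/- Let n₁, n₂ ≥ 1 be integers, n = n₁ + n₂, and let R = (ℤ/2)[y₁,y₂]/I where I is the ideal generated by y₁^{n₁+1} and y₂·(y₁+y₂)^{n₂}. Suppose y₁·y₂^{n−1} ∉ I, and let r be an integer with n ≤ 2^{r} − 1 ≤ 2n − 2. Then in the tensor product R ⊗_{ℤ/2} R one has (1 ⊗ ȳ₂ + ȳ₂ ⊗ 1)^{2^{r}−1} ≠ 0, where ȳ₂ is the image of y₂ in R. -/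
open MvPolynomial TensorProduct

set_option maxHeartbeats 1000000
set_option synthInstance.maxHeartbeats 1000000

attribute [local instance] MvPolynomial.gradedAlgebra

lemma choose_two_pow_sub_one_odd : ∀ r k : ℕ, k ≤ 2 ^ r - 1 →
    Nat.choose (2 ^ r - 1) k % 2 = 1 := by
  intro r
  induction r with
  | zero => intro k hk; interval_cases k <;> simp
  | succ r ih =>
    intro k hk
    have h1 : 1 ≤ (2:ℕ) ^ r := Nat.one_le_two_pow
    have hmod : ((2:ℕ) ^ (r+1) - 1) % 2 = 1 := by
      have : (2:ℕ) ^ (r+1) = 2 * 2 ^ r := by ring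
      omega
    have hdiv : ((2:ℕ) ^ (r+1) - 1) / 2 = 2 ^ r - 1 := by
      have : (2:ℕ) ^ (r+1) = 2 * 2 ^ r := by ring
      omega
    have key := @Choose.choose_modEq_choose_mod_mul_choose_div_nat (2 ^ (r+1) - 1) k 2
      ⟨Nat.prime_two⟩
    rw [Nat.ModEq] at key
    rw [key, hmod, hdiv]
    have hk2 : k / 2 ≤ 2 ^ r - 1 := by
      have : (2:ℕ) ^ (r+1) = 2 * 2 ^ r := by ring
      omega
    have hchoose1 : Nat.choose 1 (k % 2) = 1 := by
      have : k % 2 = 0 ∨ k % 2 = 1 := by omega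
      rcases this with h | h <;> simp [h]
    rw [hchoose1, one_mul]
    exact ih _ hk2

theorem stmt_9 (n₁ n₂ r : ℕ) (h₁ : 1 ≤ n₁) (h₂ : 1 ≤ n₂)
    (I : Ideal (MvPolynomial (Fin 2) (ZMod 2)))
    (hI : I = Ideal.span {X 0 ^ (n₁ + 1), X 1 * (X 0 + X 1) ^ n₂})
    (hy : (X 0 : MvPolynomial (Fin 2) (ZMod 2)) * X 1 ^ (n₁ + n₂ - 1) ∉ I)
    (hr : n₁ + n₂ ≤ 2 ^ r - 1) (hr' : 2 ^ r - 1 ≤ 2 * (n₁ + n₂) - 2) :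
    ((1 : MvPolynomial (Fin 2) (ZMod 2) ⧸ I) ⊗ₜ[ZMod 2] (Ideal.Quotient.mk I (X 1))
        + (Ideal.Quotient.mk I (X 1)) ⊗ₜ[ZMod 2] 1) ^ (2 ^ r - 1) ≠ 0 := by
  classical
  set A := MvPolynomial (Fin 2) (ZMod 2)
  set n : ℕ := n₁ + n₂ with hn
  set m : ℕ := 2 ^ r - 1 with hm
  set b : ℕ := n - 1 with hb
  set a : ℕ := m - b with ha
  have h2r : 2 ^ r ≥ n + 1 := by
    have : 1 ≤ (2:ℕ) ^ r := Nat.one_le_two_pow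
    omega
  have hab : a + b = m := by omega
  have haleb : a ≤ b := by omega
  have hbm : b ≤ m := by omega
  -- I is homogeneous
  have hIh : I.IsHomogeneous (homogeneousSubmodule (Fin 2) (ZMod 2)) := by
    rw [hI]
    apply Ideal.homogeneous_span
    rintro x hx
    simp only [Set.mem_insert_iff, Set.mem_singleton_iff] at hx
    rcases hx with rfl | rfl
    · exact ⟨n₁ + 1, (mem_homogeneousSubmodule _ _).2 (isHomogeneous_X_pow 0 (n₁ + 1))⟩
    · refine ⟨1 + 1 * n₂, (mem_homogeneousSubmodule _ _).2 ?_⟩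
      exact (isHomogeneous_X _ 1).mul (((isHomogeneous_X _ 0).add (isHomogeneous_X _ 1)).pow n₂)
  have hcomp : ∀ (d : ℕ) (p : A), p ∈ I → homogeneousComponent d p ∈ I := by
    intro d p hp
    have := hIh d hp
    rwa [show ((DirectSum.decompose (homogeneousSubmodule (Fin 2) (ZMod 2)) p d : _) : A)
        = homogeneousComponent d p from decomposition.decompose'_apply p d] at this
  -- projection maps on the quotient
  let π : ℕ → (A ⧸ I) →ₗ[ZMod 2] (A ⧸ I) := fun d =>
    (Submodule.liftQ (Submodule.restrictScalars (ZMod 2) I)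
      ((Ideal.Quotient.mkₐ (ZMod 2) I).toLinearMap ∘ₗ (homogeneousComponent d))
      (fun p hp => by
        simp only [LinearMap.mem_ker, LinearMap.comp_apply, AlgHom.toLinearMap_apply,
          Ideal.Quotient.mkₐ_eq_mk]
        exact Ideal.Quotient.eq_zero_iff_mem.2 (hcomp d p hp))) ∘ₗ
    (Submodule.Quotient.restrictScalarsEquiv (ZMod 2) (I : Submodule A A)).symm.toLinearMap
  have πmk : ∀ (d : ℕ) (p : A), π d (Ideal.Quotient.mk I p)
      = Ideal.Quotient.mk I (homogeneousComponent d p) := by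
    intro d p
    show π d (Submodule.Quotient.mk p) = _
    simp only [π, LinearMap.comp_apply, LinearEquiv.coe_coe,
      Submodule.Quotient.restrictScalarsEquiv_symm_mk, Submodule.liftQ_apply,
      AlgHom.toLinearMap_apply, Ideal.Quotient.mkₐ_eq_mk]
  have πpow : ∀ (d k : ℕ), π d ((Ideal.Quotient.mk I (X 1)) ^ k)
      = if d = k then (Ideal.Quotient.mk I (X 1)) ^ k else 0 := by
    intro d k
    rw [← map_pow, πmk]
    rw [homogeneousComponent_of_mem ((mem_homogeneousSubmodule _ _).2 (isHomogeneous_X_pow 1 k))]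
    split_ifs with h
    · rw [map_pow]
    · simp
  set y : A ⧸ I := Ideal.Quotient.mk I (X 1) with hy1
  -- y^b ≠ 0 and y^a ≠ 0
  have hyb : y ^ b ≠ 0 := by
    intro h
    rw [← map_pow, Ideal.Quotient.eq_zero_iff_mem] at h
    exact hy (I.mul_mem_left (X 0) h)
  have hya : y ^ a ≠ 0 := by
    intro h
    rw [← map_pow, Ideal.Quotient.eq_zero_iff_mem] at h
    apply hyb
    rw [← map_pow, Ideal.Quotient.eq_zero_iff_mem, show b = a + (b - a) by omega, pow_add]
    exact I.mul_mem_right _ h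
  -- the tensor projection
  set L := TensorProduct.map (π a) (π b) with hL
  intro hzero
  -- compute L of the expansion
  have key : L (((1 : A ⧸ I) ⊗ₜ[ZMod 2] y + y ⊗ₜ[ZMod 2] 1) ^ m)
      = (y ^ a) ⊗ₜ[ZMod 2] (y ^ b) := by
    rw [add_pow ((1 : A ⧸ I) ⊗ₜ[ZMod 2] y) (y ⊗ₜ[ZMod 2] 1) m]
    rw [map_sum]
    rw [Finset.sum_eq_single b]
    · have h1 : ((1 : A ⧸ I) ⊗ₜ[ZMod 2] y) ^ b = (1 : A ⧸ I) ⊗ₜ[ZMod 2] (y ^ b) := by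
        rw [Algebra.TensorProduct.tmul_pow, one_pow]
      have h2 : (y ⊗ₜ[ZMod 2] (1 : A ⧸ I)) ^ (m - b) = (y ^ a) ⊗ₜ[ZMod 2] (1 : A ⧸ I) := by
        rw [Algebra.TensorProduct.tmul_pow, one_pow, show m - b = a by omega]
      rw [h1, h2, ← nsmul_eq_mul', map_nsmul, Algebra.TensorProduct.tmul_mul_tmul, one_mul,
        mul_one, hL, TensorProduct.map_tmul, πpow, πpow, if_pos rfl, if_pos rfl,
        ← Nat.cast_smul_eq_nsmul (ZMod 2) (m.choose b) ((y ^ a) ⊗ₜ[ZMod 2] (y ^ b)), ← ZMod.natCast_mod,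
        choose_two_pow_sub_one_odd r b hbm, Nat.cast_one, one_smul]
    · intro k hk hkb
      have h1 : ((1 : A ⧸ I) ⊗ₜ[ZMod 2] y) ^ k = (1 : A ⧸ I) ⊗ₜ[ZMod 2] (y ^ k) := by
        rw [Algebra.TensorProduct.tmul_pow, one_pow]
      have h2 : (y ⊗ₜ[ZMod 2] (1 : A ⧸ I)) ^ (m - k) = (y ^ (m - k)) ⊗ₜ[ZMod 2] (1 : A ⧸ I) := by
        rw [Algebra.TensorProduct.tmul_pow, one_pow]
      rw [h1, h2, ← nsmul_eq_mul', map_nsmul, Algebra.TensorProduct.tmul_mul_tmul, one_mul,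
        mul_one, hL, TensorProduct.map_tmul, πpow b k, if_neg (by exact fun h => hkb h.symm),
        TensorProduct.tmul_zero, smul_zero]
    · intro hb'
      exact absurd (Finset.mem_range.2 (by omega)) hb'
  rw [hzero, map_zero] at key
  -- derive contradiction: y^a ⊗ y^b ≠ 0
  obtain ⟨f, hf⟩ : ∃ f : Module.Dual (ZMod 2) (A ⧸ I), f (y ^ a) ≠ 0 := by
    by_contra h
    push_neg at h
    exact hya ((Module.forall_dual_apply_eq_zero_iff (ZMod 2) _).1 h)
  obtain ⟨g, hg⟩ : ∃ g : Module.Dual (ZMod 2) (A ⧸ I), g (y ^ b) ≠ 0 := by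
    by_contra h
    push_neg at h
    exact hyb ((Module.forall_dual_apply_eq_zero_iff (ZMod 2) _).1 h)
  have : (TensorProduct.lid (ZMod 2) (ZMod 2)).toLinearMap
      ((TensorProduct.map f g) ((y ^ a) ⊗ₜ[ZMod 2] (y ^ b))) = f (y ^ a) * g (y ^ b) := by
    simp [TensorProduct.map_tmul, smul_eq_mul]
  rw [← key] at this
  simp only [map_zero] at this
  exact mul_ne_zero hf hg this.symm
end

section
/- Let m ≥ 1 and let n₁,…,n_m ≥ 1 and s₁,…,s_m be integers with n_j ≤ 2^{s_j} − 1 < 2n_j for every j. Let R = (ℤ/2)[y₁,…,y_m]/⟨y₁^{n₁+1},…,y_m^{n_m+1}⟩, and write ȳ_j for the image of y_j in R. Then in the tensor product R ⊗_{ℤ/2} R one has ∏_{j=1}^{m} (1 ⊗ ȳ_j + ȳ_j ⊗ 1)^{2^{s_j}−1} ≠ 0. -/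
open MvPolynomial TensorProduct Finset

lemma aux_sq {A : Type*} [CommRing A] (h2 : (2:A) = 0) (a b : A) (t : ℕ) :
    (a + b) ^ (2 ^ t) = a ^ (2 ^ t) + b ^ (2 ^ t) := by
  have sq : ∀ x y : A, (x + y) ^ 2 = x ^ 2 + y ^ 2 := by
    intro x y
    have h : (x + y) ^ 2 = x ^ 2 + 2 * (x * y) + y ^ 2 := by ring
    rw [h, h2]; ring
  induction t with
  | zero => simp
  | succ t ih =>
    rw [pow_succ, pow_mul, pow_mul, pow_mul, ih, sq]

lemma aux_sum {A : Type*} [CommRing A] (h2 : (2:A) = 0) (a b : A) (t : ℕ) :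
    (a + b) ^ (2 ^ t - 1) = ∑ k ∈ range (2 ^ t), a ^ k * b ^ (2 ^ t - 1 - k) := by
  induction t with
  | zero => simp
  | succ t ih =>
    have h1 : (1:ℕ) ≤ 2 ^ t := Nat.one_le_two_pow
    have hsplit : 2 ^ (t+1) - 1 = 2 ^ t + (2 ^ t - 1) := by
      rw [pow_succ]; omega
    have h2t : 2 ^ (t+1) = 2 ^ t + 2 ^ t := by rw [pow_succ]; omega
    rw [hsplit, pow_add, aux_sq h2, ih, add_mul, mul_sum, mul_sum, h2t,
      Finset.sum_range_add,
      add_comm (∑ x ∈ range (2^t), a ^ x * b ^ (2^t + (2^t - 1) - x))]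
    congr 1
    · refine Finset.sum_congr rfl fun k hk => ?_
      rw [← mul_assoc, ← pow_add]
      congr 2
      omega
    · refine Finset.sum_congr rfl fun k hk => ?_
      rw [mem_range] at hk
      rw [mul_comm (b ^ (2^t)), mul_assoc, ← pow_add]
      congr 2
      omega

lemma aux_monprod {σ τ : Type*} (t : Finset τ) (e : τ → (σ →₀ ℕ)) :
    ∏ j ∈ t, monomial (e j) (1 : ZMod 2) = monomial (∑ j ∈ t, e j) 1 := by
  induction t using Finset.cons_induction with
  | empty => simp
  | cons a t ha ih => rw [Finset.prod_cons, Finset.sum_cons, ih, monomial_mul, one_mul]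

lemma aux_apply_inl (m : ℕ) (k g : Fin m → ℕ) (j₀ : Fin m) :
    ((∑ j : Fin m, (Finsupp.single (Sum.inl j : Fin m ⊕ Fin m) (k j)
      + Finsupp.single (Sum.inr j) (g j)) : (Fin m ⊕ Fin m) →₀ ℕ)) (Sum.inl j₀) = k j₀ := by
  rw [Finsupp.finset_sum_apply]
  simp [Finsupp.single_apply, Finset.sum_ite_eq']

lemma aux_apply_inr (m : ℕ) (k g : Fin m → ℕ) (j₀ : Fin m) :
    ((∑ j : Fin m, (Finsupp.single (Sum.inl j : Fin m ⊕ Fin m) (k j)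
      + Finsupp.single (Sum.inr j) (g j)) : (Fin m ⊕ Fin m) →₀ ℕ)) (Sum.inr j₀) = g j₀ := by
  rw [Finsupp.finset_sum_apply]
  simp [Finsupp.single_apply, Finset.sum_ite_eq']

set_option maxHeartbeats 2000000 in
set_option synthInstance.maxHeartbeats 400000 in
theorem stmt_10 (m : ℕ) (hm : 1 ≤ m) (n s : Fin m → ℕ)
    (hn : ∀ j, 1 ≤ n j)
    (hs : ∀ j, n j ≤ 2 ^ s j - 1) (hs' : ∀ j, 2 ^ s j - 1 < 2 * n j)
    (I : Ideal (MvPolynomial (Fin m) (ZMod 2)))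
    (hI : I = Ideal.span { p | ∃ j : Fin m, p = X j ^ (n j + 1) }) :
    (∏ j : Fin m,
      ((1 : MvPolynomial (Fin m) (ZMod 2) ⧸ I) ⊗ₜ[ZMod 2] (Ideal.Quotient.mk I (X j))
        + (Ideal.Quotient.mk I (X j)) ⊗ₜ[ZMod 2] 1) ^ (2 ^ s j - 1)) ≠ 0 := by
  classical
  have h2P : (2 : MvPolynomial (Fin m ⊕ Fin m) (ZMod 2)) = 0 := by
    exact_mod_cast CharP.cast_eq_zero (MvPolynomial (Fin m ⊕ Fin m) (ZMod 2)) 2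
  set N : Fin m → ℕ := fun j => 2 ^ s j - 1 with hN
  set nn : Fin m ⊕ Fin m → ℕ := Sum.elim (fun j => n j + 1) (fun j => n j + 1) with hnn
  set Sset : Set ((Fin m ⊕ Fin m) →₀ ℕ) := Set.range fun i => Finsupp.single i (nn i)
    with hSset
  set J : Ideal (MvPolynomial (Fin m ⊕ Fin m) (ZMod 2)) :=
    Ideal.span ((fun e => monomial e (1 : ZMod 2)) '' Sset) with hJ
  have hgen : ∀ i : Fin m ⊕ Fin m,
      (X i ^ (nn i) : MvPolynomial (Fin m ⊕ Fin m) (ZMod 2)) ∈ J := by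
    intro i
    rw [X_pow_eq_monomial]
    exact Ideal.subset_span ⟨Finsupp.single i (nn i), ⟨i, rfl⟩, rfl⟩
  have hker : ∀ (v : Fin m → Fin m ⊕ Fin m), (∀ j, nn (v j) = n j + 1) →
      ∀ a ∈ I, ((Ideal.Quotient.mkₐ (ZMod 2) J).comp
        (aeval fun j => (X (v j) : MvPolynomial (Fin m ⊕ Fin m) (ZMod 2)))) a = 0 := by
    intro v hv a ha
    have hle : I ≤ RingHom.ker ((Ideal.Quotient.mkₐ (ZMod 2) J).comp
        (aeval fun j => (X (v j) : MvPolynomial (Fin m ⊕ Fin m) (ZMod 2)))).toRingHom := by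
      rw [hI, Ideal.span_le]
      rintro p ⟨j, rfl⟩
      simp only [SetLike.mem_coe, RingHom.mem_ker, AlgHom.toRingHom_eq_coe,
        RingHom.coe_coe, AlgHom.comp_apply, map_pow, aeval_X,
        Ideal.Quotient.mkₐ_eq_mk]
      rw [← map_pow, Ideal.Quotient.eq_zero_iff_mem, ← hv j]
      exact hgen (v j)
    exact hle ha
  set f1 := Ideal.Quotient.liftₐ I ((Ideal.Quotient.mkₐ (ZMod 2) J).comp
      (aeval fun j => (X (Sum.inl j) : MvPolynomial (Fin m ⊕ Fin m) (ZMod 2))))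
      (hker _ (fun j => rfl)) with hf1
  set f2 := Ideal.Quotient.liftₐ I ((Ideal.Quotient.mkₐ (ZMod 2) J).comp
      (aeval fun j => (X (Sum.inr j) : MvPolynomial (Fin m ⊕ Fin m) (ZMod 2))))
      (hker _ (fun j => rfl)) with hf2
  set φ := Algebra.TensorProduct.productMap f1 f2 with hφ
  set q : MvPolynomial (Fin m ⊕ Fin m) (ZMod 2) :=
    ∏ j : Fin m, (X (Sum.inr j) + X (Sum.inl j)) ^ (N j) with hq
  have himg : φ (∏ j : Fin m,
      ((1 : MvPolynomial (Fin m) (ZMod 2) ⧸ I) ⊗ₜ[ZMod 2] (Ideal.Quotient.mk I (X j))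
        + (Ideal.Quotient.mk I (X j)) ⊗ₜ[ZMod 2] 1) ^ (2 ^ s j - 1))
      = Ideal.Quotient.mk J q := by
    rw [hq, map_prod, map_prod]
    refine Finset.prod_congr rfl fun j _ => ?_
    rw [map_pow, map_pow]
    congr 1
    rw [map_add, Algebra.TensorProduct.productMap_apply_tmul,
      Algebra.TensorProduct.productMap_apply_tmul, map_one, map_one, one_mul, mul_one,
      hf1, hf2, Ideal.Quotient.liftₐ_apply, Ideal.Quotient.liftₐ_apply]
    simp
  -- the witness monomial
  set μ : (Fin m ⊕ Fin m) →₀ ℕ :=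
    ∑ j : Fin m, (Finsupp.single (Sum.inl j : Fin m ⊕ Fin m) (n j)
      + Finsupp.single (Sum.inr j) (N j - n j)) with hμ
  have hqexp : q = ∑ k ∈ Fintype.piFinset (fun j : Fin m => range (2 ^ s j)),
      monomial (∑ j : Fin m, (Finsupp.single (Sum.inl j : Fin m ⊕ Fin m) (k j)
        + Finsupp.single (Sum.inr j) (N j - k j))) (1 : ZMod 2) := by
    rw [hq]
    have step1 : ∀ j : Fin m, ((X (Sum.inr j) + X (Sum.inl j))
        : MvPolynomial (Fin m ⊕ Fin m) (ZMod 2)) ^ (N j)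
        = ∑ k ∈ range (2 ^ s j), X (Sum.inl j) ^ k * X (Sum.inr j) ^ (N j - k) := by
      intro j
      rw [add_comm, hN]
      exact aux_sum h2P _ _ (s j)
    calc (∏ j : Fin m, ((X (Sum.inr j) + X (Sum.inl j))
          : MvPolynomial (Fin m ⊕ Fin m) (ZMod 2)) ^ (N j))
        = ∏ j : Fin m, ∑ k ∈ range (2 ^ s j),
            X (Sum.inl j) ^ k * X (Sum.inr j) ^ (N j - k) := by
          exact Finset.prod_congr rfl fun j _ => step1 j
      _ = ∑ k ∈ Fintype.piFinset (fun j : Fin m => range (2 ^ s j)),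
            ∏ j : Fin m, X (Sum.inl j) ^ (k j) * X (Sum.inr j) ^ (N j - k j) :=
          Finset.prod_univ_sum _ _
      _ = _ := by
          refine Finset.sum_congr rfl fun k _ => ?_
          rw [← aux_monprod]
          refine Finset.prod_congr rfl fun j _ => ?_
          rw [X_pow_eq_monomial, X_pow_eq_monomial, monomial_mul, one_mul]
  have hnmem : (fun j : Fin m => n j) ∈ Fintype.piFinset (fun j : Fin m => range (2 ^ s j)) := by
    rw [Fintype.mem_piFinset]
    intro j
    rw [mem_range]
    have := hs j
    have h1 : (1:ℕ) ≤ 2 ^ s j := Nat.one_le_two_pow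
    omega
  have hcoeff : coeff μ q = 1 := by
    rw [hqexp, coeff_sum]
    simp only [coeff_monomial]
    rw [Finset.sum_eq_single_of_mem (fun j : Fin m => n j) hnmem]
    · rw [if_pos]
      rw [hμ]
    · intro k _ hkn
      rw [if_neg]
      intro heq
      apply hkn
      funext j
      rw [hμ] at heq
      have happ := DFunLike.congr_fun heq (Sum.inl j)
      rw [aux_apply_inl, aux_apply_inl] at happ
      exact happ
  have hμsupp : μ ∈ q.support := by
    rw [mem_support_iff, hcoeff]
    exact one_ne_zero
  intro hzero
  have hq0 : Ideal.Quotient.mk J q = 0 := by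
    rw [← himg, hzero, map_zero]
  have hqJ : q ∈ J := (Ideal.Quotient.eq_zero_iff_mem).mp hq0
  rw [hJ, mem_ideal_span_monomial_image] at hqJ
  obtain ⟨e, ⟨i, rfl⟩, hle⟩ := hqJ μ hμsupp
  rw [Finsupp.single_le_iff] at hle
  cases i with
  | inl j =>
    rw [hμ, aux_apply_inl] at hle
    simp only [hnn, Sum.elim_inl] at hle
    omega
  | inr j =>
    rw [hμ, aux_apply_inr] at hle
    simp only [hnn, Sum.elim_inr] at hle
    have := hs' j
    simp only [hN] at hle
    omega
end

section
/- Let n ≥ 3. Work in the polynomial ring A = (ℤ/2)[y₁,…,y_n] and let I ⊆ A be the ideal generated by y₁² and by y_j·(y_{j−1} + y_j) for j = 2,…,n. Then y₁·y₂·⋯·y_n − y_n^{n} ∈ I (i.e. y₁ y₂ ⋯ y_n = y_n^{n} in R = A/I), and y_n^{n} ∉ I (i.e. y_n^{n} ≠ 0 in R). -/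
open MvPolynomial
open Finset


noncomputable section BottAux

variable (n : ℕ)

/-- suffix sum of an exponent vector from position `k` on. -/
def bsuf (k : Fin n) (e : Fin n →₀ ℕ) : ℕ :=
  ∑ i ∈ Finset.univ.filter (fun i => k ≤ i), e i

def bOK (e : Fin n →₀ ℕ) : Prop :=
  (∑ i, e i) = n ∧ ∀ k : Fin n, n - (k : ℕ) ≤ bsuf n k e

open Classical in
def bc (e : Fin n →₀ ℕ) : ZMod 2 := if bOK n e then 1 else 0

def bphi (p : MvPolynomial (Fin n) (ZMod 2)) : ZMod 2 :=
  ∑ v ∈ p.support, coeff v p * bc n v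

lemma bphi_eq_sum_of_subset {p : MvPolynomial (Fin n) (ZMod 2)} {s : Finset (Fin n →₀ ℕ)}
    (hs : p.support ⊆ s) : bphi n p = ∑ v ∈ s, coeff v p * bc n v := by
  refine Finset.sum_subset hs (fun v _ hv => ?_)
  rw [MvPolynomial.notMem_support_iff.mp hv, zero_mul]

lemma bphi_add (p q : MvPolynomial (Fin n) (ZMod 2)) :
    bphi n (p + q) = bphi n p + bphi n q := by
  rw [bphi_eq_sum_of_subset n (s := p.support ∪ q.support) MvPolynomial.support_add,
    bphi_eq_sum_of_subset n (s := p.support ∪ q.support) (Finset.subset_union_left),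
    bphi_eq_sum_of_subset n (s := p.support ∪ q.support) (Finset.subset_union_right),
    ← Finset.sum_add_distrib]
  refine Finset.sum_congr rfl fun v _ => ?_
  rw [coeff_add, add_mul]

lemma bphi_monomial (v : Fin n →₀ ℕ) (c : ZMod 2) :
    bphi n (monomial v c) = c * bc n v := by
  rw [bphi, MvPolynomial.support_monomial]
  split
  · simp [*]
  · rw [Finset.sum_singleton, coeff_monomial, if_pos rfl]

lemma bsuf_add_single (k a : Fin n) (e : Fin n →₀ ℕ) (c : ℕ) :
    bsuf n k (e + Finsupp.single a c) = bsuf n k e + if k ≤ a then c else 0 := by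
  unfold bsuf
  have : ∀ i ∈ Finset.univ.filter (fun i => k ≤ i),
      (e + Finsupp.single a c) i = e i + (if a = i then c else 0) := by
    intro i _
    rw [Finsupp.add_apply, Finsupp.single_apply]
  rw [Finset.sum_congr rfl this, Finset.sum_add_distrib, Finset.sum_ite_eq]
  congr 1
  simp [Finset.mem_filter]

lemma btot_add_single (a : Fin n) (e : Fin n →₀ ℕ) (c : ℕ) :
    (∑ i, (e + Finsupp.single a c) i) = (∑ i, e i) + c := by
  have : ∀ i ∈ Finset.univ,
      (e + Finsupp.single a c) i = e i + (if a = i then c else 0) := by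
    intro i _
    rw [Finsupp.add_apply, Finsupp.single_apply]
  rw [Finset.sum_congr rfl this, Finset.sum_add_distrib, Finset.sum_ite_eq]
  simp

lemma bsuf_antitone (k k' : Fin n) (h : k ≤ k') (e : Fin n →₀ ℕ) :
    bsuf n k' e ≤ bsuf n k e := by
  refine Finset.sum_le_sum_of_subset ?_
  intro i hi
  simp only [Finset.mem_filter, Finset.mem_univ, true_and] at *
  exact le_trans h hi

end BottAux

section Quot

variable {S : Type*} [CommRing S]

lemma bstep (x : ℕ → S) (n : ℕ)
    (hrel : ∀ i, 0 < i → i < n → x i * x i = x (i-1) * x i) :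
    ∀ d a, 1 ≤ a → a + d ≤ n - 1 → n ≥ 1 →
      (∏ i ∈ Finset.Icc a (a+d), x i) * x (a+d) = ∏ i ∈ Finset.Icc (a-1) (a+d), x i := by
  intro d
  induction d with
  | zero =>
    intro a h1 h2 h3
    simp only [Nat.add_zero]
    rw [Finset.Icc_self, Finset.prod_singleton, hrel a h1 (by omega)]
    have h4 : ∏ i ∈ Finset.Icc (a-1) a, x i = ∏ i ∈ Finset.Icc (a-1) ((a-1)+1), x i := by
      rw [show (a-1)+1 = a by omega]
    rw [h4, Finset.prod_Icc_succ_top (by omega) x, Finset.Icc_self, Finset.prod_singleton,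
      show (a-1)+1 = a by omega]
  | succ d ih =>
    intro a h1 h2 h3
    rw [show a + (d+1) = (a+d)+1 from rfl, Finset.prod_Icc_succ_top (by omega) x,
      mul_assoc, hrel (a+d+1) (by omega) (by omega), show a+d+1-1 = a+d from rfl,
      ← mul_assoc, ih a h1 (by omega) h3, ← Finset.prod_Icc_succ_top (by omega) x]

lemma bmain (x : ℕ → S) (n : ℕ) (hn1 : 1 ≤ n)
    (hrel : ∀ i, 0 < i → i < n → x i * x i = x (i-1) * x i) :
    ∀ m, m ≤ n-1 → x (n-1) ^ (m+1) = ∏ i ∈ Finset.Icc (n-1-m) (n-1), x i := by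
  intro m
  induction m with
  | zero => intro _; rw [pow_one, Nat.sub_zero, Finset.Icc_self, Finset.prod_singleton]
  | succ m ih =>
    intro hm
    rw [pow_succ, ih (by omega)]
    have ha : (n-1-m) + m = n-1 := by omega
    calc (∏ i ∈ Finset.Icc (n-1-m) (n-1), x i) * x (n-1)
        = (∏ i ∈ Finset.Icc (n-1-m) ((n-1-m)+m), x i) * x ((n-1-m)+m) := by rw [ha]
      _ = ∏ i ∈ Finset.Icc ((n-1-m)-1) ((n-1-m)+m), x i :=
          bstep x n hrel m (n-1-m) (by omega) (by omega) (by omega)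
      _ = ∏ i ∈ Finset.Icc (n-1-(m+1)) (n-1), x i := by rw [show (n-1-m)-1 = n-1-(m+1) by omega, ha]

end Quot

section BottMain

variable {n : ℕ} (hn : n ≥ 3)

lemma bc_top : bc n (Finsupp.single (⟨n-1, by omega⟩ : Fin n) n) = 1 := by
  rw [bc, if_pos]
  constructor
  · have : ∀ i ∈ (Finset.univ : Finset (Fin n)),
        (Finsupp.single (⟨n-1, by omega⟩ : Fin n) n) i
          = if (⟨n-1, by omega⟩ : Fin n) = i then n else 0 := fun i _ => Finsupp.single_apply
    rw [Finset.sum_congr rfl this, Finset.sum_ite_eq]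
    simp
  · intro k
    have hk : k ≤ (⟨n-1, by omega⟩ : Fin n) := by
      rw [Fin.le_def]
      have := k.isLt
      simp only
      omega
    have : bsuf n k (Finsupp.single (⟨n-1, by omega⟩ : Fin n) n)
        = bsuf n k 0 + n := by
      have h0 : (Finsupp.single (⟨n-1, by omega⟩ : Fin n) n)
          = 0 + Finsupp.single (⟨n-1, by omega⟩ : Fin n) n := by rw [zero_add]
      rw [h0, bsuf_add_single, if_pos hk]
    rw [this]
    omega

lemma bc_sq_zero (e : Fin n →₀ ℕ) :
    bc n (e + Finsupp.single (⟨0, by omega⟩ : Fin n) 2) = 0 := by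
  rw [bc, if_neg]
  rintro ⟨htot, hall⟩
  set j0 : Fin n := ⟨0, by omega⟩
  set k1 : Fin n := ⟨1, by omega⟩
  set e' := e + Finsupp.single j0 2 with he'
  have h1 : n - 1 ≤ bsuf n k1 e' := by
    have := hall k1
    simpa using this
  -- split total sum
  have hsplit : (∑ i, e' i)
      = bsuf n k1 e' + ∑ i ∈ Finset.univ.filter (fun i => ¬ k1 ≤ i), e' i := by
    rw [bsuf, Finset.sum_filter_add_sum_filter_not]
  have hmem : j0 ∈ Finset.univ.filter (fun i => ¬ k1 ≤ i) := by
    simp only [Finset.mem_filter, Finset.mem_univ, true_and, Fin.le_def]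
    exact (by decide : ¬ (1 ≤ 0))
  have h2 : 2 ≤ ∑ i ∈ Finset.univ.filter (fun i => ¬ k1 ≤ i), e' i := by
    calc 2 ≤ e' j0 := by
            rw [he', Finsupp.add_apply, Finsupp.single_apply, if_pos rfl]; omega
      _ ≤ _ := Finset.single_le_sum (f := fun i => e' i) (fun _ _ => Nat.zero_le _) hmem
  omega

lemma bc_rel (j : Fin n) (hj : 0 < (j : ℕ)) (e : Fin n →₀ ℕ) :
    bc n (e + Finsupp.single (j - ⟨1, by omega⟩) 1 + Finsupp.single j 1)
      = bc n (e + Finsupp.single j 2) := by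
  have hjm : ((j - ⟨1, by omega⟩ : Fin n) : ℕ) = (j : ℕ) - 1 := by
    rw [Fin.sub_def]
    simp only
    have hlt := j.isLt
    have h1 : (j : ℕ) + (n - 1) = ((j : ℕ) - 1) + n := by omega
    rw [Nat.add_comm (n - 1) (j : ℕ)] at *
    rw [h1, Nat.add_mod_right, Nat.mod_eq_of_lt (by omega)]
  set jm : Fin n := j - ⟨1, by omega⟩ with hjmdef
  rw [bc, bc]
  have hiff : bOK n (e + Finsupp.single jm 1 + Finsupp.single j 1)
      ↔ bOK n (e + Finsupp.single j 2) := by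
    constructor
    · rintro ⟨htot, hall⟩
      constructor
      · rw [btot_add_single]
        rw [btot_add_single, btot_add_single] at htot
        omega
      · intro k
        have := hall k
        rw [bsuf_add_single, bsuf_add_single] at this
        rw [bsuf_add_single]
        have hkj : k ≤ jm → k ≤ j := by
          rw [Fin.le_def, Fin.le_def, hjm]; omega
        by_cases h : k ≤ j <;> by_cases h' : k ≤ jm <;>
          simp [h, h'] at this ⊢ <;> omega
    · rintro ⟨htot, hall⟩
      constructor
      · rw [btot_add_single, btot_add_single]
        rw [btot_add_single] at htot
        omega
      · intro k
        have hk := hall k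
        rw [bsuf_add_single] at hk
        rw [bsuf_add_single, bsuf_add_single]
        by_cases h' : k ≤ jm
        · have h : k ≤ j := by rw [Fin.le_def] at *; rw [hjm] at h'; omega
          simp [h, h'] at hk ⊢
          omega
        · by_cases h : k ≤ j
          · -- k = j case (k > jm, k ≤ j means k = j)
            simp [h, h'] at hk ⊢
            by_cases htop : (j : ℕ) = n - 1
            · have hkj : (k : ℕ) = (j : ℕ) := by
                rw [Fin.le_def] at h h'
                rw [hjm] at h'
                omega
              omega
            · -- use suffix at j+1
              have hjlt := j.isLt
              set k' : Fin n := ⟨(j : ℕ) + 1, by omega⟩ with hk'def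
              have hk' := hall k'
              rw [bsuf_add_single] at hk'
              have : ¬ k' ≤ j := by intro hc; rw [Fin.le_def] at hc; exact absurd hc (by show ¬ ((j:ℕ)+1 ≤ j); omega)
              rw [if_neg this] at hk'
              have hmono : bsuf n k' e ≤ bsuf n k e := by
                refine bsuf_antitone n k k' ?_ e
                rw [Fin.le_def] at h ⊢
                simp only [hk'def]
                omega
              have hkj : (k : ℕ) = (j : ℕ) := by
                rw [Fin.le_def] at h h'
                rw [hjm] at h'
                omega
              have hk'2 : n - ((j:ℕ)+1) ≤ bsuf n k' e := hk'
              have hjlt' := j.isLt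
              omega
          · simp [h, h'] at hk ⊢
            omega
  rcases Classical.em (bOK n (e + Finsupp.single jm 1 + Finsupp.single j 1)) with h | h
  · rw [if_pos h, if_pos (hiff.mp h)]
  · rw [if_neg h, if_neg (fun hr => h (hiff.mpr hr))]

include hn in
theorem stmt_11' (I : Ideal (MvPolynomial (Fin n) (ZMod 2)))
    (hI : I = Ideal.span ({X (⟨0, by omega⟩ : Fin n) ^ 2} ∪
      { p | ∃ j : Fin n, 0 < (j : ℕ) ∧ p = X j * (X (j - ⟨1, by omega⟩) + X j) })) :
    (∏ j : Fin n, X j) - (X (⟨n - 1, by omega⟩ : Fin n)) ^ n ∈ I ∧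
    (X (⟨n - 1, by omega⟩ : Fin n) : MvPolynomial (Fin n) (ZMod 2)) ^ n ∉ I := by
  have h2 : (2 : MvPolynomial (Fin n) (ZMod 2)) = 0 := by
    exact_mod_cast CharP.cast_eq_zero (MvPolynomial (Fin n) (ZMod 2)) 2
  constructor
  · -- membership
    set jl : Fin n := ⟨n - 1, by omega⟩ with hjl
    let π := Ideal.Quotient.mk I
    let x : ℕ → MvPolynomial (Fin n) (ZMod 2) ⧸ I :=
      fun i => if h : i < n then π (X ⟨i, h⟩) else 1
    have hx : ∀ (i : ℕ) (h : i < n), x i = π (X ⟨i, h⟩) := fun i h => dif_pos h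
    have hrel : ∀ i, 0 < i → i < n → x i * x i = x (i-1) * x i := by
      intro i h0 hi
      have hi1 : i - 1 < n := by omega
      rw [hx i hi, hx (i-1) hi1]
      set j : Fin n := ⟨i, hi⟩ with hjdef
      have hjm : (j - (⟨1, by omega⟩ : Fin n)) = (⟨i-1, hi1⟩ : Fin n) := by
        apply Fin.ext
        rw [Fin.sub_def]
        simp only [hjdef]
        have h1 : n - 1 + i = (i - 1) + n := by omega
        rw [h1, Nat.add_mod_right, Nat.mod_eq_of_lt (by omega)]
      have hgen : X j * (X (j - ⟨1, by omega⟩) + X j) ∈ I := by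
        rw [hI]
        exact Ideal.subset_span (Or.inr ⟨j, h0, rfl⟩)
      have key : (X (⟨i-1, hi1⟩ : Fin n) * X j - X j * X j : MvPolynomial (Fin n) (ZMod 2))
          = X j * (X (j - ⟨1, by omega⟩) + X j) := by
        rw [hjm]
        linear_combination (-(X j * X j) : MvPolynomial (Fin n) (ZMod 2)) * h2
      have hz : π (X (⟨i-1, hi1⟩ : Fin n) * X j - X j * X j) = 0 := by
        rw [key]
        exact Ideal.Quotient.eq_zero_iff_mem.2 hgen
      rw [map_sub, map_mul, map_mul, sub_eq_zero] at hz
      exact hz.symm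
    have hmain := bmain x n (by omega) hrel (n-1) le_rfl
    rw [show (n-1)+1 = n by omega, Nat.sub_self] at hmain
    have hπprod : π (∏ j : Fin n, X j) = ∏ i ∈ Finset.Icc 0 (n-1), x i := by
      rw [map_prod]
      have h1 : ∀ j : Fin n, π (X j) = x (j : ℕ) := by
        intro j
        rw [hx (j : ℕ) j.isLt]
      rw [Finset.prod_congr rfl (fun j _ => h1 j),
        Fin.prod_univ_eq_prod_range (fun i => x i) n]
      congr 1
      ext i
      simp only [Finset.mem_range, Finset.mem_Icc]
      omega
    have hπpow : π (X jl ^ n) = x (n-1) ^ n := by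
      rw [map_pow, hx (n-1) (by omega)]
    rw [show ((∏ j : Fin n, X j) - X jl ^ n ∈ I) ↔ π (∏ j : Fin n, X j) = π (X jl ^ n)
        from Ideal.Quotient.eq.symm]
    rw [hπprod, hπpow, hmain]
  · -- non-membership
    intro hmem
    have hvanish : ∀ q, bphi n (q * (X (⟨n - 1, by omega⟩ : Fin n)) ^ n) = 0 := by
      rw [hI] at hmem
      refine Submodule.span_induction
        (p := fun y _ => ∀ q, bphi n (q * y) = 0) ?_ ?_ ?_ ?_ hmem
      · rintro y (rfl | ⟨j, hj, rfl⟩)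
        · -- y = X 0 ^ 2
          intro q
          induction q using MvPolynomial.induction_on' with
          | monomial v c =>
            rw [X_pow_eq_monomial, monomial_mul, bphi_monomial, mul_one,
              bc_sq_zero hn v, mul_zero]
          | add p q hp hq =>
            rw [add_mul, bphi_add, hp, hq, add_zero]
        · -- y = X j * (X (j-1) + X j)
          intro q
          induction q using MvPolynomial.induction_on' with
          | monomial v c =>
            have key : (monomial v c : MvPolynomial (Fin n) (ZMod 2)) *
                (X j * (X (j - ⟨1, by omega⟩) + X j))
                = ((monomial v c * X (j - ⟨1, by omega⟩)) * X j)
                  + (monomial v c * (X j ^ 2)) := by ring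
            rw [key]
            rw [X_pow_eq_monomial,
              show (X (j - ⟨1, by omega⟩) : MvPolynomial (Fin n) (ZMod 2))
                = monomial (Finsupp.single (j - ⟨1, by omega⟩) 1) 1 from rfl,
              show (X j : MvPolynomial (Fin n) (ZMod 2))
                = monomial (Finsupp.single j 1) 1 from rfl,
              monomial_mul, monomial_mul, monomial_mul,
              bphi_add, bphi_monomial, bphi_monomial, mul_one, mul_one,
              bc_rel hn j hj v]
            rw [← add_mul, CharTwo.add_self_eq_zero, zero_mul]
          | add p q hp hq =>
            rw [add_mul, bphi_add, hp, hq, add_zero]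
      · intro q; rw [mul_zero, bphi, MvPolynomial.support_zero, Finset.sum_empty]
      · intro a b _ _ ha hb q
        rw [mul_add, bphi_add, ha, hb, add_zero]
      · intro a y _ hy q
        rw [smul_eq_mul, show q * (a * y) = (q * a) * y by ring]
        exact hy (q * a)
    have h1 := hvanish 1
    rw [one_mul, X_pow_eq_monomial, bphi_monomial, bc_top hn, mul_one] at h1
    exact one_ne_zero h1


end BottMain



theorem stmt_11 (n : ℕ) (hn : 3 ≤ n)
    (I : Ideal (MvPolynomial (Fin n) (ZMod 2)))
    (hI : I = Ideal.span ({X (⟨0, by omega⟩ : Fin n) ^ 2} ∪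
      { p | ∃ j : Fin n, 0 < (j : ℕ) ∧ p = X j * (X (j - ⟨1, by omega⟩) + X j) })) :
    (∏ j : Fin n, X j) - (X (⟨n - 1, by omega⟩ : Fin n)) ^ n ∈ I ∧
    (X (⟨n - 1, by omega⟩ : Fin n) : MvPolynomial (Fin n) (ZMod 2)) ^ n ∉ I := by
  exact stmt_11' hn I hI
end

section
/- Let n ≥ 3 and let r be an integer with n ≤ 2^{r} − 1 < 2n. Let R = (ℤ/2)[y₁,…,y_n]/I where I is the ideal generated by y₁² and by y_j·(y_{j−1}+y_j) for j = 2,…,n, and write ȳ_n for the image of y_n in R. Then in the tensor product R ⊗_{ℤ/2} R one has (1 ⊗ ȳ_n + ȳ_n ⊗ 1)^{2^{r}−1} ≠ 0. -/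
open MvPolynomial TensorProduct

set_option synthInstance.maxHeartbeats 1000000
set_option maxHeartbeats 1000000

namespace Stmt12Aux


def tf (b : ℕ → ℕ) : ℕ → ℕ
  | 0 => b 0
  | d+1 => b (d+1) + (tf b d - 1)

lemma tf_zero (b : ℕ → ℕ) : tf b 0 = b 0 := rfl
lemma tf_succ (b : ℕ → ℕ) (d : ℕ) : tf b (d+1) = b (d+1) + (tf b d - 1) := rfl

lemma self_le_tf (b : ℕ → ℕ) (d : ℕ) : b d ≤ tf b d := by
  cases d with
  | zero => exact le_rfl
  | succ d => rw [tf_succ]; omega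

lemma tf_congr {b c : ℕ → ℕ} (D : ℕ) (h : ∀ d ≤ D, b d = c d) : tf b D = tf c D := by
  induction D with
  | zero => rw [tf_zero, tf_zero]; exact h 0 le_rfl
  | succ D ih =>
      rw [tf_succ, tf_succ, h _ le_rfl, ih fun d hd => h d (hd.trans (Nat.le_succ D))]

lemma tf_key {b c : ℕ → ℕ} {d₀ N : ℕ} (hN : d₀ + 1 < N)
    (h1 : ∀ d < N, d ≠ d₀ → d ≠ d₀+1 → b d = c d)
    (h2 : b d₀ = c d₀ + 1) (h3 : c (d₀+1) = b (d₀+1) + 1) (h4 : 1 ≤ c d₀) :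
    (∀ d < N, d ≠ d₀ → tf b d = tf c d) ∧ tf b d₀ = tf c d₀ + 1 := by
  have hlt : ∀ d < d₀, tf b d = tf c d := by
    intro d hd
    exact tf_congr d fun e he => h1 e (by omega) (by omega) (by omega)
  have h2' : tf b d₀ = tf c d₀ + 1 := by
    cases d₀ with
    | zero => rw [tf_zero, tf_zero]; exact h2
    | succ e =>
        rw [tf_succ, tf_succ, hlt e (Nat.lt_succ_self e), h2]; omega
  have hc1 : 1 ≤ tf c d₀ := le_trans h4 (self_le_tf c d₀)
  have hsucc : tf b (d₀+1) = tf c (d₀+1) := by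
    rw [tf_succ, tf_succ, h3, h2']; omega
  have hup : ∀ e, d₀ + 1 + e < N → tf b (d₀+1+e) = tf c (d₀+1+e) := by
    intro e
    induction e with
    | zero => intro _; exact hsucc
    | succ e ih =>
        intro he
        have heq : d₀ + 1 + (e+1) = (d₀ + 1 + e) + 1 := by omega
        rw [heq, tf_succ, tf_succ, ih (by omega), h1 _ (by omega) (by omega) (by omega)]
  refine ⟨?_, h2'⟩
  intro d hd hne
  rcases lt_or_ge d d₀ with h | h
  · exact hlt d h
  · obtain ⟨e, rfl⟩ : ∃ e, d = d₀ + 1 + e := ⟨d - d₀ - 1, by omega⟩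
    exact hup e hd

def bb (n : ℕ) (hn : 0 < n) (a : Fin n →₀ ℕ) : ℕ → ℕ :=
  fun d => a ⟨n - 1 - d, by omega⟩

def ff (n : ℕ) (hn : 0 < n) (T : ℕ → Prop) [DecidablePred T] (a : Fin n →₀ ℕ) : ZMod 2 :=
  if (tf (bb n hn a) (n-1) ≤ 1 ∧ ∀ d ∈ Finset.range n, (1 ≤ tf (bb n hn a) d ↔ T d))
  then 1 else 0

lemma ff_bot (n : ℕ) (hn : 0 < n) (T : ℕ → Prop) [DecidablePred T] (a : Fin n →₀ ℕ) :
    ff n hn T (a + Finsupp.single (⟨0, hn⟩ : Fin n) 2) = 0 := by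
  unfold ff
  rw [if_neg]
  intro ⟨h1, _⟩
  have h2 : bb n hn (a + Finsupp.single (⟨0, hn⟩ : Fin n) 2) (n-1)
      = a ⟨0, hn⟩ + 2 := by
    unfold bb
    have : (⟨n - 1 - (n-1), by omega⟩ : Fin n) = ⟨0, hn⟩ := by
      apply Fin.ext; simp
    rw [this, Finsupp.add_apply, Finsupp.single_apply, if_pos rfl]
  have := self_le_tf (bb n hn (a + Finsupp.single (⟨0, hn⟩ : Fin n) 2)) (n-1)
  omega

lemma ff_rel (n : ℕ) (hn : 0 < n) (T : ℕ → Prop) [DecidablePred T] (a : Fin n →₀ ℕ)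
    (j j' : Fin n) (hj' : (j' : ℕ) + 1 = (j : ℕ)) :
    ff n hn T (a + (Finsupp.single j 1 + Finsupp.single j' 1))
      = ff n hn T (a + Finsupp.single j 2) := by
  set d₀ : ℕ := n - 1 - (j : ℕ) with hd₀
  have hjlt := j.isLt
  have hd₀1 : d₀ + 1 < n := by omega
  set b := bb n hn (a + Finsupp.single j 2) with hb
  set c := bb n hn (a + (Finsupp.single j 1 + Finsupp.single j' 1)) with hc
  have hidx : ∀ d : ℕ, d < n → (j = (⟨n - 1 - d, by omega⟩ : Fin n) ↔ d = d₀) := by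
    intro d hd
    constructor
    · intro h; have := congrArg Fin.val h; simp only [] at this; omega
    · intro h; apply Fin.ext; simp only []; omega
  have hidx' : ∀ d : ℕ, d < n → (j' = (⟨n - 1 - d, by omega⟩ : Fin n) ↔ d = d₀ + 1) := by
    intro d hd
    constructor
    · intro h; have := congrArg Fin.val h; simp only [] at this; omega
    · intro h; apply Fin.ext; simp only []; omega
  have h1 : ∀ d < n, d ≠ d₀ → d ≠ d₀ + 1 → b d = c d := by
    intro d hd hne hne'
    have e1 : ¬ (j = (⟨n - 1 - d, by omega⟩ : Fin n)) := fun h => hne ((hidx d hd).mp h)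
    have e2 : ¬ (j' = (⟨n - 1 - d, by omega⟩ : Fin n)) := fun h => hne' ((hidx' d hd).mp h)
    simp only [hb, hc, bb, Finsupp.add_apply, Finsupp.single_apply, if_neg e1, if_neg e2]
    omega
  have hjj' : ¬ (j' = j) := by
    intro h; rw [h] at hj'; omega
  have h2 : b d₀ = c d₀ + 1 := by
    have e1 : j = (⟨n - 1 - d₀, by omega⟩ : Fin n) := (hidx d₀ (by omega)).mpr rfl
    have e2 : ¬ (j' = (⟨n - 1 - d₀, by omega⟩ : Fin n)) := by
      rw [← e1]; exact hjj'
    simp only [hb, hc, bb, Finsupp.add_apply, Finsupp.single_apply, if_pos e1, if_neg e2]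
    omega
  have h3 : c (d₀+1) = b (d₀+1) + 1 := by
    have e1 : j' = (⟨n - 1 - (d₀+1), by omega⟩ : Fin n) := (hidx' (d₀+1) (by omega)).mpr rfl
    have e2 : ¬ (j = (⟨n - 1 - (d₀+1), by omega⟩ : Fin n)) := by
      intro h; have := (hidx (d₀+1) (by omega)).mp h; omega
    simp only [hb, hc, bb, Finsupp.add_apply, Finsupp.single_apply, if_pos e1, if_neg e2]
    omega
  have h4 : 1 ≤ c d₀ := by
    have e1 : j = (⟨n - 1 - d₀, by omega⟩ : Fin n) := (hidx d₀ (by omega)).mpr rfl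
    have e2 : ¬ (j' = (⟨n - 1 - d₀, by omega⟩ : Fin n)) := by
      rw [← e1]; exact hjj'
    simp only [hc, bb, Finsupp.add_apply, Finsupp.single_apply, if_pos e1, if_neg e2]
    omega
  obtain ⟨heq, hday⟩ := tf_key hd₀1 h1 h2 h3 h4
  have hc1 : 1 ≤ tf c d₀ := le_trans h4 (self_le_tf c d₀)
  unfold ff
  refine if_congr (and_congr ?_ ?_) rfl rfl
  · rw [heq (n-1) (by omega) (by omega)]
  · constructor
    · intro H d hd
      have hd' : d < n := Finset.mem_range.mp hd
      have H' := H d hd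
      rcases eq_or_ne d d₀ with rfl | hne
      · have hb1 : 1 ≤ tf b d₀ := by omega
        exact iff_of_true hb1 (H'.mp hc1)
      · rw [heq d hd' hne]; exact H'
    · intro H d hd
      have hd' : d < n := Finset.mem_range.mp hd
      have H' := H d hd
      rcases eq_or_ne d d₀ with rfl | hne
      · have hb1 : 1 ≤ tf b d₀ := by omega
        exact iff_of_true hc1 (H'.mp hb1)
      · rw [← heq d hd' hne]; exact H'


lemma bb_single_top (n : ℕ) (hn : 2 ≤ n) (k d : ℕ) :
    bb n (by omega) (Finsupp.single (⟨n-1, by omega⟩ : Fin n) k) d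
      = if d = 0 then k else 0 := by
  unfold bb
  rw [Finsupp.single_apply]
  by_cases h : d = 0
  · subst h; simp
  · rw [if_neg h, if_neg]
    intro hc
    have h2 := congrArg Fin.val hc
    simp only [] at h2
    omega

lemma tf_single_top (n : ℕ) (hn : 2 ≤ n) (k d : ℕ) :
    tf (bb n (by omega) (Finsupp.single (⟨n-1, by omega⟩ : Fin n) k)) d = k - d := by
  induction d with
  | zero => rw [tf_zero, bb_single_top n hn]; simp
  | succ d ih => rw [tf_succ, bb_single_top n hn, ih]; simp; omega

lemma ff_single_top_full (n : ℕ) (hn : 2 ≤ n) (k : ℕ) :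
    ff n (by omega) (fun _ => True) (Finsupp.single (⟨n-1, by omega⟩ : Fin n) k)
      = if k = n then 1 else 0 := by
  unfold ff
  by_cases h : k = n
  · rw [if_pos, if_pos h]
    constructor
    · rw [tf_single_top n hn]; omega
    · intro d hd
      rw [Finset.mem_range] at hd
      rw [tf_single_top n hn]
      simp only [iff_true]
      omega
  · rw [if_neg, if_neg h]
    intro ⟨h1, h2⟩
    rw [tf_single_top n hn] at h1
    have h3 := h2 (n-1) (by rw [Finset.mem_range]; omega)
    rw [tf_single_top n hn] at h3
    simp only [iff_true] at h3
    omega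

lemma ff_single_top_seg (n : ℕ) (hn : 2 ≤ n) (s k : ℕ) (hs : s < n) :
    ff n (by omega) (fun d => d < s) (Finsupp.single (⟨n-1, by omega⟩ : Fin n) k)
      = if k = s then 1 else 0 := by
  unfold ff
  by_cases h : k = s
  · rw [if_pos, if_pos h]
    subst h
    constructor
    · rw [tf_single_top n hn]; omega
    · intro d hd
      rw [Finset.mem_range] at hd
      rw [tf_single_top n hn]
      omega
  · rw [if_neg, if_neg h]
    intro ⟨h1, h2⟩
    apply h
    rw [tf_single_top n hn] at h1
    by_cases hk : k < n
    · -- use d = s and (if s>0) d = s-1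
      have h3 := h2 s (by rw [Finset.mem_range]; omega)
      rw [tf_single_top n hn] at h3
      rcases Nat.eq_zero_or_pos s with hs0 | hs0
      · omega
      · have h4 := h2 (s-1) (by rw [Finset.mem_range]; omega)
        rw [tf_single_top n hn] at h4
        omega
    · have h3 := h2 s (by rw [Finset.mem_range]; omega)
      rw [tf_single_top n hn] at h3
      omega


noncomputable section
def Ffun (n : ℕ) (f : (Fin n →₀ ℕ) → ZMod 2) :
    MvPolynomial (Fin n) (ZMod 2) →ₗ[ZMod 2] ZMod 2 :=
  AddMonoidHom.toZModLinearMap 2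
  { toFun := fun p => (AddMonoidAlgebra.coeff p).sum fun a c => f a * c
    map_zero' := Finsupp.sum_zero_index
    map_add' := fun p q => Finsupp.sum_add_index' (fun a => by ring) (fun a b₁ b₂ => by ring) }

lemma Ffun_monomial (n : ℕ) (f : (Fin n →₀ ℕ) → ZMod 2) (u : Fin n →₀ ℕ) (c : ZMod 2) :
    Ffun n f (monomial u c) = f u * c := by
  show (AddMonoidAlgebra.coeff (monomial u c)).sum (fun a c => f a * c) = f u * c
  exact sum_monomial_eq (by ring)

def Jid (n : ℕ) (f : (Fin n →₀ ℕ) → ZMod 2) : Ideal (MvPolynomial (Fin n) (ZMod 2)) where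
  carrier := {p | ∀ q, Ffun n f (q * p) = 0}
  add_mem' := by
    intro p1 p2 h1 h2 q
    rw [mul_add, map_add, h1 q, h2 q, add_zero]
  zero_mem' := by intro q; rw [mul_zero, map_zero]
  smul_mem' := by
    intro r p h q
    rw [smul_eq_mul, ← mul_assoc]
    exact h (q * r)

lemma X_eq_monomial {n : ℕ} (j : Fin n) :
    (X j : MvPolynomial (Fin n) (ZMod 2)) = monomial (Finsupp.single j 1) 1 := rfl

lemma gen1_mem {n : ℕ} (hn : 0 < n) (f : (Fin n →₀ ℕ) → ZMod 2)
    (hbot : ∀ a, f (a + Finsupp.single (⟨0, hn⟩ : Fin n) 2) = 0) :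
    (X (⟨0, hn⟩ : Fin n) : MvPolynomial (Fin n) (ZMod 2)) ^ 2 ∈ Jid n f := by
  intro q
  induction q using MvPolynomial.induction_on' with
  | monomial u c =>
      rw [X_pow_eq_monomial, monomial_mul, Ffun_monomial, hbot, zero_mul]
  | add p q hp hq =>
      rw [add_mul, map_add, hp, hq, add_zero]

lemma gen2_mem {n : ℕ} (f : (Fin n →₀ ℕ) → ZMod 2) (j j' : Fin n)
    (hrel : ∀ a, f (a + (Finsupp.single j 1 + Finsupp.single j' 1))
      = f (a + Finsupp.single j 2)) :
    (X j * (X j' + X j) : MvPolynomial (Fin n) (ZMod 2)) ∈ Jid n f := by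
  have hsplit : (X j * (X j' + X j) : MvPolynomial (Fin n) (ZMod 2))
      = monomial (Finsupp.single j 1 + Finsupp.single j' 1) 1
        + monomial (Finsupp.single j 2) 1 := by
    rw [mul_add, X_eq_monomial, X_eq_monomial, monomial_mul, mul_one, ← X_eq_monomial j,
      ← X_pow_eq_monomial, sq]
  intro q
  induction q using MvPolynomial.induction_on' with
  | monomial u c =>
      rw [hsplit, mul_add, map_add, monomial_mul, monomial_mul, Ffun_monomial, Ffun_monomial,
        hrel]
      have : ∀ x : ZMod 2, x + x = 0 := by decide
      exact this _
  | add p q hp hq =>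
      rw [add_mul, map_add, hp, hq, add_zero]


lemma choose_two_pow_sub_one_odd : ∀ r k : ℕ, k ≤ 2^r - 1 → Nat.choose (2^r - 1) k % 2 = 1 := by
  intro r
  induction r with
  | zero => intro k hk; interval_cases k <;> simp
  | succ r ih =>
      intro k hk
      have : Fact (Nat.Prime 2) := ⟨Nat.prime_two⟩
      have hL := Choose.choose_modEq_choose_mod_mul_choose_div_nat
        (p := 2) (n := 2^(r+1) - 1) (k := k)
      have hpow : (2:ℕ)^(r+1) = 2 * 2^r := by rw [pow_succ]; ring
      have hpos : (1:ℕ) ≤ 2^r := Nat.one_le_two_pow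
      have h1 : (2^(r+1) - 1) % 2 = 1 := by omega
      have h2 : (2^(r+1) - 1) / 2 = 2^r - 1 := by omega
      have h4 := ih (k/2) (by omega)
      have h5 : Nat.choose 1 (k % 2) = 1 := by
        have : k % 2 = 0 ∨ k % 2 = 1 := by omega
        rcases this with h | h <;> rw [h] <;> simp
      unfold Nat.ModEq at hL
      rw [h1, h2, h5, one_mul] at hL
      rw [hL, h4]

noncomputable def Fbar {n : ℕ} (I : Ideal (MvPolynomial (Fin n) (ZMod 2)))
    (f : (Fin n →₀ ℕ) → ZMod 2)
    (hf : ∀ x ∈ I, Ffun n f x = 0) :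
    (MvPolynomial (Fin n) (ZMod 2) ⧸ I) →ₗ[ZMod 2] ZMod 2 :=
  (Submodule.liftQ (I.restrictScalars (ZMod 2)) (Ffun n f)
      (fun x hx => hf x hx)) ∘ₗ
    (Submodule.Quotient.restrictScalarsEquiv (ZMod 2) I).symm.toLinearMap

lemma Fbar_mk {n : ℕ} (I : Ideal (MvPolynomial (Fin n) (ZMod 2)))
    (f : (Fin n →₀ ℕ) → ZMod 2) (hf : ∀ x ∈ I, Ffun n f x = 0)
    (p : MvPolynomial (Fin n) (ZMod 2)) :
    Fbar I f hf (Ideal.Quotient.mk I p) = Ffun n f p := by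
  rfl

end
end Stmt12Aux

theorem stmt_12 (n r : ℕ) (hn : 3 ≤ n) (hr : n ≤ 2 ^ r - 1) (hr' : 2 ^ r - 1 < 2 * n)
    (I : Ideal (MvPolynomial (Fin n) (ZMod 2)))
    (hI : I = Ideal.span ({X (⟨0, by omega⟩ : Fin n) ^ 2} ∪
      { p | ∃ j : Fin n, 0 < (j : ℕ) ∧ p = X j * (X (j - ⟨1, by omega⟩) + X j) })) :
    ((1 : MvPolynomial (Fin n) (ZMod 2) ⧸ I)
        ⊗ₜ[ZMod 2] (Ideal.Quotient.mk I (X (⟨n - 1, by omega⟩ : Fin n)))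
      + (Ideal.Quotient.mk I (X (⟨n - 1, by omega⟩ : Fin n)))
        ⊗ₜ[ZMod 2] 1) ^ (2 ^ r - 1) ≠ 0 := by
  classical
  have hn0 : 0 < n := by omega
  have hn2 : 2 ≤ n := by omega
  set m : ℕ := 2 ^ r - 1 with hmdef
  set s : ℕ := m - n with hsdef
  have hs : s < n := by omega
  set fT : (Fin n →₀ ℕ) → ZMod 2 := Stmt12Aux.ff n hn0 (fun d => d < s) with hfT
  set gT : (Fin n →₀ ℕ) → ZMod 2 := Stmt12Aux.ff n hn0 (fun _ => True) with hgT
  -- the ideal is killed by both functionals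
  have hkill : ∀ (f : (Fin n →₀ ℕ) → ZMod 2),
      (∀ a, f (a + Finsupp.single (⟨0, hn0⟩ : Fin n) 2) = 0) →
      (∀ (a : Fin n →₀ ℕ) (j j' : Fin n), (j' : ℕ) + 1 = (j : ℕ) →
        f (a + (Finsupp.single j 1 + Finsupp.single j' 1)) = f (a + Finsupp.single j 2)) →
      ∀ x ∈ I, Stmt12Aux.Ffun n f x = 0 := by
    intro f hbot hrel x hx
    have hle : I ≤ Stmt12Aux.Jid n f := by
      rw [hI]
      refine Ideal.span_le.mpr ?_
      rintro p hp
      rcases hp with hp | ⟨j, hj, rfl⟩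
      · rw [Set.mem_singleton_iff] at hp
        subst hp
        exact Stmt12Aux.gen1_mem hn0 f hbot
      · set j' : Fin n := j - ⟨1, by omega⟩ with hj'def
        have hj' : (j' : ℕ) + 1 = (j : ℕ) := by
          have h2 : (j' : ℕ) = (j : ℕ) - ((⟨1, by omega⟩ : Fin n) : ℕ) :=
            Fin.coe_sub_iff_le.mpr (Fin.mk_le_of_le_val (by omega))
          simp only [] at h2
          omega
        exact Stmt12Aux.gen2_mem f j j' (fun a => hrel a j j' hj')
    have := hle hx 1
    rwa [one_mul] at this
  have hIf : ∀ x ∈ I, Stmt12Aux.Ffun n fT x = 0 := by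
    apply hkill
    · intro a; exact Stmt12Aux.ff_bot n hn0 _ a
    · intro a j j' hj'; exact Stmt12Aux.ff_rel n hn0 _ a j j' hj'
  have hIg : ∀ x ∈ I, Stmt12Aux.Ffun n gT x = 0 := by
    apply hkill
    · intro a; exact Stmt12Aux.ff_bot n hn0 _ a
    · intro a j j' hj'; exact Stmt12Aux.ff_rel n hn0 _ a j j' hj'
  -- the bilinear functional
  set F := Stmt12Aux.Fbar I fT hIf with hF
  set G := Stmt12Aux.Fbar I gT hIg with hG
  set B : (MvPolynomial (Fin n) (ZMod 2) ⧸ I) →ₗ[ZMod 2]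
      (MvPolynomial (Fin n) (ZMod 2) ⧸ I) →ₗ[ZMod 2] ZMod 2 :=
    LinearMap.mk₂ (ZMod 2) (fun x y => F x * G y)
      (fun x₁ x₂ y => by simp only [map_add, add_mul])
      (fun c x y => by simp only [map_smul, smul_mul_assoc])
      (fun x y₁ y₂ => by simp only [map_add, mul_add])
      (fun c x y => by simp only [map_smul, mul_smul_comm]) with hB
  set ℓ := TensorProduct.lift B with hℓ
  set Y := Ideal.Quotient.mk I (X (⟨n - 1, by omega⟩ : Fin n)) with hY
  -- values
  have hFval : ∀ jj : ℕ, F (Y ^ jj) = if jj = s then 1 else 0 := by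
    intro jj
    calc F (Y ^ jj) = F (Ideal.Quotient.mk I (X (⟨n - 1, by omega⟩ : Fin n) ^ jj)) := by
          rw [hY]
          exact congrArg F (map_pow (Ideal.Quotient.mk I) _ jj).symm
      _ = Stmt12Aux.Ffun n fT (X (⟨n - 1, by omega⟩ : Fin n) ^ jj) :=
          Stmt12Aux.Fbar_mk I fT hIf _
      _ = fT (Finsupp.single (⟨n - 1, by omega⟩ : Fin n) jj) * 1 := by
          rw [X_pow_eq_monomial, Stmt12Aux.Ffun_monomial]
      _ = if jj = s then 1 else 0 := by
          rw [mul_one]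
          exact Stmt12Aux.ff_single_top_seg n hn2 s jj hs
  have hGval : ∀ jj : ℕ, G (Y ^ jj) = if jj = n then 1 else 0 := by
    intro jj
    calc G (Y ^ jj) = G (Ideal.Quotient.mk I (X (⟨n - 1, by omega⟩ : Fin n) ^ jj)) := by
          rw [hY]
          exact congrArg G (map_pow (Ideal.Quotient.mk I) _ jj).symm
      _ = Stmt12Aux.Ffun n gT (X (⟨n - 1, by omega⟩ : Fin n) ^ jj) :=
          Stmt12Aux.Fbar_mk I gT hIg _
      _ = gT (Finsupp.single (⟨n - 1, by omega⟩ : Fin n) jj) * 1 := by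
          rw [X_pow_eq_monomial, Stmt12Aux.Ffun_monomial]
      _ = if jj = n then 1 else 0 := by
          rw [mul_one]
          exact Stmt12Aux.ff_single_top_full n hn2 jj
  -- main computation
  intro h0
  have hval : ℓ (((1 : MvPolynomial (Fin n) (ZMod 2) ⧸ I) ⊗ₜ[ZMod 2] Y
      + Y ⊗ₜ[ZMod 2] 1) ^ m) = 1 := by
    have hexp := add_pow ((1 : MvPolynomial (Fin n) (ZMod 2) ⧸ I) ⊗ₜ[ZMod 2] Y)
      (Y ⊗ₜ[ZMod 2] (1 : MvPolynomial (Fin n) (ZMod 2) ⧸ I)) m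
    rw [hexp, map_sum]
    have hterm : ∀ k ∈ Finset.range (m+1),
        ℓ (((1 : MvPolynomial (Fin n) (ZMod 2) ⧸ I) ⊗ₜ[ZMod 2] Y) ^ k
            * (Y ⊗ₜ[ZMod 2] (1 : MvPolynomial (Fin n) (ZMod 2) ⧸ I)) ^ (m - k)
            * (m.choose k : (MvPolynomial (Fin n) (ZMod 2) ⧸ I) ⊗[ZMod 2]
                (MvPolynomial (Fin n) (ZMod 2) ⧸ I)))
          = (m.choose k) • ((if m - k = s then (1:ZMod 2) else 0)
              * (if k = n then (1:ZMod 2) else 0)) := by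
      intro k hk
      rw [Algebra.TensorProduct.tmul_pow, Algebra.TensorProduct.tmul_pow, one_pow, one_pow,
        Algebra.TensorProduct.tmul_mul_tmul, one_mul, mul_one]
      refine (congrArg ℓ (?_ : _ = (m.choose k) • ((Y ^ (m - k)) ⊗ₜ[ZMod 2] (Y ^ k)))).trans ?_
      · exact (nsmul_eq_mul' ((Y ^ (m - k)) ⊗ₜ[ZMod 2] (Y ^ k)) (m.choose k)).symm
      rw [map_nsmul]
      rw [hℓ, TensorProduct.lift.tmul, hB, LinearMap.mk₂_apply, hFval (m-k), hGval k]
    rw [Finset.sum_congr rfl hterm]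
    rw [Finset.sum_eq_single_of_mem n (Finset.mem_range.mpr (by omega))
      (fun k _ hkn => by rw [if_neg hkn, mul_zero, smul_zero])]
    rw [if_pos (show m - n = s from rfl), if_pos rfl, mul_one, nsmul_eq_mul, mul_one]
    have hodd := Stmt12Aux.choose_two_pow_sub_one_odd r n hr
    rw [← ZMod.natCast_mod, hodd, Nat.cast_one]
  rw [h0, map_zero] at hval
  exact one_ne_zero hval.symm
end

section
/- Let R = (ℤ/2)[y₁,y₂,y₃]/I where I is the ideal generated by y₁², y₂·(y₁+y₂) and y₃², and write ȳ_j for the image of y_j in R. Then in the tensor product R ⊗_{ℤ/2} R one has (1 ⊗ ȳ₂ + ȳ₂ ⊗ 1)^{3} · (1 ⊗ ȳ₃ + ȳ₃ ⊗ 1) ≠ 0. -/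
open MvPolynomial TensorProduct

set_option synthInstance.maxHeartbeats 1000000
set_option maxHeartbeats 1000000

namespace Stmt13Aux

noncomputable section

abbrev P := MvPolynomial (Fin 3) (ZMod 2)
abbrev K := ZMod 2

def m1 : Fin 3 →₀ ℕ := Finsupp.single 0 1 + Finsupp.single 1 1
def m2 : Fin 3 →₀ ℕ := Finsupp.single 1 2
def m3 : Fin 3 →₀ ℕ := Finsupp.single 1 1 + Finsupp.single 2 1

def l1 : P →ₗ[K] K := lcoeff K m1 + lcoeff K m2
def l2 : P →ₗ[K] K := lcoeff K m3

lemma l1_apply (p : P) : l1 p = coeff m1 p + coeff m2 p := rfl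
lemma l2_apply (p : P) : l2 p = coeff m3 p := rfl

lemma g1_eq : (X 0 ^ 2 : P) = monomial (Finsupp.single 0 2) 1 := by
  rw [X_pow_eq_monomial]

lemma g2_eq : (X 1 * (X 0 + X 1) : P) = monomial m1 1 + monomial m2 1 := by
  have h0 : (X 0 : P) = monomial (Finsupp.single 0 1) 1 := rfl
  have h1 : (X 1 : P) = monomial (Finsupp.single 1 1) 1 := rfl
  have e1 : Finsupp.single (1:Fin 3) 1 + Finsupp.single 0 1 = m1 := by rw [m1, add_comm]
  have e2 : Finsupp.single (1:Fin 3) 1 + Finsupp.single 1 1 = m2 := by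
    rw [m2, ← Finsupp.single_add]
  rw [mul_add, h0, h1, monomial_mul, monomial_mul, mul_one, e1, e2]

lemma g3_eq : (X 2 ^ 2 : P) = monomial (Finsupp.single 2 2) 1 := by
  rw [X_pow_eq_monomial]

-- divisibility facts
lemma not_le_1 : ¬ (Finsupp.single (0:Fin 3) 2 ≤ m1) := by
  simp [m1, Finsupp.le_def, Fin.forall_fin_succ, Finsupp.single_apply]
lemma not_le_2 : ¬ (Finsupp.single (0:Fin 3) 2 ≤ m2) := by
  simp [m2, Finsupp.le_def, Fin.forall_fin_succ, Finsupp.single_apply]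
lemma not_le_3 : ¬ (m1 ≤ m2) := by
  simp [m1, m2, Finsupp.le_def, Fin.forall_fin_succ, Finsupp.single_apply]
lemma not_le_4 : ¬ (m2 ≤ m1) := by
  simp [m1, m2, Finsupp.le_def, Fin.forall_fin_succ, Finsupp.single_apply]
lemma not_le_5 : ¬ (Finsupp.single (2:Fin 3) 2 ≤ m1) := by
  simp [m1, Finsupp.le_def, Fin.forall_fin_succ, Finsupp.single_apply]
lemma not_le_6 : ¬ (Finsupp.single (2:Fin 3) 2 ≤ m2) := by
  simp [m2, Finsupp.le_def, Fin.forall_fin_succ, Finsupp.single_apply]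
lemma not_le_7 : ¬ (Finsupp.single (0:Fin 3) 2 ≤ m3) := by
  simp [m3, Finsupp.le_def, Fin.forall_fin_succ, Finsupp.single_apply]
lemma not_le_8 : ¬ (m1 ≤ m3) := by
  simp [m1, m3, Finsupp.le_def, Fin.forall_fin_succ, Finsupp.single_apply]
lemma not_le_9 : ¬ (m2 ≤ m3) := by
  simp [m2, m3, Finsupp.le_def, Fin.forall_fin_succ, Finsupp.single_apply]
lemma not_le_10 : ¬ (Finsupp.single (2:Fin 3) 2 ≤ m3) := by
  simp [m3, Finsupp.le_def, Fin.forall_fin_succ, Finsupp.single_apply]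

lemma l1_mul_g1 (p : P) : l1 (p * X 0 ^ 2) = 0 := by
  rw [g1_eq, l1_apply, coeff_mul_monomial', coeff_mul_monomial',
    if_neg not_le_1, if_neg not_le_2, add_zero]

lemma l1_mul_g2 (p : P) : l1 (p * (X 1 * (X 0 + X 1))) = 0 := by
  rw [g2_eq, mul_add, l1_apply, coeff_add, coeff_add,
    coeff_mul_monomial', coeff_mul_monomial', coeff_mul_monomial', coeff_mul_monomial',
    if_pos le_rfl, if_neg not_le_3, if_neg not_le_4, if_pos le_rfl]
  simp
  exact CharTwo.add_self_eq_zero _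

lemma l1_mul_g3 (p : P) : l1 (p * X 2 ^ 2) = 0 := by
  rw [g3_eq, l1_apply, coeff_mul_monomial', coeff_mul_monomial',
    if_neg not_le_5, if_neg not_le_6, add_zero]

lemma l2_mul_g1 (p : P) : l2 (p * X 0 ^ 2) = 0 := by
  rw [g1_eq, l2_apply, coeff_mul_monomial', if_neg not_le_7]

lemma l2_mul_g2 (p : P) : l2 (p * (X 1 * (X 0 + X 1))) = 0 := by
  rw [g2_eq, mul_add, l2_apply, coeff_add,
    coeff_mul_monomial', coeff_mul_monomial', if_neg not_le_8, if_neg not_le_9, add_zero]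

lemma l2_mul_g3 (p : P) : l2 (p * X 2 ^ 2) = 0 := by
  rw [g3_eq, l2_apply, coeff_mul_monomial', if_neg not_le_10]

lemma ker_of_gens (l : P →ₗ[K] K)
    (h1 : ∀ p : P, l (p * X 0 ^ 2) = 0)
    (h2 : ∀ p : P, l (p * (X 1 * (X 0 + X 1))) = 0)
    (h3 : ∀ p : P, l (p * X 2 ^ 2) = 0) :
    ∀ f ∈ Ideal.span ({X 0 ^ 2, X 1 * (X 0 + X 1), X 2 ^ 2} : Set P), l f = 0 := by
  intro f hf
  have key : ∀ q : P, l (q * f) = 0 := by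
    refine Submodule.span_induction (p := fun x _ => ∀ q : P, l (q * x) = 0)
      ?_ ?_ ?_ ?_ hf
    · rintro x (rfl | rfl | rfl) q
      · exact h1 q
      · exact h2 q
      · exact h3 q
    · intro q; simp
    · intro x y _ _ hx hy q
      rw [mul_add, map_add, hx, hy, add_zero]
    · intro a x _ hx q
      rw [smul_eq_mul, ← mul_assoc]
      exact hx (q * a)
  simpa using key 1

variable (I : Ideal P)

def q1 (h : ∀ f ∈ I, l1 f = 0) : (P ⧸ I) →ₗ[K] K :=
  (Submodule.liftQ (I.restrictScalars K) l1
      (fun x hx => LinearMap.mem_ker.mpr (h x hx))) ∘ₗ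
    (Submodule.Quotient.restrictScalarsEquiv K I).symm.toLinearMap

def q2 (h : ∀ f ∈ I, l2 f = 0) : (P ⧸ I) →ₗ[K] K :=
  (Submodule.liftQ (I.restrictScalars K) l2
      (fun x hx => LinearMap.mem_ker.mpr (h x hx))) ∘ₗ
    (Submodule.Quotient.restrictScalarsEquiv K I).symm.toLinearMap

lemma q1_mk (h : ∀ f ∈ I, l1 f = 0) (p : P) :
    q1 I h (Ideal.Quotient.mk I p) = l1 p := by
  simp [q1, ← Ideal.Quotient.mk_eq_mk, Submodule.Quotient.restrictScalarsEquiv_symm_mk]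

lemma q2_mk (h : ∀ f ∈ I, l2 f = 0) (p : P) :
    q2 I h (Ideal.Quotient.mk I p) = l2 p := by
  simp [q2, ← Ideal.Quotient.mk_eq_mk, Submodule.Quotient.restrictScalarsEquiv_symm_mk]

-- coefficient computations
lemma coeff_vals :
    l1 (1 : P) = 0 ∧ l1 (X 1 : P) = 0 ∧ l1 ((X 1)^2 : P) = 1 ∧ l1 ((X 1)^3 : P) = 0 ∧
    l1 (X 2 : P) = 0 ∧ l1 ((X 1) * X 2 : P) = 0 ∧ l1 ((X 1)^2 * X 2 : P) = 0 ∧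
    l1 ((X 1)^3 * X 2 : P) = 0 ∧
    l2 (1 : P) = 0 ∧ l2 (X 1 : P) = 0 ∧ l2 ((X 1)^2 : P) = 0 ∧ l2 ((X 1)^3 : P) = 0 ∧
    l2 (X 2 : P) = 0 ∧ l2 ((X 1) * X 2 : P) = 1 ∧ l2 ((X 1)^2 * X 2 : P) = 0 ∧
    l2 ((X 1)^3 * X 2 : P) = 0 := by
  have hX1 : (X 1 : P) = monomial (Finsupp.single 1 1) 1 := rfl
  have hX2 : (X 2 : P) = monomial (Finsupp.single 2 1) 1 := rfl
  refine ⟨?_, ?_, ?_, ?_, ?_, ?_, ?_, ?_, ?_, ?_, ?_, ?_, ?_, ?_, ?_, ?_⟩ <;>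
    simp [l1_apply, l2_apply, X_pow_eq_monomial, hX1, hX2, monomial_mul, monomial_pow,
      coeff_monomial, coeff_one, m1, m2, m3, Finsupp.ext_iff, Fin.forall_fin_succ,
      Finsupp.single_apply, Finsupp.add_apply, Finsupp.smul_apply]

end

end Stmt13Aux
theorem stmt_13 (I : Ideal (MvPolynomial (Fin 3) (ZMod 2)))
    (hI : I = Ideal.span {X 0 ^ 2, X 1 * (X 0 + X 1), X 2 ^ 2}) :
    ((1 : MvPolynomial (Fin 3) (ZMod 2) ⧸ I) ⊗ₜ[ZMod 2] (Ideal.Quotient.mk I (X 1))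
        + (Ideal.Quotient.mk I (X 1)) ⊗ₜ[ZMod 2] 1) ^ 3
      * ((1 : MvPolynomial (Fin 3) (ZMod 2) ⧸ I) ⊗ₜ[ZMod 2] (Ideal.Quotient.mk I (X 2))
        + (Ideal.Quotient.mk I (X 2)) ⊗ₜ[ZMod 2] 1) ≠ 0 := by
  intro hz
  have hk1 : ∀ f ∈ I, Stmt13Aux.l1 f = 0 := by
    rw [hI]
    exact Stmt13Aux.ker_of_gens _ Stmt13Aux.l1_mul_g1 Stmt13Aux.l1_mul_g2 Stmt13Aux.l1_mul_g3
  have hk2 : ∀ f ∈ I, Stmt13Aux.l2 f = 0 := by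
    rw [hI]
    exact Stmt13Aux.ker_of_gens _ Stmt13Aux.l2_mul_g1 Stmt13Aux.l2_mul_g2 Stmt13Aux.l2_mul_g3
  set R := MvPolynomial (Fin 3) (ZMod 2) ⧸ I with hR
  set b : R := Ideal.Quotient.mk I (X 1) with hb
  set c : R := Ideal.Quotient.mk I (X 2) with hc
  have h2 : (2 : R ⊗[ZMod 2] R) = 0 := by
    rw [← map_ofNat (algebraMap (ZMod 2) (R ⊗[ZMod 2] R)) 2,
      show (2 : ZMod 2) = 0 from rfl, map_zero]
  have key : ((1 : R) ⊗ₜ[ZMod 2] b + b ⊗ₜ[ZMod 2] (1 : R)) ^ 3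
      * ((1 : R) ⊗ₜ[ZMod 2] c + c ⊗ₜ[ZMod 2] (1 : R))
      = ((1 : R) ⊗ₜ[ZMod 2] (b^3*c)) + (c ⊗ₜ[ZMod 2] (b^3)) + (b ⊗ₜ[ZMod 2] (b^2*c))
        + ((b*c) ⊗ₜ[ZMod 2] (b^2)) + ((b^2) ⊗ₜ[ZMod 2] (b*c)) + ((b^2*c) ⊗ₜ[ZMod 2] b)
        + ((b^3) ⊗ₜ[ZMod 2] c) + ((b^3*c) ⊗ₜ[ZMod 2] (1 : R)) := by
    set u : R ⊗[ZMod 2] R := (1 : R) ⊗ₜ[ZMod 2] b with hu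
    set v : R ⊗[ZMod 2] R := b ⊗ₜ[ZMod 2] (1 : R) with hv
    set w : R ⊗[ZMod 2] R := (1 : R) ⊗ₜ[ZMod 2] c with hw
    set t : R ⊗[ZMod 2] R := c ⊗ₜ[ZMod 2] (1 : R) with ht
    have expand : (u + v) ^ 3 * (w + t)
        = u^3*w + u^3*t + u^2*v*w + u^2*v*t + u*v^2*w + u*v^2*t + v^3*w + v^3*t := by
      linear_combination ((u^2*v + u*v^2)*(w + t)) * h2
    rw [expand, hu, hv, hw, ht]
    rw [Algebra.TensorProduct.tmul_pow]
    simp only [Algebra.TensorProduct.tmul_pow, Algebra.TensorProduct.tmul_mul_tmul,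
      one_pow, one_mul, mul_one]
  obtain ⟨v1, v2, v3, v4, v5, v6, v7, v8, w1, w2, w3, w4, w5, w6, w7, w8⟩ :=
    Stmt13Aux.coeff_vals
  have e0 : (1 : R) = Ideal.Quotient.mk I 1 := (map_one _).symm
  have eb2 : b^2 = Ideal.Quotient.mk I (X 1 ^ 2) := by rw [hb, map_pow]
  have eb3 : b^3 = Ideal.Quotient.mk I (X 1 ^ 3) := by rw [hb, map_pow]
  have ebc : b*c = Ideal.Quotient.mk I (X 1 * X 2) := by rw [hb, hc, map_mul]
  have eb2c : b^2*c = Ideal.Quotient.mk I (X 1 ^ 2 * X 2) := by rw [eb2, hc, map_mul]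
  have eb3c : b^3*c = Ideal.Quotient.mk I (X 1 ^ 3 * X 2) := by rw [eb3, hc, map_mul]
  have hΛ := congrArg
    (fun x => (TensorProduct.lid (ZMod 2) (ZMod 2))
      ((TensorProduct.map (Stmt13Aux.q1 I hk1) (Stmt13Aux.q2 I hk2)) x)) hz
  rw [key] at hΛ
  simp only [map_add, TensorProduct.map_tmul, TensorProduct.lid_tmul, smul_eq_mul,
    map_zero, e0, eb2, eb3, ebc, eb2c, eb3c, hb, hc,
    Stmt13Aux.q1_mk, Stmt13Aux.q2_mk,
    v1, v2, v3, v4, v5, v6, v7, v8, w1, w2, w3, w4, w5, w6, w7, w8] at hΛ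
  simp only [← map_mul, ← map_pow, Stmt13Aux.q1_mk, Stmt13Aux.q2_mk, v3, v6, w3, w6] at hΛ
  norm_num at hΛ
end

section
/- Let R = (ℤ/2)[y₁,y₂,y₃]/I where I is the ideal generated by y₁², y₂·(y₁+y₂) and y₃·(y₂+y₃), and write ȳ_j for the image of y_j in R. Then in the tensor product R ⊗_{ℤ/2} R one has (1 ⊗ ȳ₂ + ȳ₂ ⊗ 1)^{2} · (1 ⊗ ȳ₃ + ȳ₃ ⊗ 1)^{3} ≠ 0. -/
open MvPolynomial TensorProduct

set_option synthInstance.maxHeartbeats 1000000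
set_option maxHeartbeats 1000000

namespace Stmt14Aux

abbrev P := MvPolynomial (Fin 3) (ZMod 2)

noncomputable def m110 : Fin 3 →₀ ℕ := Finsupp.single 0 1 + Finsupp.single 1 1
noncomputable def m020 : Fin 3 →₀ ℕ := Finsupp.single 1 2
noncomputable def m021 : Fin 3 →₀ ℕ := Finsupp.single 1 2 + Finsupp.single 2 1
noncomputable def m012 : Fin 3 →₀ ℕ := Finsupp.single 1 1 + Finsupp.single 2 2
noncomputable def m003 : Fin 3 →₀ ℕ := Finsupp.single 2 3
noncomputable def m111 : Fin 3 →₀ ℕ := Finsupp.single 0 1 + Finsupp.single 1 1 + Finsupp.single 2 1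
noncomputable def m102 : Fin 3 →₀ ℕ := Finsupp.single 0 1 + Finsupp.single 2 2

noncomputable def ℓv : P →ₗ[ZMod 2] ZMod 2 := lcoeff (ZMod 2) m110 + lcoeff (ZMod 2) m020
noncomputable def ℓw : P →ₗ[ZMod 2] ZMod 2 :=
  lcoeff (ZMod 2) m021 + lcoeff (ZMod 2) m012 + lcoeff (ZMod 2) m003
  + lcoeff (ZMod 2) m111 + lcoeff (ZMod 2) m102

lemma lv_apply (p : P) : ℓv p = coeff m110 p + coeff m020 p := rfl
lemma lw_apply (p : P) :
    ℓw p = coeff m021 p + coeff m012 p + coeff m003 p + coeff m111 p + coeff m102 p := rfl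

lemma lv_g1 (p : P) : ℓv (p * (X 0 ^ 2)) = 0 := by
  have h : p * (X 0 ^ 2) = (p * X 0) * X 0 := by ring
  rw [lv_apply, h]
  simp only [coeff_mul_X', m110, m020, Finsupp.mem_support_iff]
  norm_num [Finsupp.single_apply, Finsupp.add_apply, Fin.ext_iff]

lemma lv_g2 (p : P) : ℓv (p * (X 1 * (X 0 + X 1))) = 0 := by
  have h : p * (X 1 * (X 0 + X 1)) = (p * X 1) * X 0 + (p * X 1) * X 1 := by ring
  rw [lv_apply, h]
  simp only [coeff_add, coeff_mul_X', m110, m020, Finsupp.mem_support_iff]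
  norm_num [Finsupp.single_apply, Finsupp.add_apply, Fin.ext_iff]
  have e : (((Finsupp.single 1 2 : Fin 3 →₀ ℕ) - Finsupp.single 1 1) - Finsupp.single 1 1) = 0 := by
    ext a; fin_cases a <;> simp [Finsupp.single_apply]
  rw [e, CharTwo.add_self_eq_zero]

lemma lv_g3 (p : P) : ℓv (p * (X 2 * (X 1 + X 2))) = 0 := by
  have h : p * (X 2 * (X 1 + X 2)) = (p * X 2) * X 1 + (p * X 2) * X 2 := by ring
  rw [lv_apply, h]
  simp only [coeff_add, coeff_mul_X', m110, m020, Finsupp.mem_support_iff]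
  norm_num [Finsupp.single_apply, Finsupp.add_apply, Fin.ext_iff]

lemma lw_g1 (p : P) : ℓw (p * (X 0 ^ 2)) = 0 := by
  have h : p * (X 0 ^ 2) = (p * X 0) * X 0 := by ring
  rw [lw_apply, h]
  simp only [coeff_mul_X', m021, m012, m003, m111, m102, Finsupp.mem_support_iff]
  norm_num [Finsupp.single_apply, Finsupp.add_apply, Fin.ext_iff]

lemma lw_g2 (p : P) : ℓw (p * (X 1 * (X 0 + X 1))) = 0 := by
  have h : p * (X 1 * (X 0 + X 1)) = (p * X 1) * X 0 + (p * X 1) * X 1 := by ring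
  rw [lw_apply, h]
  simp only [coeff_add, coeff_mul_X', m021, m012, m003, m111, m102, Finsupp.mem_support_iff]
  norm_num [Finsupp.single_apply, Finsupp.add_apply, Fin.ext_iff]
  have e1 : ((((Finsupp.single 1 2 : Fin 3 →₀ ℕ) + Finsupp.single 2 1) - Finsupp.single 1 1) - Finsupp.single 1 1) = Finsupp.single 2 1 := by
    ext a; fin_cases a <;> simp [Finsupp.single_apply]
  have e2 : (((((Finsupp.single 0 1 : Fin 3 →₀ ℕ) + Finsupp.single 1 1) + Finsupp.single 2 1) - Finsupp.single 0 1) - Finsupp.single 1 1) = Finsupp.single 2 1 := by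
    ext a; fin_cases a <;> simp [Finsupp.single_apply]
  rw [e1, e2, CharTwo.add_self_eq_zero]

lemma lw_g3 (p : P) : ℓw (p * (X 2 * (X 1 + X 2))) = 0 := by
  have h : p * (X 2 * (X 1 + X 2)) = (p * X 2) * X 1 + (p * X 2) * X 2 := by ring
  rw [lw_apply, h]
  simp only [coeff_add, coeff_mul_X', m021, m012, m003, m111, m102, Finsupp.mem_support_iff]
  norm_num [Finsupp.single_apply, Finsupp.add_apply, Fin.ext_iff]
  have eA : ((((Finsupp.single 1 2 : Fin 3 →₀ ℕ) + Finsupp.single 2 1) - Finsupp.single 1 1) - Finsupp.single 2 1) = Finsupp.single 1 1 := by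
    ext a; fin_cases a <;> simp [Finsupp.single_apply]
  have eB : (((Finsupp.single 2 2 : Fin 3 →₀ ℕ)) - Finsupp.single 2 1) = Finsupp.single 2 1 := by
    ext a; fin_cases a <;> simp [Finsupp.single_apply]
  have eC : ((((Finsupp.single 1 1 : Fin 3 →₀ ℕ) + Finsupp.single 2 2) - Finsupp.single 2 1) - Finsupp.single 2 1) = Finsupp.single 1 1 := by
    ext a; fin_cases a <;> simp [Finsupp.single_apply]
  have eD : (((Finsupp.single 2 3 : Fin 3 →₀ ℕ) - Finsupp.single 2 1) - Finsupp.single 2 1) = Finsupp.single 2 1 := by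
    ext a; fin_cases a <;> simp [Finsupp.single_apply]
  have eE : (((((Finsupp.single 0 1 : Fin 3 →₀ ℕ) + Finsupp.single 1 1) + Finsupp.single 2 1) - Finsupp.single 1 1) - Finsupp.single 2 1) = Finsupp.single 0 1 := by
    ext a; fin_cases a <;> simp [Finsupp.single_apply]
  have eF : ((((Finsupp.single 0 1 : Fin 3 →₀ ℕ) + Finsupp.single 2 2) - Finsupp.single 2 1) - Finsupp.single 2 1) = Finsupp.single 0 1 := by
    ext a; fin_cases a <;> simp [Finsupp.single_apply]
  rw [eA, eB, eC, eD, eE, eF]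
  have two : ∀ x : ZMod 2, x + x = 0 := fun x => CharTwo.add_self_eq_zero x
  linear_combination two (coeff (Finsupp.single 1 1) p) + two (coeff (Finsupp.single 2 1) p) + two (coeff (Finsupp.single 0 1) p)

lemma span_kill (ℓ : P →ₗ[ZMod 2] ZMod 2)
    (h1 : ∀ p, ℓ (p * (X 0 ^ 2)) = 0) (h2 : ∀ p, ℓ (p * (X 1 * (X 0 + X 1))) = 0)
    (h3 : ∀ p, ℓ (p * (X 2 * (X 1 + X 2))) = 0) :
    ∀ x ∈ Ideal.span {X 0 ^ 2, X 1 * (X 0 + X 1), X 2 * (X 1 + X 2)}, ℓ x = 0 := by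
  intro x hx
  rw [show ({X 0 ^ 2, X 1 * (X 0 + X 1), X 2 * (X 1 + X 2)} : Set P)
      = insert (X 0 ^ 2) {X 1 * (X 0 + X 1), X 2 * (X 1 + X 2)} from rfl,
    Ideal.mem_span_insert] at hx
  obtain ⟨a, z, hz, rfl⟩ := hx
  rw [Ideal.mem_span_insert] at hz
  obtain ⟨b, w, hw, rfl⟩ := hz
  rw [Ideal.mem_span_singleton'] at hw
  obtain ⟨c, rfl⟩ := hw
  have k1 := h1 a; have k2 := h2 b; have k3 := h3 c
  rw [mul_comm a, mul_comm b, mul_comm c] at *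
  simp only [map_add, k1, k2, k3, add_zero, zero_add]

noncomputable def Lq (I : Ideal P) (ℓ : P →ₗ[ZMod 2] ZMod 2) (h : ∀ x ∈ I, ℓ x = 0) :
    (P ⧸ I) →ₗ[ZMod 2] ZMod 2 :=
  (Submodule.liftQ (I.restrictScalars (ZMod 2)) ℓ (fun x hx => h x hx)) ∘ₗ
    (Submodule.Quotient.restrictScalarsEquiv (ZMod 2) I).symm.toLinearMap

lemma Lq_mk (I : Ideal P) (ℓ : P →ₗ[ZMod 2] ZMod 2) (h : ∀ x ∈ I, ℓ x = 0) (p : P) :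
    Lq I ℓ h (Ideal.Quotient.mk I p) = ℓ p := by
  simp [Lq, Submodule.Quotient.restrictScalarsEquiv]
  rfl

-- value computations
lemma coeff_X_deg2 (i : Fin 3) (m : Fin 3 →₀ ℕ) (h : m 0 + m 1 + m 2 ≠ 1) :
    coeff m (X i : P) = 0 := by
  classical
  rw [coeff_X', if_neg]
  intro e
  apply h
  rw [← e]
  fin_cases i <;> simp [Finsupp.single_apply, Finsupp.add_apply]

lemma coeff_X_ne (i : Fin 3) (m : Fin 3 →₀ ℕ) (h : m i ≠ 1) :
    coeff m (X i : P) = 0 := by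
  classical
  rw [coeff_X', if_neg]
  intro e
  apply h
  rw [← e]
  simp [Finsupp.single_apply]


lemma lv_X0X1 : ℓv (X 0 * X 1) = 1 := by
  rw [lv_apply]
  simp only [coeff_mul_X', m110, m020, Finsupp.mem_support_iff]
  norm_num [Finsupp.single_apply, Finsupp.add_apply, Fin.ext_iff]
  simp [coeff_X_deg2, coeff_X_ne, Finsupp.tsub_apply, Finsupp.add_apply, Finsupp.single_apply]

lemma lv_X1X2 : ℓv (X 1 * X 2) = 0 := by
  rw [lv_apply]
  simp only [coeff_mul_X', m110, m020, Finsupp.mem_support_iff]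
  norm_num [Finsupp.single_apply, Finsupp.add_apply, Fin.ext_iff]

lemma lv_X0X1X2 : ℓv (X 0 * X 1 * X 2) = 0 := by
  rw [lv_apply]
  simp only [coeff_mul_X', m110, m020, Finsupp.mem_support_iff]
  norm_num [Finsupp.single_apply, Finsupp.add_apply, Fin.ext_iff]

lemma lw_X0X1 : ℓw (X 0 * X 1) = 0 := by
  rw [lw_apply]
  simp only [coeff_mul_X', m021, m012, m003, m111, m102, Finsupp.mem_support_iff]
  norm_num [Finsupp.single_apply, Finsupp.add_apply, Fin.ext_iff]
  simp [coeff_X_deg2, coeff_X_ne, Finsupp.tsub_apply, Finsupp.add_apply, Finsupp.single_apply]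

lemma lw_X1X2 : ℓw (X 1 * X 2) = 0 := by
  rw [lw_apply]
  simp only [coeff_mul_X', m021, m012, m003, m111, m102, Finsupp.mem_support_iff]
  norm_num [Finsupp.single_apply, Finsupp.add_apply, Fin.ext_iff]
  simp [coeff_X_deg2, coeff_X_ne, Finsupp.tsub_apply, Finsupp.add_apply, Finsupp.single_apply]

lemma lw_X0X1X2 : ℓw (X 0 * X 1 * X 2) = 1 := by
  rw [lw_apply]
  simp only [coeff_mul_X', m021, m012, m003, m111, m102, Finsupp.mem_support_iff]
  norm_num [Finsupp.single_apply, Finsupp.add_apply, Fin.ext_iff]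
  simp [coeff_X_deg2, coeff_X_ne, Finsupp.tsub_apply, Finsupp.add_apply, Finsupp.single_apply]

end Stmt14Aux

lemma key_identity {T : Type*} [CommRing T] (Y0 Y1 Y2 Z0 Z1 Z2 : T)
    (h2T : (2 : T) = 0) (HY0 : Y0 * Y0 = 0) (HY1 : Y1 * Y1 = Y0 * Y1) (HY2 : Y2 * Y2 = Y1 * Y2)
    (HZ0 : Z0 * Z0 = 0) (HZ1 : Z1 * Z1 = Z0 * Z1) (HZ2 : Z2 * Z2 = Z1 * Z2) :
    (Y1 + Z1) ^ 2 * (Y2 + Z2) ^ 3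
      = Z1*Z2*(Y0*(Y1*Y2)) + Z0*(Z1*Z2)*(Y0*Y1) + Z0*Z1*(Y0*(Y1*Y2)) + Z0*(Z1*Z2)*(Y1*Y2) := by
  linear_combination (3*Y1*Y2*Z2 + 2*Y1*Y2*Z1 + Y1*Y2^2) * HY0
    + (Z2^3 + 3*Y2*Z2^2 + 6*Y2*Z1*Z2 + Y2*Z1^2 + 3*Y2^2*Z2 + 2*Y2^2*Z1 + Y2^3 + 3*Y0*Y2*Z2 + 2*Y0*Y2*Z1 + Y0*Y2^2) * HY1
    + (3*Z1^2*Z2 + Y2*Z1^2 + 6*Y1*Z1*Z2 + Y1*Z1^2 + 2*Y1*Y2*Z1 + 3*Y0*Y1*Z2 + 2*Y0*Y1*Z1 + Y0*Y1*Y2) * HY2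
    + (Z1*Z2^2 + 3*Y2*Z1*Z2 + 2*Y1*Z1*Z2) * HZ0
    + (Z2^3 + Z0*Z2^2 + 3*Y2*Z2^2 + 3*Y2*Z0*Z2 + 2*Y1*Z2^2 + 2*Y1*Z0*Z2 + 9*Y1*Y2*Z2 + Y0*Y1*Z2 + Y0*Y1*Y2) * HZ1
    + (Z0*Z1*Z2 + 3*Y2*Z0*Z1 + 2*Y1*Z1*Z2 + 2*Y1*Z0*Z1 + 6*Y1*Y2*Z1 + Y0*Y1*Z2 + Y0*Y1*Z1 + 3*Y0*Y1*Y2) * HZ2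
    + (4*Y1*Y2*Z0*Z1*Z2 + 4*Y0*Y1*Y2*Z1*Z2) * h2T

open Stmt14Aux in
theorem stmt_14 (I : Ideal (MvPolynomial (Fin 3) (ZMod 2)))
    (hI : I = Ideal.span {X 0 ^ 2, X 1 * (X 0 + X 1), X 2 * (X 1 + X 2)}) :
    ((1 : MvPolynomial (Fin 3) (ZMod 2) ⧸ I) ⊗ₜ[ZMod 2] (Ideal.Quotient.mk I (X 1))
        + (Ideal.Quotient.mk I (X 1)) ⊗ₜ[ZMod 2] 1) ^ 2
      * ((1 : MvPolynomial (Fin 3) (ZMod 2) ⧸ I) ⊗ₜ[ZMod 2] (Ideal.Quotient.mk I (X 2))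
        + (Ideal.Quotient.mk I (X 2)) ⊗ₜ[ZMod 2] 1) ^ 3 ≠ 0 := by
  intro hzero
  have hkv : ∀ x ∈ I, ℓv x = 0 := hI ▸ span_kill ℓv lv_g1 lv_g2 lv_g3
  have hkw : ∀ x ∈ I, ℓw x = 0 := hI ▸ span_kill ℓw lw_g1 lw_g2 lw_g3
  set mkI := Ideal.Quotient.mk I with hmk
  set Lv := Lq I ℓv hkv with hLv
  set Lw := Lq I ℓw hkw with hLw
  set F := (TensorProduct.lid (ZMod 2) (ZMod 2)).toLinearMap.comp (TensorProduct.map Lv Lw) with hFdef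
  have hF : ∀ u v : MvPolynomial (Fin 3) (ZMod 2) ⧸ I, F (u ⊗ₜ[ZMod 2] v) = Lv u * Lw v := by
    intro u v
    simp [hFdef, smul_eq_mul]
  -- relations in A
  have two : ∀ x : MvPolynomial (Fin 3) (ZMod 2) ⧸ I, x + x = 0 := fun x => by
    rw [← two_smul (ZMod 2) x, show (2 : ZMod 2) = 0 from rfl, zero_smul]
  have mem1 : (X 0 : P) * X 0 ∈ I := by
    rw [hI, show (X 0 : P) * X 0 = X 0 ^ 2 from by ring]
    exact Ideal.subset_span (by simp)
  have mem2 : (X 1 : P) * (X 0 + X 1) ∈ I := by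
    rw [hI]; exact Ideal.subset_span (by simp)
  have mem3 : (X 2 : P) * (X 1 + X 2) ∈ I := by
    rw [hI]; exact Ideal.subset_span (by simp)
  have hy0 : mkI (X 0) * mkI (X 0) = 0 := by
    rw [← map_mul]; exact Ideal.Quotient.eq_zero_iff_mem.2 mem1
  have e2 : mkI (X 1) * (mkI (X 0) + mkI (X 1)) = 0 := by
    rw [← map_add, ← map_mul]; exact Ideal.Quotient.eq_zero_iff_mem.2 mem2
  have e3 : mkI (X 2) * (mkI (X 1) + mkI (X 2)) = 0 := by
    rw [← map_add, ← map_mul]; exact Ideal.Quotient.eq_zero_iff_mem.2 mem3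
  have hy1 : mkI (X 1) * mkI (X 1) = mkI (X 0) * mkI (X 1) := by
    linear_combination e2 - two (mkI (X 0) * mkI (X 1))
  have hy2 : mkI (X 2) * mkI (X 2) = mkI (X 1) * mkI (X 2) := by
    linear_combination e3 - two (mkI (X 1) * mkI (X 2))
  -- tensor relations
  set Y0 := (1 : MvPolynomial (Fin 3) (ZMod 2) ⧸ I) ⊗ₜ[ZMod 2] mkI (X 0) with hY0
  set Y1 := (1 : MvPolynomial (Fin 3) (ZMod 2) ⧸ I) ⊗ₜ[ZMod 2] mkI (X 1) with hY1
  set Y2 := (1 : MvPolynomial (Fin 3) (ZMod 2) ⧸ I) ⊗ₜ[ZMod 2] mkI (X 2) with hY2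
  set Z0 := mkI (X 0) ⊗ₜ[ZMod 2] (1 : MvPolynomial (Fin 3) (ZMod 2) ⧸ I) with hZ0
  set Z1 := mkI (X 1) ⊗ₜ[ZMod 2] (1 : MvPolynomial (Fin 3) (ZMod 2) ⧸ I) with hZ1
  set Z2 := mkI (X 2) ⊗ₜ[ZMod 2] (1 : MvPolynomial (Fin 3) (ZMod 2) ⧸ I) with hZ2
  have twoT : ∀ x : (MvPolynomial (Fin 3) (ZMod 2) ⧸ I) ⊗[ZMod 2] (MvPolynomial (Fin 3) (ZMod 2) ⧸ I), x + x = 0 := fun x => by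
    rw [← two_smul (ZMod 2) x, show (2 : ZMod 2) = 0 from rfl, zero_smul]
  have h2T : (2 : (MvPolynomial (Fin 3) (ZMod 2) ⧸ I) ⊗[ZMod 2] (MvPolynomial (Fin 3) (ZMod 2) ⧸ I)) = 0 := by
    have := twoT 1
    calc (2 : (MvPolynomial (Fin 3) (ZMod 2) ⧸ I) ⊗[ZMod 2] (MvPolynomial (Fin 3) (ZMod 2) ⧸ I)) = 1 + 1 := by norm_num
    _ = 0 := this
  have HY0 : Y0 * Y0 = 0 := by
    rw [hY0, Algebra.TensorProduct.tmul_mul_tmul, hy0, tmul_zero]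
  have HY1 : Y1 * Y1 = Y0 * Y1 := by
    rw [hY0, hY1, Algebra.TensorProduct.tmul_mul_tmul, Algebra.TensorProduct.tmul_mul_tmul, hy1]
  have HY2 : Y2 * Y2 = Y1 * Y2 := by
    rw [hY1, hY2, Algebra.TensorProduct.tmul_mul_tmul, Algebra.TensorProduct.tmul_mul_tmul, hy2]
  have HZ0 : Z0 * Z0 = 0 := by
    rw [hZ0, Algebra.TensorProduct.tmul_mul_tmul, hy0, zero_tmul]
  have HZ1 : Z1 * Z1 = Z0 * Z1 := by
    rw [hZ0, hZ1, Algebra.TensorProduct.tmul_mul_tmul, Algebra.TensorProduct.tmul_mul_tmul, hy1]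
  have HZ2 : Z2 * Z2 = Z1 * Z2 := by
    rw [hZ1, hZ2, Algebra.TensorProduct.tmul_mul_tmul, Algebra.TensorProduct.tmul_mul_tmul, hy2]
  -- main algebraic identity
  have hE : (Y1 + Z1) ^ 2 * (Y2 + Z2) ^ 3
      = Z1*Z2*(Y0*(Y1*Y2)) + Z0*(Z1*Z2)*(Y0*Y1) + Z0*Z1*(Y0*(Y1*Y2)) + Z0*(Z1*Z2)*(Y1*Y2) :=
    key_identity Y0 Y1 Y2 Z0 Z1 Z2 h2T HY0 HY1 HY2 HZ0 HZ1 HZ2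
  rw [hzero] at hE
  -- convert to pure tensors
  simp only [hY0, hY1, hY2, hZ0, hZ1, hZ2, Algebra.TensorProduct.tmul_mul_tmul,
    one_mul, mul_one] at hE
  have hFE := congrArg F hE.symm
  simp only [map_add, hF, map_zero] at hFE
  rw [show mkI (X 1) * mkI (X 2) = mkI (X 1 * X 2) from (map_mul _ _ _).symm] at hFE
  rw [show mkI (X 0) * mkI (X 1) = mkI (X 0 * X 1) from (map_mul _ _ _).symm] at hFE
  rw [show mkI (X 0) * mkI (X 1 * X 2) = mkI (X 0 * X 1 * X 2) from by
    rw [← map_mul]; exact congrArg mkI (by ring)] at hFE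
  rw [hLv, hLw, hmk] at hFE
  simp only [Lq_mk, lv_X0X1, lv_X1X2, lv_X0X1X2, lw_X0X1, lw_X1X2, lw_X0X1X2] at hFE
  norm_num at hFE
end

section
/- Let R = (ℤ/2)[y₁,y₂,y₃,y₄]/I where I is the ideal generated by y₁², y₂·(y₁+y₂), y₃·(y₂+y₃) and y₄·(y₂+y₃+y₄), and write ȳ_j for the image of y_j in R. Then in the tensor product R ⊗_{ℤ/2} R one has (1 ⊗ ȳ₂ + ȳ₂ ⊗ 1) · (1 ⊗ ȳ₃ + ȳ₃ ⊗ 1)^{3} · (1 ⊗ ȳ₄ + ȳ₄ ⊗ 1)^{3} ≠ 0. -/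
open MvPolynomial TensorProduct Matrix Kronecker

set_option synthInstance.maxHeartbeats 1000000
set_option maxHeartbeats 1000000
set_option maxRecDepth 100000


def Nc0 : Matrix (Fin 16) (Fin 16) (ZMod 2) :=
  Matrix.of fun i j => if Nat.testBit 226158149741384028720572606924675209698840901435382834155821487067454504960 (i.val * 16 + j.val) then 1 else 0

def Nc1 : Matrix (Fin 16) (Fin 16) (ZMod 2) :=
  Matrix.of fun i j => if Nat.testBit 3844688545603528488236708006239248939961342196669179181130493858050358640640 (i.val * 16 + j.val) then 1 else 0

def Nc2 : Matrix (Fin 16) (Fin 16) (ZMod 2) :=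
  Matrix.of fun i j => if Nat.testBit 18318810127985811238085364272960917882043587036234135520767236354624316243968 (i.val * 16 + j.val) then 1 else 0

def Nc3 : Matrix (Fin 16) (Fin 16) (ZMod 2) :=
  Matrix.of fun i j => if Nat.testBit 43422033465902358570478837959086564017916494450024289048553837260549577048064 (i.val * 16 + j.val) then 1 else 0

def Mc0 : Matrix (Fin 8) (Fin 8) (ZMod 2) :=
  Matrix.of fun i j => if Nat.testBit 577588855528488960 (i.val * 8 + j.val) then 1 else 0

def Mc1 : Matrix (Fin 8) (Fin 8) (ZMod 2) :=
  Matrix.of fun i j => if Nat.testBit 2887933261084950528 (i.val * 8 + j.val) then 1 else 0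

def Mc2 : Matrix (Fin 8) (Fin 8) (ZMod 2) :=
  Matrix.of fun i j => if Nat.testBit 7494007372231213312 (i.val * 8 + j.val) then 1 else 0

def ua0 : Fin 8 → ZMod 2 :=
  fun v => if Nat.testBit 1 v.val then 1 else 0

def ua1 : Fin 8 → ZMod 2 :=
  fun v => if Nat.testBit 2 v.val then 1 else 0

def ua2 : Fin 8 → ZMod 2 :=
  fun v => if Nat.testBit 8 v.val then 1 else 0

def ua3 : Fin 8 → ZMod 2 :=
  fun v => if Nat.testBit 128 v.val then 1 else 0

def xa0 : Fin 16 → ZMod 2 :=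
  fun v => if Nat.testBit 1 v.val then 1 else 0

def xa1 : Fin 16 → ZMod 2 :=
  fun v => if Nat.testBit 2 v.val then 1 else 0

def xa2 : Fin 16 → ZMod 2 :=
  fun v => if Nat.testBit 40 v.val then 1 else 0

def xa3 : Fin 16 → ZMod 2 :=
  fun v => if Nat.testBit 8320 v.val then 1 else 0

def xa4 : Fin 16 → ZMod 2 :=
  fun v => if Nat.testBit 32768 v.val then 1 else 0

def Mc : Fin 4 → Matrix (Fin 8) (Fin 8) (ZMod 2)
  | 0 => Mc0 | 1 => Mc1 | 2 => Mc2 | 3 => 0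

def Nc : Fin 4 → Matrix (Fin 16) (Fin 16) (ZMod 2)
  | 0 => Nc0 | 1 => Nc1 | 2 => Nc2 | 3 => Nc3

def Pm (i : Fin 4) : Matrix (Fin 8 × Fin 16) (Fin 8 × Fin 16) (ZMod 2) :=
  (Mc i) ⊗ₖ (1 : Matrix (Fin 16) (Fin 16) (ZMod 2))

def Qm (i : Fin 4) : Matrix (Fin 8 × Fin 16) (Fin 8 × Fin 16) (ZMod 2) :=
  (1 : Matrix (Fin 8) (Fin 8) (ZMod 2)) ⊗ₖ (Nc i)

def tens (u : Fin 8 → ZMod 2) (x : Fin 16 → ZMod 2) : Fin 8 × Fin 16 → ZMod 2 :=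
  fun p => u p.1 * x p.2

lemma kron_mulVec (A : Matrix (Fin 8) (Fin 8) (ZMod 2)) (B : Matrix (Fin 16) (Fin 16) (ZMod 2))
    (u : Fin 8 → ZMod 2) (x : Fin 16 → ZMod 2) :
    (A ⊗ₖ B) *ᵥ tens u x = tens (A *ᵥ u) (B *ᵥ x) := by
  funext p
  obtain ⟨i, k⟩ := p
  simp only [Matrix.mulVec, dotProduct, tens, Matrix.kroneckerMap_apply,
    Fintype.sum_prod_type]
  rw [Finset.sum_mul_sum]
  refine Finset.sum_congr rfl fun j _ => Finset.sum_congr rfl fun l _ => by ring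

lemma mc01 : Mc 0 * Mc 1 = Mc 1 * Mc 0 := by decide
lemma mc02 : Mc 0 * Mc 2 = Mc 2 * Mc 0 := by decide
lemma mc03 : Mc 0 * Mc 3 = Mc 3 * Mc 0 := by decide
lemma mc12 : Mc 1 * Mc 2 = Mc 2 * Mc 1 := by decide
lemma mc13 : Mc 1 * Mc 3 = Mc 3 * Mc 1 := by decide
lemma mc23 : Mc 2 * Mc 3 = Mc 3 * Mc 2 := by decide
lemma McComm : ∀ i j, Mc i * Mc j = Mc j * Mc i := by
  intro i j
  fin_cases i <;> fin_cases j
  exacts [rfl, mc01, mc02, mc03, mc01.symm, rfl, mc12, mc13,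
    mc02.symm, mc12.symm, rfl, mc23, mc03.symm, mc13.symm, mc23.symm, rfl]

lemma nc01 : Nc 0 * Nc 1 = Nc 1 * Nc 0 := by decide
lemma nc02 : Nc 0 * Nc 2 = Nc 2 * Nc 0 := by decide
lemma nc03 : Nc 0 * Nc 3 = Nc 3 * Nc 0 := by decide
lemma nc12 : Nc 1 * Nc 2 = Nc 2 * Nc 1 := by decide
lemma nc13 : Nc 1 * Nc 3 = Nc 3 * Nc 1 := by decide
lemma nc23 : Nc 2 * Nc 3 = Nc 3 * Nc 2 := by decide
lemma NcComm : ∀ i j, Nc i * Nc j = Nc j * Nc i := by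
  intro i j
  fin_cases i <;> fin_cases j
  exacts [rfl, nc01, nc02, nc03, nc01.symm, rfl, nc12, nc13,
    nc02.symm, nc12.symm, rfl, nc23, nc03.symm, nc13.symm, nc23.symm, rfl]

-- relations
lemma relP0 : Pm 0 * Pm 0 = 0 := by
  simp only [Pm]
  rw [← Matrix.mul_kronecker_mul,
    show Mc 0 * Mc 0 = (0 : Matrix (Fin 8) (Fin 8) (ZMod 2)) from by decide,
    Matrix.zero_kronecker]

lemma relP1 : Pm 1 * (Pm 0 + Pm 1) = 0 := by
  simp only [Pm]
  rw [← Matrix.add_kronecker, ← Matrix.mul_kronecker_mul,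
    show Mc 1 * (Mc 0 + Mc 1) = (0 : Matrix (Fin 8) (Fin 8) (ZMod 2)) from by decide,
    Matrix.zero_kronecker]

lemma relP2 : Pm 2 * (Pm 1 + Pm 2) = 0 := by
  simp only [Pm]
  rw [← Matrix.add_kronecker, ← Matrix.mul_kronecker_mul,
    show Mc 2 * (Mc 1 + Mc 2) = (0 : Matrix (Fin 8) (Fin 8) (ZMod 2)) from by decide,
    Matrix.zero_kronecker]

lemma relP3 : Pm 3 * (Pm 1 + Pm 2 + Pm 3) = 0 := by
  simp only [Pm]
  rw [← Matrix.add_kronecker, ← Matrix.add_kronecker, ← Matrix.mul_kronecker_mul,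
    show Mc 3 * (Mc 1 + Mc 2 + Mc 3) = (0 : Matrix (Fin 8) (Fin 8) (ZMod 2)) from by decide,
    Matrix.zero_kronecker]

lemma relQ0 : Qm 0 * Qm 0 = 0 := by
  simp only [Qm]
  rw [← Matrix.mul_kronecker_mul,
    show Nc 0 * Nc 0 = (0 : Matrix (Fin 16) (Fin 16) (ZMod 2)) from by decide,
    Matrix.kronecker_zero]

lemma relQ1 : Qm 1 * (Qm 0 + Qm 1) = 0 := by
  simp only [Qm]
  rw [← Matrix.kronecker_add, ← Matrix.mul_kronecker_mul,
    show Nc 1 * (Nc 0 + Nc 1) = (0 : Matrix (Fin 16) (Fin 16) (ZMod 2)) from by decide,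
    Matrix.kronecker_zero]

lemma relQ2 : Qm 2 * (Qm 1 + Qm 2) = 0 := by
  simp only [Qm]
  rw [← Matrix.kronecker_add, ← Matrix.mul_kronecker_mul,
    show Nc 2 * (Nc 1 + Nc 2) = (0 : Matrix (Fin 16) (Fin 16) (ZMod 2)) from by decide,
    Matrix.kronecker_zero]

lemma relQ3 : Qm 3 * (Qm 1 + Qm 2 + Qm 3) = 0 := by
  simp only [Qm]
  rw [← Matrix.kronecker_add, ← Matrix.kronecker_add, ← Matrix.mul_kronecker_mul,
    show Nc 3 * (Nc 1 + Nc 2 + Nc 3) = (0 : Matrix (Fin 16) (Fin 16) (ZMod 2)) from by decide,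
    Matrix.kronecker_zero]

lemma commPP (i j : Fin 4) : Pm i * Pm j = Pm j * Pm i := by
  simp only [Pm]
  rw [← Matrix.mul_kronecker_mul, ← Matrix.mul_kronecker_mul, McComm, one_mul]

lemma commQQ (i j : Fin 4) : Qm i * Qm j = Qm j * Qm i := by
  simp only [Qm]
  rw [← Matrix.mul_kronecker_mul, ← Matrix.mul_kronecker_mul, NcComm, one_mul]

lemma commPQ (i j : Fin 4) : Pm i * Qm j = Qm j * Pm i := by
  simp only [Pm, Qm]
  rw [← Matrix.mul_kronecker_mul, ← Matrix.mul_kronecker_mul, one_mul, mul_one, one_mul, mul_one]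

-- commutative subalgebras
noncomputable instance instCommP : CommRing ↥(Algebra.adjoin (ZMod 2) (Set.range Pm)) :=
  Algebra.adjoinCommRingOfComm (ZMod 2) (by rintro _ ⟨i, rfl⟩ _ ⟨j, rfl⟩; exact commPP i j)

noncomputable instance instCommQ : CommRing ↥(Algebra.adjoin (ZMod 2) (Set.range Qm)) :=
  Algebra.adjoinCommRingOfComm (ZMod 2) (by rintro _ ⟨i, rfl⟩ _ ⟨j, rfl⟩; exact commQQ i j)

noncomputable def pP : Fin 4 → ↥(Algebra.adjoin (ZMod 2) (Set.range Pm)) :=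
  fun i => ⟨Pm i, Algebra.subset_adjoin (Set.mem_range_self i)⟩

noncomputable def pQ : Fin 4 → ↥(Algebra.adjoin (ZMod 2) (Set.range Qm)) :=
  fun i => ⟨Qm i, Algebra.subset_adjoin (Set.mem_range_self i)⟩

noncomputable def φP : MvPolynomial (Fin 4) (ZMod 2) →ₐ[ZMod 2]
    Matrix (Fin 8 × Fin 16) (Fin 8 × Fin 16) (ZMod 2) :=
  ((Algebra.adjoin (ZMod 2) (Set.range Pm)).val).comp (aeval pP)

noncomputable def φQ : MvPolynomial (Fin 4) (ZMod 2) →ₐ[ZMod 2]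
    Matrix (Fin 8 × Fin 16) (Fin 8 × Fin 16) (ZMod 2) :=
  ((Algebra.adjoin (ZMod 2) (Set.range Qm)).val).comp (aeval pQ)

lemma φP_X (i : Fin 4) : φP (X i) = Pm i := by
  simp [φP, aeval_X, pP]

lemma φQ_X (i : Fin 4) : φQ (X i) = Qm i := by
  simp [φQ, aeval_X, pQ]

lemma φP_mem (p : MvPolynomial (Fin 4) (ZMod 2)) :
    φP p ∈ Algebra.adjoin (ZMod 2) (Set.range Pm) := by
  simp only [φP, AlgHom.coe_comp, Function.comp_apply, Subalgebra.coe_val]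
  exact ((aeval pP) p).2

lemma φQ_mem (q : MvPolynomial (Fin 4) (ZMod 2)) :
    φQ q ∈ Algebra.adjoin (ZMod 2) (Set.range Qm) := by
  simp only [φQ, AlgHom.coe_comp, Function.comp_apply, Subalgebra.coe_val]
  exact ((aeval pQ) q).2

lemma hgP0 : φP (X 0 ^ 2) = 0 := by
  simp only [pow_two, _root_.map_mul, φP_X]; exact relP0

lemma hgP1 : φP (X 1 * (X 0 + X 1)) = 0 := by
  simp only [_root_.map_mul, _root_.map_add, φP_X]; exact relP1

lemma hgP2 : φP (X 2 * (X 1 + X 2)) = 0 := by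
  simp only [_root_.map_mul, _root_.map_add, φP_X]; exact relP2

lemma hgP3 : φP (X 3 * (X 1 + X 2 + X 3)) = 0 := by
  simp only [_root_.map_mul, _root_.map_add, φP_X]; exact relP3

lemma hgQ0 : φQ (X 0 ^ 2) = 0 := by
  simp only [pow_two, _root_.map_mul, φQ_X]; exact relQ0

lemma hgQ1 : φQ (X 1 * (X 0 + X 1)) = 0 := by
  simp only [_root_.map_mul, _root_.map_add, φQ_X]; exact relQ1

lemma hgQ2 : φQ (X 2 * (X 1 + X 2)) = 0 := by
  simp only [_root_.map_mul, _root_.map_add, φQ_X]; exact relQ2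

lemma hgQ3 : φQ (X 3 * (X 1 + X 2 + X 3)) = 0 := by
  simp only [_root_.map_mul, _root_.map_add, φQ_X]; exact relQ3

lemma hgenP : ∀ a ∈ Ideal.span ({X 0 ^ 2, X 1 * (X 0 + X 1), X 2 * (X 1 + X 2),
    X 3 * (X 1 + X 2 + X 3)} : Set (MvPolynomial (Fin 4) (ZMod 2))), φP a = 0 := by
  intro a ha
  have hle : Ideal.span ({X 0 ^ 2, X 1 * (X 0 + X 1), X 2 * (X 1 + X 2),
      X 3 * (X 1 + X 2 + X 3)} : Set (MvPolynomial (Fin 4) (ZMod 2)))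
      ≤ RingHom.ker φP.toRingHom := by
    rw [Ideal.span_le]
    rintro g hg
    simp only [Set.mem_insert_iff, Set.mem_singleton_iff] at hg
    rcases hg with rfl | rfl | rfl | rfl <;>
      rw [SetLike.mem_coe, RingHom.mem_ker, AlgHom.toRingHom_eq_coe, RingHom.coe_coe]
    exacts [hgP0, hgP1, hgP2, hgP3]
  exact hle ha

lemma hgenQ : ∀ a ∈ Ideal.span ({X 0 ^ 2, X 1 * (X 0 + X 1), X 2 * (X 1 + X 2),
    X 3 * (X 1 + X 2 + X 3)} : Set (MvPolynomial (Fin 4) (ZMod 2))), φQ a = 0 := by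
  intro a ha
  have hle : Ideal.span ({X 0 ^ 2, X 1 * (X 0 + X 1), X 2 * (X 1 + X 2),
      X 3 * (X 1 + X 2 + X 3)} : Set (MvPolynomial (Fin 4) (ZMod 2)))
      ≤ RingHom.ker φQ.toRingHom := by
    rw [Ideal.span_le]
    rintro g hg
    simp only [Set.mem_insert_iff, Set.mem_singleton_iff] at hg
    rcases hg with rfl | rfl | rfl | rfl <;>
      rw [SetLike.mem_coe, RingHom.mem_ker, AlgHom.toRingHom_eq_coe, RingHom.coe_coe]
    exacts [hgQ0, hgQ1, hgQ2, hgQ3]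
  exact hle ha

lemma commPQ_gen : ∀ a ∈ Algebra.adjoin (ZMod 2) (Set.range Pm),
    ∀ b ∈ Algebra.adjoin (ZMod 2) (Set.range Qm), Commute a b := by
  have hQle : Algebra.adjoin (ZMod 2) (Set.range Qm)
      ≤ Subalgebra.centralizer (ZMod 2) (Set.range Pm) := by
    apply Algebra.adjoin_le
    rintro _ ⟨j, rfl⟩
    rw [SetLike.mem_coe, Subalgebra.mem_centralizer_iff]
    rintro _ ⟨i, rfl⟩
    exact commPQ i j
  intro a ha b hb
  have hPle : Algebra.adjoin (ZMod 2) (Set.range Pm)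
      ≤ Subalgebra.centralizer (ZMod 2) ({b} : Set _) := by
    apply Algebra.adjoin_le
    rintro _ ⟨i, rfl⟩
    rw [SetLike.mem_coe, Subalgebra.mem_centralizer_iff]
    rintro g hg
    rw [Set.mem_singleton_iff] at hg
    subst hg
    exact (Subalgebra.mem_centralizer_iff _ |>.mp (hQle hb) (Pm i) ⟨i, rfl⟩).symm
  have hba := Subalgebra.mem_centralizer_iff _ |>.mp (hPle ha) b rfl
  exact hba.symm

-- steps
lemma mcz : Mc 3 = 0 := rfl

lemma tens_zero_left (x : Fin 16 → ZMod 2) : tens 0 x = 0 := by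
  funext p; simp [tens]

lemma tens_zero_right (u : Fin 8 → ZMod 2) : tens u 0 = 0 := by
  funext p; simp [tens]

lemma d1 : Nc 3 *ᵥ xa0 = xa1 := by decide
lemma d2 : Nc 3 *ᵥ xa1 = xa2 := by decide
lemma d3 : Nc 3 *ᵥ xa2 = xa3 := by decide
lemma d4a : Nc 2 *ᵥ xa3 = 0 := by decide
lemma d4b : Mc 2 *ᵥ ua0 = ua1 := by decide
lemma d5b : Mc 2 *ᵥ ua1 = ua2 := by decide
lemma d6b : Mc 2 *ᵥ ua2 = ua3 := by decide
lemma d7a : Nc 1 *ᵥ xa3 = xa4 := by decide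
lemma d7b : Mc 1 *ᵥ ua3 = 0 := by decide

lemma s1 : (Qm 3 + Pm 3) *ᵥ tens ua0 xa0 = tens ua0 xa1 := by
  rw [Matrix.add_mulVec]; simp only [Pm, Qm]
  rw [kron_mulVec, kron_mulVec, Matrix.one_mulVec, Matrix.one_mulVec, mcz,
    Matrix.zero_mulVec, d1, tens_zero_left, add_zero]

lemma s2 : (Qm 3 + Pm 3) *ᵥ tens ua0 xa1 = tens ua0 xa2 := by
  rw [Matrix.add_mulVec]; simp only [Pm, Qm]
  rw [kron_mulVec, kron_mulVec, Matrix.one_mulVec, Matrix.one_mulVec, mcz,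
    Matrix.zero_mulVec, d2, tens_zero_left, add_zero]

lemma s3 : (Qm 3 + Pm 3) *ᵥ tens ua0 xa2 = tens ua0 xa3 := by
  rw [Matrix.add_mulVec]; simp only [Pm, Qm]
  rw [kron_mulVec, kron_mulVec, Matrix.one_mulVec, Matrix.one_mulVec, mcz,
    Matrix.zero_mulVec, d3, tens_zero_left, add_zero]

lemma s4 : (Qm 2 + Pm 2) *ᵥ tens ua0 xa3 = tens ua1 xa3 := by
  rw [Matrix.add_mulVec]; simp only [Pm, Qm]
  rw [kron_mulVec, kron_mulVec, Matrix.one_mulVec, Matrix.one_mulVec, d4a, d4b,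
    tens_zero_right, zero_add]

lemma s5 : (Qm 2 + Pm 2) *ᵥ tens ua1 xa3 = tens ua2 xa3 := by
  rw [Matrix.add_mulVec]; simp only [Pm, Qm]
  rw [kron_mulVec, kron_mulVec, Matrix.one_mulVec, Matrix.one_mulVec, d4a, d5b,
    tens_zero_right, zero_add]

lemma s6 : (Qm 2 + Pm 2) *ᵥ tens ua2 xa3 = tens ua3 xa3 := by
  rw [Matrix.add_mulVec]; simp only [Pm, Qm]
  rw [kron_mulVec, kron_mulVec, Matrix.one_mulVec, Matrix.one_mulVec, d4a, d6b,
    tens_zero_right, zero_add]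

lemma s7 : (Qm 1 + Pm 1) *ᵥ tens ua3 xa3 = tens ua3 xa4 := by
  rw [Matrix.add_mulVec]; simp only [Pm, Qm]
  rw [kron_mulVec, kron_mulVec, Matrix.one_mulVec, Matrix.one_mulVec, d7a, d7b,
    tens_zero_left, add_zero]

lemma key : ((Qm 1 + Pm 1) * (Qm 2 + Pm 2) ^ 3 * (Qm 3 + Pm 3) ^ 3) *ᵥ tens ua0 xa0
    = tens ua3 xa4 := by
  simp only [pow_succ, pow_zero, one_mul, ← Matrix.mulVec_mulVec]
  rw [s1, s2, s3, s4, s5, s6, s7]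

lemma final_ne : ((Qm 1 + Pm 1) * (Qm 2 + Pm 2) ^ 3 * (Qm 3 + Pm 3) ^ 3) ≠ 0 := by
  intro h
  have h2 : tens ua3 xa4 = 0 := by rw [← key, h, Matrix.zero_mulVec]
  exact absurd (congrFun h2 (7, 15)) (by decide)

lemma liftₐ_mk_aux {A B : Type*} [CommRing A] [Algebra (ZMod 2) A] [Ring B] [Algebra (ZMod 2) B]
    (I : Ideal A) (f : A →ₐ[ZMod 2] B) (hI : ∀ a ∈ I, f a = 0) (x : A) :
    Ideal.Quotient.liftₐ I f hI (Ideal.Quotient.mk I x) = f x := rfl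

theorem stmt_17 (I : Ideal (MvPolynomial (Fin 4) (ZMod 2)))
    (hI : I = Ideal.span {X 0 ^ 2, X 1 * (X 0 + X 1), X 2 * (X 1 + X 2), X 3 * (X 1 + X 2 + X 3)}) :
    ((1 : MvPolynomial (Fin 4) (ZMod 2) ⧸ I) ⊗ₜ[ZMod 2] (Ideal.Quotient.mk I (X 1))
        + (Ideal.Quotient.mk I (X 1)) ⊗ₜ[ZMod 2] 1)
      * ((1 : MvPolynomial (Fin 4) (ZMod 2) ⧸ I) ⊗ₜ[ZMod 2] (Ideal.Quotient.mk I (X 2))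
        + (Ideal.Quotient.mk I (X 2)) ⊗ₜ[ZMod 2] 1) ^ 3
      * ((1 : MvPolynomial (Fin 4) (ZMod 2) ⧸ I) ⊗ₜ[ZMod 2] (Ideal.Quotient.mk I (X 3))
        + (Ideal.Quotient.mk I (X 3)) ⊗ₜ[ZMod 2] 1) ^ 3 ≠ 0 := by
  subst hI
  intro h
  have hcomm : ∀ (x y : MvPolynomial (Fin 4) (ZMod 2) ⧸ Ideal.span
      ({X 0 ^ 2, X 1 * (X 0 + X 1), X 2 * (X 1 + X 2), X 3 * (X 1 + X 2 + X 3)}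
        : Set (MvPolynomial (Fin 4) (ZMod 2)))),
      Commute ((Ideal.Quotient.liftₐ _ φP hgenP) x) ((Ideal.Quotient.liftₐ _ φQ hgenQ) y) := by
    intro x y
    obtain ⟨p, rfl⟩ := Ideal.Quotient.mk_surjective x
    obtain ⟨q, rfl⟩ := Ideal.Quotient.mk_surjective y
    rw [liftₐ_mk_aux, liftₐ_mk_aux]
    exact commPQ_gen _ (φP_mem p) _ (φQ_mem q)
  have hmain := congrArg
    (Algebra.TensorProduct.lift (Ideal.Quotient.liftₐ _ φP hgenP)
      (Ideal.Quotient.liftₐ _ φQ hgenQ) hcomm) h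
  rw [map_zero] at hmain
  simp only [_root_.map_mul, map_pow, _root_.map_add, Algebra.TensorProduct.lift_tmul, _root_.map_one,
    liftₐ_mk_aux, AlgHom.toRingHom_eq_coe,
    RingHom.coe_coe, φP_X, φQ_X, one_mul, mul_one] at hmain
  exact final_ne hmain
end
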